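/- arXiv:2312.02024 — 7 statements merged into one kernel-verified Lean document; each statement's English description precedes it below -/
import Mathlib

section
/- Let A, B, C, P be four points in the Euclidean plane such that A, B, C are affinely independent and each of the triples (B, P, C), (C, P, A), (A, P, B) is affinely independent. Let H_A, H_B, H_C denote the orthocenters of triangles BPC, CPA, APB respectively, and assume each of the triples (A, H_B, H_C), (B, H_C, H_A), (C, H_A, H_B) is affinely independent. Then there exists a point X lying simultaneously on the circumcircle of triangle A H_B H_C, the circumcircle of triangle B H_C H_A, and the circumcircle of triangle C H_A H_B (i.e., the distance from X to the circumcenter of each of these triangles equals the corresponding circumradius). -/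
open EuclideanGeometry
open scoped InnerProductSpace

/-- The orthocenter of the triangle with vertices `A`, `B`, `C`. -/
noncomputable def orthocenter3 (A B C : EuclideanSpace ℝ (Fin 2))
    (h : AffineIndependent ℝ ![A, B, C]) : EuclideanSpace ℝ (Fin 2) :=
  Affine.Triangle.orthocenter ⟨![A, B, C], h⟩

/-- The circumcenter of the triangle with vertices `A`, `B`, `C`. -/
noncomputable def circumcenter3 (A B C : EuclideanSpace ℝ (Fin 2))
    (h : AffineIndependent ℝ ![A, B, C]) : EuclideanSpace ℝ (Fin 2) :=
  Affine.Simplex.circumcenter ⟨![A, B, C], h⟩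

/-- The circumradius of the triangle with vertices `A`, `B`, `C`. -/
noncomputable def circumradius3 (A B C : EuclideanSpace ℝ (Fin 2))
    (h : AffineIndependent ℝ ![A, B, C]) : ℝ :=
  Affine.Simplex.circumradius ⟨![A, B, C], h⟩

open scoped Real

local instance factFinrankE2 : Fact (Module.finrank ℝ (EuclideanSpace ℝ (Fin 2)) = 2) :=
  ⟨finrank_euclideanSpace_fin⟩

noncomputable local instance orientedE2 : Module.Oriented ℝ (EuclideanSpace ℝ (Fin 2)) (Fin 2) :=
  ⟨(EuclideanSpace.basisFun (Fin 2) ℝ).toBasis.orientation⟩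

section VectorLemmas

variable {V : Type*} [NormedAddCommGroup V] [InnerProductSpace ℝ V] [Fact (Module.finrank ℝ V = 2)]
variable (o : Orientation ℝ V (Fin 2))

theorem aux_two_zsmul_oangle_eq_pi {x y : V} (hx : x ≠ 0) (hy : y ≠ 0)
    (h : ⟪x, y⟫_ℝ = 0) : (2 : ℤ) • o.oangle x y = (π : Real.Angle) := by
  rcases (o.eq_zero_or_oangle_eq_iff_inner_eq_zero).2 h with h' | h' | h' | h'
  · exact absurd h' hx
  · exact absurd h' hy
  · rw [h']
    exact_mod_cast Real.Angle.two_zsmul_coe_div_two π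
  · rw [h']
    have : ((-π / 2 : ℝ) : Real.Angle) = ((-π) / 2 : ℝ) := by norm_num
    rw [this, Real.Angle.two_zsmul_coe_div_two (-π)]
    exact Real.Angle.neg_coe_pi

theorem aux_two_zsmul_oangle_perp {x y z w : V} (hx : x ≠ 0) (hy : y ≠ 0) (hz : z ≠ 0)
    (hw : w ≠ 0) (hxz : ⟪x, z⟫_ℝ = 0) (hyw : ⟪y, w⟫_ℝ = 0) :
    (2 : ℤ) • o.oangle x y = (2 : ℤ) • o.oangle z w := by
  have h1 : o.oangle x z + o.oangle z y = o.oangle x y := o.oangle_add hx hz hy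
  have h2 : o.oangle z w + o.oangle w y = o.oangle z y := o.oangle_add hz hw hy
  have p1 : (2 : ℤ) • o.oangle x z = (π : Real.Angle) := aux_two_zsmul_oangle_eq_pi o hx hz hxz
  have p2 : (2 : ℤ) • o.oangle w y = (π : Real.Angle) :=
    aux_two_zsmul_oangle_eq_pi o hw hy (by rwa [real_inner_comm])
  have e : (2 : ℤ) • o.oangle x y
      = (π : Real.Angle) + ((2 : ℤ) • o.oangle z w + (π : Real.Angle)) := by
    calc (2 : ℤ) • o.oangle x y = (2 : ℤ) • (o.oangle x z + o.oangle z y) := by rw [h1]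
      _ = (2 : ℤ) • o.oangle x z + (2 : ℤ) • (o.oangle z w + o.oangle w y) := by
          rw [h2, smul_add]
      _ = (2 : ℤ) • o.oangle x z + ((2 : ℤ) • o.oangle z w + (2 : ℤ) • o.oangle w y) := by
          rw [smul_add]
      _ = (π : Real.Angle) + ((2 : ℤ) • o.oangle z w + (π : Real.Angle)) := by rw [p1, p2]
  rw [e]
  have e2 : (π : Real.Angle) + ((2 : ℤ) • o.oangle z w + (π : Real.Angle))
      = (2 : ℤ) • o.oangle z w + ((π : Real.Angle) + (π : Real.Angle)) := by abel
  rw [e2, Real.Angle.coe_pi_add_coe_pi, add_zero]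

end VectorLemmas

theorem aux_ne01 {p q r : EuclideanSpace ℝ (Fin 2)} (h : AffineIndependent ℝ ![p, q, r]) :
    p ≠ q := by
  have := h.injective.ne (show (0 : Fin 3) ≠ 1 by decide)
  simpa using this

theorem aux_ne02 {p q r : EuclideanSpace ℝ (Fin 2)} (h : AffineIndependent ℝ ![p, q, r]) :
    p ≠ r := by
  have := h.injective.ne (show (0 : Fin 3) ≠ 2 by decide)
  simpa using this

theorem aux_ne12 {p q r : EuclideanSpace ℝ (Fin 2)} (h : AffineIndependent ℝ ![p, q, r]) :
    q ≠ r := by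
  have := h.injective.ne (show (1 : Fin 3) ≠ 2 by decide)
  simpa using this

theorem orthocenter3_perp0 (p₀ p₁ p₂ : EuclideanSpace ℝ (Fin 2))
    (h : AffineIndependent ℝ ![p₀, p₁, p₂]) :
    ⟪p₁ -ᵥ p₂, orthocenter3 p₀ p₁ p₂ h -ᵥ p₀⟫_ℝ = 0 := by
  set t : Affine.Triangle ℝ (EuclideanSpace ℝ (Fin 2)) := ⟨![p₀, p₁, p₂], h⟩ with ht
  have hm := t.orthocenter_mem_altitude (i₁ := 0)
  rw [Affine.Simplex.altitude_def, AffineSubspace.mem_inf_iff] at hm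
  have hv : t.orthocenter -ᵥ t.points 0 ∈
      (affineSpan ℝ (t.points '' ↑(Finset.univ.erase (0 : Fin 3)))).directionᗮ := by
    have hv0 := (AffineSubspace.mem_mk').1 hm.1
    simpa [Finset.coe_erase, Set.compl_eq_univ_diff] using hv0
  have himg : t.points '' ↑(Finset.univ.erase (0 : Fin 3)) = {p₁, p₂} := by
    have hset : (↑(Finset.univ.erase (0 : Fin 3)) : Set (Fin 3)) = {1, 2} := by
      ext i; fin_cases i <;> simp
    rw [hset]
    simp [Set.image_insert_eq, ht]
  rw [himg, direction_affineSpan, vectorSpan_pair] at hv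
  have hz := (Submodule.mem_orthogonal _ _).1 hv (p₁ -ᵥ p₂) (Submodule.mem_span_singleton_self _)
  simpa [ht, orthocenter3] using hz

theorem orthocenter3_perp2 (p₀ p₁ p₂ : EuclideanSpace ℝ (Fin 2))
    (h : AffineIndependent ℝ ![p₀, p₁, p₂]) :
    ⟪p₀ -ᵥ p₁, orthocenter3 p₀ p₁ p₂ h -ᵥ p₂⟫_ℝ = 0 := by
  set t : Affine.Triangle ℝ (EuclideanSpace ℝ (Fin 2)) := ⟨![p₀, p₁, p₂], h⟩ with ht
  have hm := t.orthocenter_mem_altitude (i₁ := 2)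
  rw [Affine.Simplex.altitude_def, AffineSubspace.mem_inf_iff] at hm
  have hv : t.orthocenter -ᵥ t.points 2 ∈
      (affineSpan ℝ (t.points '' ↑(Finset.univ.erase (2 : Fin 3)))).directionᗮ := by
    have hv0 := (AffineSubspace.mem_mk').1 hm.1
    simpa [Finset.coe_erase, Set.compl_eq_univ_diff] using hv0
  have himg : t.points '' ↑(Finset.univ.erase (2 : Fin 3)) = {p₀, p₁} := by
    have hset : (↑(Finset.univ.erase (2 : Fin 3)) : Set (Fin 3)) = {0, 1} := by
      ext i; fin_cases i <;> simp
    rw [hset]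
    simp [Set.image_insert_eq, ht]
  rw [himg, direction_affineSpan, vectorSpan_pair] at hv
  have hz := (Submodule.mem_orthogonal _ _).1 hv (p₀ -ᵥ p₁) (Submodule.mem_span_singleton_self _)
  simpa [ht, orthocenter3] using hz

/-- The circumcircles of `A H_B H_C`, `B H_C H_A`, `C H_A H_B` have a common point. -/
theorem concurrent_circumcircles (A B C P HA HB HC : EuclideanSpace ℝ (Fin 2))
    (hABC : AffineIndependent ℝ ![A, B, C])
    (hBPC : AffineIndependent ℝ ![B, P, C])
    (hCPA : AffineIndependent ℝ ![C, P, A])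
    (hAPB : AffineIndependent ℝ ![A, P, B])
    (hHA : HA = orthocenter3 B P C hBPC)
    (hHB : HB = orthocenter3 C P A hCPA)
    (hHC : HC = orthocenter3 A P B hAPB)
    (h1 : AffineIndependent ℝ ![A, HB, HC])
    (h2 : AffineIndependent ℝ ![B, HC, HA])
    (h3 : AffineIndependent ℝ ![C, HA, HB]) :
    ∃ X : EuclideanSpace ℝ (Fin 2),
      dist X (circumcenter3 A HB HC h1) = circumradius3 A HB HC h1 ∧
      dist X (circumcenter3 B HC HA h2) = circumradius3 B HC HA h2 ∧
      dist X (circumcenter3 C HA HB h3) = circumradius3 C HA HB h3 := by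
  classical
  set o : Orientation ℝ (EuclideanSpace ℝ (Fin 2)) (Fin 2) :=
    Module.Oriented.positiveOrientation with ho
  -- distinctness
  have hAP : A ≠ P := aux_ne01 hAPB
  have hBP : B ≠ P := aux_ne01 hBPC
  have hCP : C ≠ P := aux_ne01 hCPA
  have hAHB : A ≠ HB := aux_ne01 h1
  have hAHC : A ≠ HC := aux_ne02 h1
  have hHBHC : HB ≠ HC := aux_ne12 h1
  have hBHC : B ≠ HC := aux_ne01 h2
  have hBHA : B ≠ HA := aux_ne02 h2
  have hHCHA : HC ≠ HA := aux_ne12 h2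
  have hCHA : C ≠ HA := aux_ne01 h3
  have hCHB : C ≠ HB := aux_ne02 h3
  have hHAHB : HA ≠ HB := aux_ne12 h3
  -- perpendicularity facts
  have pA1 := orthocenter3_perp0 B P C hBPC
  have pA2 := orthocenter3_perp2 B P C hBPC
  have pB1 := orthocenter3_perp0 C P A hCPA
  have pB2 := orthocenter3_perp2 C P A hCPA
  have pC1 := orthocenter3_perp0 A P B hAPB
  have pC2 := orthocenter3_perp2 A P B hAPB
  rw [← hHA] at pA1 pA2
  rw [← hHB] at pB1 pB2
  rw [← hHC] at pC1 pC2
  have qA1 : ⟪HA -ᵥ B, C -ᵥ P⟫_ℝ = 0 := by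
    rw [real_inner_comm] at pA1
    rw [← neg_vsub_eq_vsub_rev P C, inner_neg_right, pA1, neg_zero]
  have qA2 : ⟪HA -ᵥ C, B -ᵥ P⟫_ℝ = 0 := by rw [real_inner_comm]; exact pA2
  have qB1 : ⟪HB -ᵥ C, A -ᵥ P⟫_ℝ = 0 := by
    rw [real_inner_comm] at pB1
    rw [← neg_vsub_eq_vsub_rev P A, inner_neg_right, pB1, neg_zero]
  have qB2 : ⟪HB -ᵥ A, C -ᵥ P⟫_ℝ = 0 := by rw [real_inner_comm]; exact pB2
  have qC1 : ⟪HC -ᵥ A, B -ᵥ P⟫_ℝ = 0 := by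
    rw [real_inner_comm] at pC1
    rw [← neg_vsub_eq_vsub_rev P B, inner_neg_right, pC1, neg_zero]
  have qC2 : ⟪HC -ᵥ B, A -ᵥ P⟫_ℝ = 0 := by rw [real_inner_comm]; exact pC2
  -- nonzero vectors
  have nu : A -ᵥ P ≠ 0 := vsub_ne_zero.2 hAP
  have nv : B -ᵥ P ≠ 0 := vsub_ne_zero.2 hBP
  have nw : C -ᵥ P ≠ 0 := vsub_ne_zero.2 hCP
  have nHAB : HA -ᵥ B ≠ 0 := vsub_ne_zero.2 hBHA.symm
  have nHAC : HA -ᵥ C ≠ 0 := vsub_ne_zero.2 hCHA.symm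
  have nHBA : HB -ᵥ A ≠ 0 := vsub_ne_zero.2 hAHB.symm
  have nHBC : HB -ᵥ C ≠ 0 := vsub_ne_zero.2 hCHB.symm
  have nHCA : HC -ᵥ A ≠ 0 := vsub_ne_zero.2 hAHC.symm
  have nHCB : HC -ᵥ B ≠ 0 := vsub_ne_zero.2 hBHC.symm
  -- doubled angle values
  have angB : (2 : ℤ) • ∡ HA B HC = (2 : ℤ) • o.oangle (C -ᵥ P) (A -ᵥ P) := by
    show (2 : ℤ) • o.oangle (HA -ᵥ B) (HC -ᵥ B) = (2 : ℤ) • o.oangle (C -ᵥ P) (A -ᵥ P)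
    exact aux_two_zsmul_oangle_perp o nHAB nHCB nw nu qA1 qC2
  have angA : (2 : ℤ) • ∡ HB A HC = (2 : ℤ) • o.oangle (C -ᵥ P) (B -ᵥ P) := by
    show (2 : ℤ) • o.oangle (HB -ᵥ A) (HC -ᵥ A) = (2 : ℤ) • o.oangle (C -ᵥ P) (B -ᵥ P)
    exact aux_two_zsmul_oangle_perp o nHBA nHCA nw nv qB2 qC1
  have angA' : (2 : ℤ) • ∡ HC A HB = (2 : ℤ) • o.oangle (B -ᵥ P) (C -ᵥ P) := by
    show (2 : ℤ) • o.oangle (HC -ᵥ A) (HB -ᵥ A) = (2 : ℤ) • o.oangle (B -ᵥ P) (C -ᵥ P)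
    exact aux_two_zsmul_oangle_perp o nHCA nHBA nv nw qC1 qB2
  have angC : (2 : ℤ) • ∡ HA C HB = (2 : ℤ) • o.oangle (B -ᵥ P) (A -ᵥ P) := by
    show (2 : ℤ) • o.oangle (HA -ᵥ C) (HB -ᵥ C) = (2 : ℤ) • o.oangle (B -ᵥ P) (A -ᵥ P)
    exact aux_two_zsmul_oangle_perp o nHAC nHBC nv nu qA2 qB1
  have sumv : o.oangle (B -ᵥ P) (C -ᵥ P) + o.oangle (C -ᵥ P) (A -ᵥ P)
      = o.oangle (B -ᵥ P) (A -ᵥ P) := o.oangle_add nv nw nu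
  -- triangles
  set T1 : Affine.Triangle ℝ (EuclideanSpace ℝ (Fin 2)) := ⟨![A, HB, HC], h1⟩ with hT1
  set T2 : Affine.Triangle ℝ (EuclideanSpace ℝ (Fin 2)) := ⟨![B, HC, HA], h2⟩ with hT2
  set T3 : Affine.Triangle ℝ (EuclideanSpace ℝ (Fin 2)) := ⟨![C, HA, HB], h3⟩ with hT3
  have mA1 : A ∈ T1.circumsphere := by simpa [hT1] using T1.mem_circumsphere 0
  have mHB1 : HB ∈ T1.circumsphere := by simpa [hT1] using T1.mem_circumsphere 1
  have mHC1 : HC ∈ T1.circumsphere := by simpa [hT1] using T1.mem_circumsphere 2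
  have mB2 : B ∈ T2.circumsphere := by simpa [hT2] using T2.mem_circumsphere 0
  have mHC2 : HC ∈ T2.circumsphere := by simpa [hT2] using T2.mem_circumsphere 1
  have mHA2 : HA ∈ T2.circumsphere := by simpa [hT2] using T2.mem_circumsphere 2
  have mC3 : C ∈ T3.circumsphere := by simpa [hT3] using T3.mem_circumsphere 0
  have mHA3 : HA ∈ T3.circumsphere := by simpa [hT3] using T3.mem_circumsphere 1
  have mHB3 : HB ∈ T3.circumsphere := by simpa [hT3] using T3.mem_circumsphere 2
  have hp30 : T3.points 0 = C := by simp [hT3]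
  have hp31 : T3.points 1 = HA := by simp [hT3]
  have hp32 : T3.points 2 = HB := by simp [hT3]
  -- reduce the goal to sphere membership
  suffices hS : ∃ X, X ∈ T1.circumsphere ∧ X ∈ T2.circumsphere ∧ X ∈ T3.circumsphere by
    obtain ⟨X, m1, m2, m3⟩ := hS
    refine ⟨X, ?_, ?_, ?_⟩
    · have h' := EuclideanGeometry.mem_sphere.1 m1
      rwa [Affine.Simplex.circumsphere_center, Affine.Simplex.circumsphere_radius] at h'
    · have h' := EuclideanGeometry.mem_sphere.1 m2
      rwa [Affine.Simplex.circumsphere_center, Affine.Simplex.circumsphere_radius] at h'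
    · have h' := EuclideanGeometry.mem_sphere.1 m3
      rwa [Affine.Simplex.circumsphere_center, Affine.Simplex.circumsphere_radius] at h'
  -- easy cases
  by_cases ha1 : HA ∈ T1.circumsphere
  · exact ⟨HA, ha1, mHA2, mHA3⟩
  by_cases hb2 : HB ∈ T2.circumsphere
  · exact ⟨HB, mHB1, hb2, mHB3⟩
  -- the second intersection point of the first two circles
  set c1 : EuclideanSpace ℝ (Fin 2) := T1.circumsphere.center with hc1
  set c2 : EuclideanSpace ℝ (Fin 2) := T2.circumsphere.center with hc2
  set L : AffineSubspace ℝ (EuclideanSpace ℝ (Fin 2)) :=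
    affineSpan ℝ ({c1, c2} : Set (EuclideanSpace ℝ (Fin 2))) with hL
  haveI : Nonempty L := ⟨⟨c1, mem_affineSpan ℝ (Set.mem_insert _ _)⟩⟩
  have hmemc1 : c1 ∈ L := mem_affineSpan ℝ (Set.mem_insert _ _)
  have hmemc2 : c2 ∈ L := mem_affineSpan ℝ (Set.mem_insert_of_mem _ (Set.mem_singleton _))
  set X : EuclideanSpace ℝ (Fin 2) := reflection L HC with hX
  have hX1 : X ∈ T1.circumsphere := by
    rw [EuclideanGeometry.mem_sphere, hX, dist_comm, dist_reflection_eq_of_mem L hmemc1 HC,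
      dist_comm]
    exact EuclideanGeometry.mem_sphere.1 mHC1
  have hX2 : X ∈ T2.circumsphere := by
    rw [EuclideanGeometry.mem_sphere, hX, dist_comm, dist_reflection_eq_of_mem L hmemc2 HC,
      dist_comm]
    exact EuclideanGeometry.mem_sphere.1 mHC2
  -- centers differ from HC
  have hO1HC : c1 ≠ HC := by
    intro he
    apply hAHC
    have hr : T1.circumsphere.radius = 0 := by
      have h' := EuclideanGeometry.mem_sphere.1 mHC1
      rw [← hc1, he, dist_self] at h'
      exact h'.symm
    have hA0 := EuclideanGeometry.mem_sphere.1 mA1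
    rw [hr] at hA0
    rw [dist_eq_zero] at hA0
    rw [hA0, ← he]
  have hO2HC : c2 ≠ HC := by
    intro he
    apply hBHC
    have hr : T2.circumsphere.radius = 0 := by
      have h' := EuclideanGeometry.mem_sphere.1 mHC2
      rw [← hc2, he, dist_self] at h'
      exact h'.symm
    have hB0 := EuclideanGeometry.mem_sphere.1 mB2
    rw [hr] at hB0
    rw [dist_eq_zero] at hB0
    rw [hB0, ← he]
  by_cases hXHC : X = HC
  · -- tangency case: HC itself lies on the third circle
    have hHCL : HC ∈ L := (EuclideanGeometry.reflection_eq_self_iff HC).1 (by rw [← hX]; exact hXHC)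
    have hd : L.direction = ℝ ∙ (c1 -ᵥ c2) := by
      rw [hL, direction_affineSpan, vectorSpan_pair]
    have m1d : c1 -ᵥ HC ∈ L.direction := AffineSubspace.vsub_mem_direction hmemc1 hHCL
    have m2d : c2 -ᵥ HC ∈ L.direction := AffineSubspace.vsub_mem_direction hmemc2 hHCL
    rw [hd, Submodule.mem_span_singleton] at m1d m2d
    obtain ⟨a, ha⟩ := m1d
    obtain ⟨b, hb⟩ := m2d
    have ha0 : a ≠ 0 := by
      rintro rfl
      rw [zero_smul] at ha
      exact hO1HC (by rw [← vsub_eq_zero_iff_eq, ← ha])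
    have hb0 : b ≠ 0 := by
      rintro rfl
      rw [zero_smul] at hb
      exact hO2HC (by rw [← vsub_eq_zero_iff_eq, ← hb])
    have hrel : c2 -ᵥ HC = (b / a) • (c1 -ᵥ HC) := by
      rw [← ha, ← hb, smul_smul, div_mul_cancel₀ _ ha0]
    -- angle computations
    have cen1 : ∡ HB c1 HC = (2 : ℤ) • ∡ HB A HC :=
      Sphere.oangle_center_eq_two_zsmul_oangle mHB1 mA1 mHC1 hAHB hAHC
    have iso1 : ∡ HB c1 HC = (π : Real.Angle) - (2 : ℤ) • ∡ c1 HC HB :=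
      Sphere.oangle_eq_pi_sub_two_zsmul_oangle_center_left mHB1 mHC1 hHBHC
    have t1 : (2 : ℤ) • ∡ c1 HC HB = (π : Real.Angle) - (2 : ℤ) • ∡ HB A HC := by
      rw [← cen1, iso1]; abel
    have cen2 : ∡ HA c2 HC = (2 : ℤ) • ∡ HA B HC :=
      Sphere.oangle_center_eq_two_zsmul_oangle mHA2 mB2 mHC2 hBHA hBHC
    have iso2 : ∡ HA c2 HC = (π : Real.Angle) - (2 : ℤ) • ∡ c2 HC HA :=
      Sphere.oangle_eq_pi_sub_two_zsmul_oangle_center_left mHA2 mHC2 hHCHA.symm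
    have t2 : (2 : ℤ) • ∡ c2 HC HA = (π : Real.Angle) - (2 : ℤ) • ∡ HA B HC := by
      rw [← cen2, iso2]; abel
    have swap : (2 : ℤ) • ∡ c2 HC HB = (2 : ℤ) • ∡ c1 HC HB := by
      show (2 : ℤ) • o.oangle (c2 -ᵥ HC) (HB -ᵥ HC) = (2 : ℤ) • o.oangle (c1 -ᵥ HC) (HB -ᵥ HC)
      rw [hrel]
      exact o.two_zsmul_oangle_smul_left_of_ne_zero _ _ (div_ne_zero hb0 ha0)
    have addT : ∡ HA HC c2 + ∡ c2 HC HB = ∡ HA HC HB :=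
      EuclideanGeometry.oangle_add hHCHA.symm hO2HC hHBHC
    have revT : ∡ HA HC c2 = -∡ c2 HC HA := EuclideanGeometry.oangle_rev c2 HC HA
    have keyT : (2 : ℤ) • ∡ HA HC HB = (2 : ℤ) • ∡ HA C HB := by
      calc (2 : ℤ) • ∡ HA HC HB = (2 : ℤ) • ∡ HA HC c2 + (2 : ℤ) • ∡ c2 HC HB := by
            rw [← smul_add, addT]
        _ = -((2 : ℤ) • ∡ c2 HC HA) + (2 : ℤ) • ∡ c1 HC HB := by
            rw [revT, smul_neg, swap]
        _ = -((π : Real.Angle) - (2 : ℤ) • ∡ HA B HC)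
            + ((π : Real.Angle) - (2 : ℤ) • ∡ HB A HC) := by rw [t1, t2]
        _ = (2 : ℤ) • ∡ HA B HC - (2 : ℤ) • ∡ HB A HC := by abel
        _ = (2 : ℤ) • o.oangle (C -ᵥ P) (A -ᵥ P) - (2 : ℤ) • o.oangle (C -ᵥ P) (B -ᵥ P) := by
            rw [angB, angA]
        _ = (2 : ℤ) • o.oangle (B -ᵥ P) (A -ᵥ P) := by
            rw [← sumv]
            have hrev : o.oangle (B -ᵥ P) (C -ᵥ P) = -o.oangle (C -ᵥ P) (B -ᵥ P) :=
              o.oangle_rev (C -ᵥ P) (B -ᵥ P)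
            rw [hrev, smul_add, smul_neg]
            abel
        _ = (2 : ℤ) • ∡ HA C HB := angC.symm
    have hmem : HC ∈ T3.circumsphere := by
      refine Affine.Triangle.mem_circumsphere_of_two_zsmul_oangle_eq
        (i₁ := 1) (i₂ := 0) (i₃ := 2) (by decide) (by decide) (by decide) ?_
      rw [hp30, hp31, hp32]
      exact keyT
    exact ⟨HC, mHC1, mHC2, hmem⟩
  · -- main case
    have hXHA : X ≠ HA := fun he => ha1 (he ▸ hX1)
    have hXHB : X ≠ HB := fun he => hb2 (he ▸ hX2)
    have e1 : (2 : ℤ) • ∡ HA X HC = (2 : ℤ) • ∡ HA B HC :=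
      Sphere.two_zsmul_oangle_eq mHA2 hX2 mB2 mHC2 hXHA hXHC hBHA hBHC
    have e2 : (2 : ℤ) • ∡ HC X HB = (2 : ℤ) • ∡ HC A HB :=
      Sphere.two_zsmul_oangle_eq mHC1 hX1 mA1 mHB1 hXHC hXHB hAHC hAHB
    have addX : ∡ HA X HC + ∡ HC X HB = ∡ HA X HB :=
      EuclideanGeometry.oangle_add (Ne.symm hXHA) (Ne.symm hXHC) (Ne.symm hXHB)
    have keyM : (2 : ℤ) • ∡ HA X HB = (2 : ℤ) • ∡ HA C HB := by
      calc (2 : ℤ) • ∡ HA X HB = (2 : ℤ) • ∡ HA X HC + (2 : ℤ) • ∡ HC X HB := by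
            rw [← smul_add, addX]
        _ = (2 : ℤ) • ∡ HA B HC + (2 : ℤ) • ∡ HC A HB := by rw [e1, e2]
        _ = (2 : ℤ) • o.oangle (C -ᵥ P) (A -ᵥ P) + (2 : ℤ) • o.oangle (B -ᵥ P) (C -ᵥ P) := by
            rw [angB, angA']
        _ = (2 : ℤ) • (o.oangle (B -ᵥ P) (C -ᵥ P) + o.oangle (C -ᵥ P) (A -ᵥ P)) := by
            rw [smul_add]; abel
        _ = (2 : ℤ) • o.oangle (B -ᵥ P) (A -ᵥ P) := by rw [sumv]
        _ = (2 : ℤ) • ∡ HA C HB := angC.symm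
    have hmem : X ∈ T3.circumsphere := by
      refine Affine.Triangle.mem_circumsphere_of_two_zsmul_oangle_eq
        (i₁ := 1) (i₂ := 0) (i₃ := 2) (by decide) (by decide) (by decide) ?_
      rw [hp30, hp31, hp32]
      exact keyM
    exact ⟨X, hX1, hX2, hmem⟩
end

section
/- Let A, B, C, P be four points in the Euclidean plane such that A, B, C are affinely independent and each of the triples (B, P, C), (C, P, A), (A, P, B) is affinely independent. Let H_A, H_B, H_C denote the orthocenters of triangles BPC, CPA, APB respectively. Let G be the centroid of {A, B, C}, and let G_A, G_B, G_C be the centroids of {A, H_B, H_C}, {B, H_C, H_A}, {C, H_A, H_B} respectively. Then the vector G_A − G is orthogonal to the vector P − A, the vector G_B − G is orthogonal to the vector P − B, and the vector G_C − G is orthogonal to the vector P − C. -/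
open EuclideanGeometry
open scoped InnerProductSpace

lemma ortho_perp (t : Affine.Triangle ℝ (EuclideanSpace ℝ (Fin 2)))
    {i₁ i₂ i₃ : Fin 3} (h₂ : i₂ ≠ i₁) (h₃ : i₃ ≠ i₁) :
    ⟪t.orthocenter - t.points i₁, t.points i₂ - t.points i₃⟫_ℝ = 0 := by
  have hm : t.orthocenter -ᵥ t.points i₁ ∈ (t.altitude i₁).direction :=
    AffineSubspace.vsub_mem_direction t.orthocenter_mem_altitude (t.mem_altitude i₁)
  rw [Affine.Simplex.direction_altitude] at hm
  have h1 : t.orthocenter - t.points i₁ ∈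
      (vectorSpan ℝ (t.points '' ↑(Finset.univ.erase i₁)))ᗮ := by
    have e : ((Finset.univ.erase i₁ : Finset (Fin 3)) : Set (Fin 3)) = {i₁}ᶜ := by ext; simp
    rw [e]; exact hm.1
  have h2 : t.points i₂ - t.points i₃ ∈ vectorSpan ℝ (t.points '' ↑(Finset.univ.erase i₁)) := by
    apply vsub_mem_vectorSpan <;> exact Set.mem_image_of_mem _ (by simp [h₂, h₃])
  rw [real_inner_comm]; exact (Submodule.mem_orthogonal _ _).1 h1 _ h2

lemma ortho_perp₁ (X Y Z : EuclideanSpace ℝ (Fin 2)) (h : AffineIndependent ℝ ![X, Y, Z]) :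
    ⟪orthocenter3 X Y Z h - X, Y - Z⟫_ℝ = 0 := by
  have := ortho_perp ⟨![X, Y, Z], h⟩ (i₁ := 0) (i₂ := 1) (i₃ := 2) (by decide) (by decide)
  simpa [orthocenter3] using this

lemma ortho_perp₃ (X Y Z : EuclideanSpace ℝ (Fin 2)) (h : AffineIndependent ℝ ![X, Y, Z]) :
    ⟪orthocenter3 X Y Z h - Z, Y - X⟫_ℝ = 0 := by
  have := ortho_perp ⟨![X, Y, Z], h⟩ (i₁ := 2) (i₂ := 1) (i₃ := 0) (by decide) (by decide)
  simpa [orthocenter3] using this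

/-- `G G_A ⊥ AP`, `G G_B ⊥ BP`, `G G_C ⊥ CP`. -/
theorem centroid_lines_perp (A B C P HA HB HC G GA GB GC : EuclideanSpace ℝ (Fin 2))
    (hABC : AffineIndependent ℝ ![A, B, C])
    (hBPC : AffineIndependent ℝ ![B, P, C])
    (hCPA : AffineIndependent ℝ ![C, P, A])
    (hAPB : AffineIndependent ℝ ![A, P, B])
    (hHA : HA = orthocenter3 B P C hBPC)
    (hHB : HB = orthocenter3 C P A hCPA)
    (hHC : HC = orthocenter3 A P B hAPB)
    (hG : G = (3 : ℝ)⁻¹ • (A + B + C))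
    (hGA : GA = (3 : ℝ)⁻¹ • (A + HB + HC))
    (hGB : GB = (3 : ℝ)⁻¹ • (B + HC + HA))
    (hGC : GC = (3 : ℝ)⁻¹ • (C + HA + HB)) :
    ⟪GA - G, P - A⟫_ℝ = 0 ∧ ⟪GB - G, P - B⟫_ℝ = 0 ∧ ⟪GC - G, P - C⟫_ℝ = 0 := by
  have h1 : ⟪HB - C, P - A⟫_ℝ = 0 := hHB ▸ ortho_perp₁ C P A hCPA
  have h2 : ⟪HC - B, P - A⟫_ℝ = 0 := hHC ▸ ortho_perp₃ A P B hAPB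
  have h3 : ⟪HC - A, P - B⟫_ℝ = 0 := hHC ▸ ortho_perp₁ A P B hAPB
  have h4 : ⟪HA - C, P - B⟫_ℝ = 0 := hHA ▸ ortho_perp₃ B P C hBPC
  have h5 : ⟪HA - B, P - C⟫_ℝ = 0 := hHA ▸ ortho_perp₁ B P C hBPC
  have h6 : ⟪HB - A, P - C⟫_ℝ = 0 := hHB ▸ ortho_perp₃ C P A hCPA
  refine ⟨?_, ?_, ?_⟩
  · rw [show GA - G = (3 : ℝ)⁻¹ • ((HB - C) + (HC - B)) by rw [hGA, hG]; module]
    rw [real_inner_smul_left, inner_add_left, h1, h2]; ring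
  · rw [show GB - G = (3 : ℝ)⁻¹ • ((HC - A) + (HA - C)) by rw [hGB, hG]; module]
    rw [real_inner_smul_left, inner_add_left, h3, h4]; ring
  · rw [show GC - G = (3 : ℝ)⁻¹ • ((HA - B) + (HB - A)) by rw [hGC, hG]; module]
    rw [real_inner_smul_left, inner_add_left, h5, h6]; ring
end

section
/- Let A, B, C, P be four points in the Euclidean plane such that A, B, C are affinely independent and each of the triples (B, P, C), (C, P, A), (A, P, B) is affinely independent. Let H_A, H_B, H_C denote the orthocenters of triangles BPC, CPA, APB respectively. Let G be the centroid of {A, B, C}, and let G_A, G_B, G_C be the centroids of {A, H_B, H_C}, {B, H_C, H_A}, {C, H_A, H_B} respectively. Then the four points G, G_A, G_B, G_C are concyclic. -/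
open EuclideanGeometry
open scoped InnerProductSpace

local notation "V2" => EuclideanSpace ℝ (Fin 2)

lemma coords_eq (x y : V2) (h0 : x 0 = y 0) (h1 : x 1 = y 1) : x = y :=
  PiLp.ext fun i => by fin_cases i <;> assumption

lemma ne_coords {x y : V2} (h : x ≠ y) : x 0 ≠ y 0 ∨ x 1 ≠ y 1 := by
  by_contra hc; push_neg at hc; exact h (coords_eq x y hc.1 hc.2)

lemma dist_iff (a b c d : V2) : dist a b = dist c d ↔
    (a 0 - b 0)^2 + (a 1 - b 1)^2 = (c 0 - d 0)^2 + (c 1 - d 1)^2 := by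
  rw [EuclideanSpace.dist_eq, EuclideanSpace.dist_eq,
    Real.sqrt_inj (by positivity) (by positivity)]
  simp [Fin.sum_univ_two, Real.dist_eq, sq_abs]

lemma solve2 {d0 d1 x0 x1 y0 y1 : ℝ} (hd : d0 ≠ 0 ∨ d1 ≠ 0)
    (hx : d0*x0 + d1*x1 = 0) (hy : d0*y0 + d1*y1 = 0) : x0*y1 - x1*y0 = 0 := by
  rcases hd with h | h
  · have h' : d0*(x0*y1 - x1*y0) = 0 := by linear_combination y1*hx - x1*hy
    exact (mul_eq_zero.mp h').resolve_left h
  · have h' : d1*(x0*y1 - x1*y0) = 0 := by linear_combination x0*hy - y0*hx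
    exact (mul_eq_zero.mp h').resolve_left h

lemma prop2 {x0 x1 y0 y1 : ℝ} (h : x0*y1 - x1*y0 = 0) (hx : x0 ≠ 0 ∨ x1 ≠ 0) :
    ∃ t : ℝ, y0 = t*x0 ∧ y1 = t*x1 := by
  rcases hx with h0 | h0
  · exact ⟨y0/x0, by field_simp, by field_simp; linear_combination h⟩
  · exact ⟨y1/x1, by field_simp; linear_combination -h, by field_simp⟩

lemma keyReal (u0 u1 v0 v1 o0 o1 a0 a1 p0 p1 t : ℝ)
    (h1 : (u0-a0)^2+(u1-a1)^2 = (u0-p0)^2+(u1-p1)^2)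
    (h2 : (v0-a0)^2+(v1-a1)^2 = (v0-p0)^2+(v1-p1)^2)
    (ht0 : u0+v0-2*o0 = t*(p0-a0)) (ht1 : u1+v1-2*o1 = t*(p1-a1)) :
    (u0+v0-o0-a0)^2+(u1+v1-o1-a1)^2 = (o0-p0)^2+(o1-p1)^2 := by
  have hu0 : u0 = t*(p0-a0)+2*o0-v0 := by linarith
  have hu1 : u1 = t*(p1-a1)+2*o1-v1 := by linarith
  subst hu0 hu1
  linear_combination ((t+1)/2)*h1 + ((t+1)/2)*h2

lemma keyW (O U W A P : V2) (h1 : dist U A = dist U P) (h2 : dist W A = dist W P)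
    (h3 : dist O U = dist O W) (hAP : A ≠ P) (hor : U ≠ W ∨ (O = U ∧ O = W)) :
    dist (U + W - O) A = dist O P := by
  rcases hor with hne | ⟨hOU, hOW⟩
  · rw [dist_iff] at h1 h2 h3 ⊢
    have E1 : (U 0 - W 0)*(P 0 - A 0) + (U 1 - W 1)*(P 1 - A 1) = 0 := by
      linear_combination (1/2)*h1 - (1/2)*h2
    have E2 : (U 0 - W 0)*(U 0 + W 0 - 2*O 0) + (U 1 - W 1)*(U 1 + W 1 - 2*O 1) = 0 := by
      linear_combination h3
    have hd : U 0 - W 0 ≠ 0 ∨ U 1 - W 1 ≠ 0 := by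
      rcases ne_coords hne with h | h
      · exact Or.inl (sub_ne_zero.mpr h)
      · exact Or.inr (sub_ne_zero.mpr h)
    have hx : P 0 - A 0 ≠ 0 ∨ P 1 - A 1 ≠ 0 := by
      rcases ne_coords (Ne.symm hAP) with h | h
      · exact Or.inl (sub_ne_zero.mpr h)
      · exact Or.inr (sub_ne_zero.mpr h)
    have C1 := solve2 hd E1 E2
    obtain ⟨t, ht0, ht1⟩ := prop2 C1 hx
    have g0 : (U + W - O) 0 = U 0 + W 0 - O 0 := by simp
    have g1 : (U + W - O) 1 = U 1 + W 1 - O 1 := by simp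
    rw [g0, g1]
    have := keyReal (U 0) (U 1) (W 0) (W 1) (O 0) (O 1) (A 0) (A 1) (P 0) (P 1) t h1 h2
      (by linarith) (by linarith)
    linarith
  · have hUW : U + W - O = U := by rw [← hOW]; abel
    rw [hUW, hOU]
    exact h1

lemma cross_ne (X Y Z : V2) (h : AffineIndependent ℝ ![X, Y, Z]) :
    (X 0 - Y 0) * (Z 1 - Y 1) - (X 1 - Y 1) * (Z 0 - Y 0) ≠ 0 := by
  intro hc
  apply affineIndependent_iff_not_collinear_set.mp h
  rw [collinear_iff_exists_forall_eq_smul_vadd]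
  by_cases hXY : X = Y
  · refine ⟨Y, Z - Y, ?_⟩
    intro p hp
    rcases hp with rfl | rfl | rfl
    · exact ⟨0, by simp [hXY]⟩
    · exact ⟨0, by simp⟩
    · exact ⟨1, by simp⟩
  · refine ⟨Y, X - Y, ?_⟩
    intro p hp
    have hne : X 0 - Y 0 ≠ 0 ∨ X 1 - Y 1 ≠ 0 := by
      by_contra hcon
      push_neg at hcon
      exact hXY (coords_eq X Y (by linarith [hcon.1]) (by linarith [hcon.2]))
    rcases hp with rfl | rfl | rfl
    · exact ⟨1, by simp⟩
    · exact ⟨0, by simp⟩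
    · rcases hne with h0 | h0
      · refine ⟨(p 0 - Y 0)/(X 0 - Y 0), ?_⟩
        apply coords_eq <;> simp only [vadd_eq_add, PiLp.add_apply, PiLp.smul_apply,
          PiLp.sub_apply, smul_eq_mul]
        · field_simp; ring
        · field_simp
          linear_combination hc
      · refine ⟨(p 1 - Y 1)/(X 1 - Y 1), ?_⟩
        apply coords_eq <;> simp only [vadd_eq_add, PiLp.add_apply, PiLp.smul_apply,
          PiLp.sub_apply, smul_eq_mul]
        · field_simp
          linear_combination -hc
        · field_simp; ring

lemma eq_of_equidist (X Y B P C : V2)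
    (hX1 : dist X B = dist X P) (hX2 : dist X C = dist X P)
    (hY1 : dist Y B = dist Y P) (hY2 : dist Y C = dist Y P)
    (hcr : (B 0 - P 0) * (C 1 - P 1) - (B 1 - P 1) * (C 0 - P 0) ≠ 0) : X = Y := by
  rw [dist_iff] at hX1 hX2 hY1 hY2
  have D1 : (X 0 - Y 0)*(B 0 - P 0) + (X 1 - Y 1)*(B 1 - P 1) = 0 := by
    linear_combination (-1/2)*hX1 + (1/2)*hY1
  have D2 : (X 0 - Y 0)*(C 0 - P 0) + (X 1 - Y 1)*(C 1 - P 1) = 0 := by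
    linear_combination (-1/2)*hX2 + (1/2)*hY2
  have e0 : (X 0 - Y 0) * ((B 0 - P 0) * (C 1 - P 1) - (B 1 - P 1) * (C 0 - P 0)) = 0 := by
    linear_combination (C 1 - P 1)*D1 - (B 1 - P 1)*D2
  have e1 : (X 1 - Y 1) * ((B 0 - P 0) * (C 1 - P 1) - (B 1 - P 1) * (C 0 - P 0)) = 0 := by
    linear_combination (B 0 - P 0)*D2 - (C 0 - P 0)*D1
  have h0 := (mul_eq_zero.mp e0).resolve_right hcr
  have h1 := (mul_eq_zero.mp e1).resolve_right hcr
  exact coords_eq X Y (by linarith) (by linarith)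

lemma cramer (e10 e11 e20 e21 r1 r2 : ℝ) (hD : e10*e21 - e11*e20 ≠ 0) :
    ∃ o0 o1 : ℝ, o0*e10 + o1*e11 = r1 ∧ o0*e20 + o1*e21 = r2 := by
  refine ⟨(r1*e21 - r2*e11)/(e10*e21 - e11*e20), (e10*r2 - e20*r1)/(e10*e21 - e11*e20), ?_, ?_⟩ <;>
    rw [div_mul_eq_mul_div, div_mul_eq_mul_div, ← add_div, div_eq_iff hD] <;> ring

lemma exists_center (X Y Z : V2)
    (hcr : (Y 0 - X 0) * (Z 1 - X 1) - (Y 1 - X 1) * (Z 0 - X 0) ≠ 0) :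
    ∃ O : V2, dist O X = dist O Y ∧ dist O X = dist O Z := by
  obtain ⟨o0, o1, h1, h2⟩ := cramer (Y 0 - X 0) (Y 1 - X 1) (Z 0 - X 0) (Z 1 - X 1)
    (((Y 0)^2 + (Y 1)^2 - (X 0)^2 - (X 1)^2)/2) (((Z 0)^2 + (Z 1)^2 - (X 0)^2 - (X 1)^2)/2) hcr
  refine ⟨!₂[o0, o1], ?_, ?_⟩ <;> rw [dist_iff] <;>
    simp only [PiLp.toLp_apply, Matrix.cons_val_zero, Matrix.cons_val_one, Matrix.head_cons]
  · linear_combination 2*h1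
  · linear_combination 2*h2

lemma centroid3 (X Y Z : V2) :
    (Finset.univ : Finset (Fin 3)).centroid ℝ ![X, Y, Z] = (3:ℝ)⁻¹ • (X + Y + Z) := by
  rw [Finset.centroid_def, Finset.affineCombination_eq_linear_combination _ _ _
    (by simp [Finset.centroidWeights])]
  simp [Fin.sum_univ_three, Finset.centroidWeights]

lemma circum_dists (X Y Z : V2) (h : AffineIndependent ℝ ![X, Y, Z]) :
    dist (Affine.Simplex.circumcenter ⟨![X, Y, Z], h⟩) X
      = dist (Affine.Simplex.circumcenter ⟨![X, Y, Z], h⟩) Y ∧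
    dist (Affine.Simplex.circumcenter ⟨![X, Y, Z], h⟩) X
      = dist (Affine.Simplex.circumcenter ⟨![X, Y, Z], h⟩) Z := by
  have h0 := Affine.Simplex.dist_circumcenter_eq_circumradius (⟨![X, Y, Z], h⟩ :
    Affine.Triangle ℝ V2) 0
  have h1 := Affine.Simplex.dist_circumcenter_eq_circumradius (⟨![X, Y, Z], h⟩ :
    Affine.Triangle ℝ V2) 1
  have h2 := Affine.Simplex.dist_circumcenter_eq_circumradius (⟨![X, Y, Z], h⟩ :
    Affine.Triangle ℝ V2) 2
  simp only [Affine.Simplex.points, Matrix.cons_val_zero, Matrix.cons_val_one,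
    Matrix.head_cons, Matrix.cons_val_two, Matrix.tail_cons] at h0 h1 h2
  constructor <;> rw [dist_comm _ X]
  · rw [dist_comm _ Y, h0, h1]
  · rw [dist_comm _ Z, h0, h2]

/-- Final assembly: given the three circumcenters and a common center `O`. -/
lemma final (A B C P OA OB OC O G GA GB GC : V2)
    (dA1 : dist OA B = dist OA P) (dA2 : dist OA C = dist OA P)
    (dB1 : dist OB C = dist OB P) (dB2 : dist OB A = dist OB P)
    (dC1 : dist OC A = dist OC P) (dC2 : dist OC B = dist OC P)
    (k1 : dist O OB = dist O OC) (k2 : dist O OC = dist O OA) (k3 : dist O OA = dist O OB)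
    (or1 : OB ≠ OC ∨ (O = OB ∧ O = OC)) (or2 : OC ≠ OA ∨ (O = OC ∧ O = OA))
    (or3 : OA ≠ OB ∨ (O = OA ∧ O = OB))
    (hap : A ≠ P) (hbp : B ≠ P) (hcp : C ≠ P)
    (hG : G = (3 : ℝ)⁻¹ • (A + B + C))
    (hGA : GA = (3 : ℝ)⁻¹ • (A + (C + P + A - 2 • OB) + (A + P + B - 2 • OC)))
    (hGB : GB = (3 : ℝ)⁻¹ • (B + (A + P + B - 2 • OC) + (B + P + C - 2 • OA)))
    (hGC : GC = (3 : ℝ)⁻¹ • (C + (B + P + C - 2 • OA) + (C + P + A - 2 • OB))) :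
    EuclideanGeometry.Concyclic ({G, GA, GB, GC} : Set V2) := by
  have g1 : dist (OB + OC - O) A = dist O P := keyW O OB OC A P dB2 dC1 k1 hap or1
  have g2 : dist (OC + OA - O) B = dist O P := keyW O OC OA B P dC2 dA1 k2 hbp or2
  have g3 : dist (OA + OB - O) C = dist O P := keyW O OA OB C P dA2 dB1 k3 hcp or3
  constructor
  · refine ⟨G + ((2:ℝ)/3) • (P - O), (2/3) * dist O P, ?_⟩
    intro p hp
    have habs : ‖((2:ℝ)/3)‖ = 2/3 := by rw [Real.norm_eq_abs]; norm_num
    rcases hp with rfl | rfl | rfl | rfl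
    · have hv : p - (p + ((2:ℝ)/3) • (P - O)) = ((2:ℝ)/3) • (O - P) := by module
      rw [dist_eq_norm, hv, norm_smul, habs, ← dist_eq_norm]
    · have hv : p - (G + ((2:ℝ)/3) • (P - O)) = ((2:ℝ)/3) • (A - (OB + OC - O)) := by
        rw [hGA, hG]; module
      rw [dist_eq_norm, hv, norm_smul, habs, ← dist_eq_norm, dist_comm A _, g1]
    · have hv : p - (G + ((2:ℝ)/3) • (P - O)) = ((2:ℝ)/3) • (B - (OC + OA - O)) := by
        rw [hGB, hG]; module
      rw [dist_eq_norm, hv, norm_smul, habs, ← dist_eq_norm, dist_comm B _, g2]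
    · have hv : p - (G + ((2:ℝ)/3) • (P - O)) = ((2:ℝ)/3) • (C - (OA + OB - O)) := by
        rw [hGC, hG]; module
      rw [dist_eq_norm, hv, norm_smul, habs, ← dist_eq_norm, dist_comm C _, g3]
  · exact coplanar_of_finrank_eq_two _ finrank_euclideanSpace_fin

lemma ortho_formula (X Y Z : V2) (h : AffineIndependent ℝ ![X, Y, Z]) :
    orthocenter3 X Y Z h =
      X + Y + Z - 2 • (Affine.Simplex.circumcenter ⟨![X, Y, Z], h⟩) := by
  unfold orthocenter3
  rw [Affine.Triangle.orthocenter_eq_smul_vsub_vadd_circumcenter]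
  have hc : (Finset.univ : Finset (Fin 3)).centroid ℝ
      (Affine.Simplex.points ⟨![X, Y, Z], h⟩) = (3:ℝ)⁻¹ • (X + Y + Z) := centroid3 X Y Z
  rw [hc]
  set O := Affine.Simplex.circumcenter (⟨![X, Y, Z], h⟩ : Affine.Triangle ℝ V2)
  rw [vsub_eq_sub, vadd_eq_add]
  module

/-- The centroids `G`, `G_A`, `G_B`, `G_C` are concyclic. -/
theorem concyclic_centroids (A B C P HA HB HC G GA GB GC : EuclideanSpace ℝ (Fin 2))
    (hABC : AffineIndependent ℝ ![A, B, C])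
    (hBPC : AffineIndependent ℝ ![B, P, C])
    (hCPA : AffineIndependent ℝ ![C, P, A])
    (hAPB : AffineIndependent ℝ ![A, P, B])
    (hHA : HA = orthocenter3 B P C hBPC)
    (hHB : HB = orthocenter3 C P A hCPA)
    (hHC : HC = orthocenter3 A P B hAPB)
    (hG : G = (3 : ℝ)⁻¹ • (A + B + C))
    (hGA : GA = (3 : ℝ)⁻¹ • (A + HB + HC))
    (hGB : GB = (3 : ℝ)⁻¹ • (B + HC + HA))
    (hGC : GC = (3 : ℝ)⁻¹ • (C + HA + HB)) :
    EuclideanGeometry.Concyclic ({G, GA, GB, GC} : Set (EuclideanSpace ℝ (Fin 2))) := by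
  obtain ⟨a1, a2⟩ := circum_dists B P C hBPC
  obtain ⟨b1, b2⟩ := circum_dists C P A hCPA
  obtain ⟨c1, c2⟩ := circum_dists A P B hAPB
  set OA := Affine.Simplex.circumcenter
    (⟨![B, P, C], hBPC⟩ : Affine.Triangle ℝ (EuclideanSpace ℝ (Fin 2))) with hOAdef
  set OB := Affine.Simplex.circumcenter
    (⟨![C, P, A], hCPA⟩ : Affine.Triangle ℝ (EuclideanSpace ℝ (Fin 2))) with hOBdef
  set OC := Affine.Simplex.circumcenter
    (⟨![A, P, B], hAPB⟩ : Affine.Triangle ℝ (EuclideanSpace ℝ (Fin 2))) with hOCdef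
  -- a1 : dist OA B = dist OA P, a2 : dist OA B = dist OA C
  have dA1 : dist OA B = dist OA P := a1
  have dA2 : dist OA C = dist OA P := a2.symm.trans a1
  have dB1 : dist OB C = dist OB P := b1
  have dB2 : dist OB A = dist OB P := b2.symm.trans b1
  have dC1 : dist OC A = dist OC P := c1
  have dC2 : dist OC B = dist OC P := c2.symm.trans c1
  have hHA2 : HA = B + P + C - 2 • OA := by rw [hHA, ortho_formula]
  have hHB2 : HB = C + P + A - 2 • OB := by rw [hHB, ortho_formula]
  have hHC2 : HC = A + P + B - 2 • OC := by rw [hHC, ortho_formula]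
  have hGA' : GA = (3 : ℝ)⁻¹ • (A + (C + P + A - 2 • OB) + (A + P + B - 2 • OC)) := by
    rw [hGA, hHB2, hHC2]
  have hGB' : GB = (3 : ℝ)⁻¹ • (B + (A + P + B - 2 • OC) + (B + P + C - 2 • OA)) := by
    rw [hGB, hHC2, hHA2]
  have hGC' : GC = (3 : ℝ)⁻¹ • (C + (B + P + C - 2 • OA) + (C + P + A - 2 • OB)) := by
    rw [hGC, hHA2, hHB2]
  have hap : A ≠ P := by
    have := hAPB.injective.ne (show (0 : Fin 3) ≠ 1 by decide); simpa using this
  have hbp : B ≠ P := by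
    have := hAPB.injective.ne (show (2 : Fin 3) ≠ 1 by decide); simpa using this
  have hcp : C ≠ P := by
    have := hBPC.injective.ne (show (2 : Fin 3) ≠ 1 by decide); simpa using this
  by_cases hbc : OB = OC
  · -- all three circumcenters coincide
    have hOBB : dist OB B = dist OB P := by rw [hbc]; exact dC2
    have hOAOB : OA = OB := eq_of_equidist OA OB B P C dA1 dA2 hOBB dB1 (cross_ne B P C hBPC)
    exact final A B C P OA OB OC OB G GA GB GC dA1 dA2 dB1 dB2 dC1 dC2
      (by rw [hbc]) (by rw [hOAOB, ← hbc]) (by rw [hOAOB])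
      (Or.inr ⟨rfl, hbc⟩) (Or.inr ⟨hbc, hOAOB.symm⟩) (Or.inr ⟨hOAOB.symm, rfl⟩)
      hap hbp hcp hG hGA' hGB' hGC'
  · have hca : OC ≠ OA := by
      intro h
      exact hbc (eq_of_equidist OB OC C P A dB1 dB2 (by rw [h]; exact dA2) dC1
        (cross_ne C P A hCPA))
    have hab : OA ≠ OB := by
      intro h
      exact hca (eq_of_equidist OC OA A P B dC1 dC2 (by rw [h]; exact dB2)
        (by exact dA1) (cross_ne A P B hAPB))
    have hOcr : (OB 0 - OA 0) * (OC 1 - OA 1) - (OB 1 - OA 1) * (OC 0 - OA 0) ≠ 0 := by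
      intro hc
      have hxne : OB 0 - OA 0 ≠ 0 ∨ OB 1 - OA 1 ≠ 0 := by
        rcases ne_coords (Ne.symm hab) with h | h
        · exact Or.inl (sub_ne_zero.mpr h)
        · exact Or.inr (sub_ne_zero.mpr h)
      obtain ⟨t, ht0, ht1⟩ := prop2 hc hxne
      by_cases ht : t = 1
      · subst ht
        exact hbc (coords_eq OB OC (by linarith) (by linarith))
      · have hA2' := dA2; have hb1' := dB1; have hc1' := dC1; have hb2' := dB2
        rw [dist_iff] at hA2' hb1' hc1' hb2'
        have EC : (OB 0 - OA 0)*(C 0 - P 0) + (OB 1 - OA 1)*(C 1 - P 1) = 0 := by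
          linear_combination (-1/2)*hb1' + (1/2)*hA2'
        have EA : (OC 0 - OB 0)*(A 0 - P 0) + (OC 1 - OB 1)*(A 1 - P 1) = 0 := by
          linear_combination (-1/2)*hc1' + (1/2)*hb2'
        have EA2 : (t - 1)*((OB 0 - OA 0)*(A 0 - P 0) + (OB 1 - OA 1)*(A 1 - P 1)) = 0 := by
          linear_combination EA - (A 0 - P 0)*ht0 - (A 1 - P 1)*ht1
        have EA3 : (OB 0 - OA 0)*(A 0 - P 0) + (OB 1 - OA 1)*(A 1 - P 1) = 0 :=
          (mul_eq_zero.mp EA2).resolve_left (sub_ne_zero.mpr ht)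
        exact cross_ne C P A hCPA (solve2 hxne EC EA3)
    obtain ⟨O, k3', k2'⟩ := exists_center OA OB OC hOcr
    exact final A B C P OA OB OC O G GA GB GC dA1 dA2 dB1 dB2 dC1 dC2
      (k3'.symm.trans k2') k2'.symm k3'
      (Or.inl hbc) (Or.inl hca) (Or.inl hab)
      hap hbp hcp hG hGA' hGB' hGC'
end

section
/- Let A, B, C be an affinely independent triple in the Euclidean plane with side lengths a = dist B C, b = dist C A, c = dist A B, semiperimeter s = (a+b+c)/2, and incenter I = (a·A + b·B + c·C)/(2s). Let N_a = ((s−a)·A + (s−b)·B + (s−c)·C)/s be the Nagel point. Let H_A, H_B, H_C be the orthocenters of triangles BIC, CIA, AIB, and assume each of the triples (A, H_B, H_C), (B, H_C, H_A), (C, H_A, H_B) is affinely independent. Then N_a is the orthocenter of triangle A H_B H_C, of triangle B H_C H_A, and of triangle C H_A H_B. -/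
open EuclideanGeometry
open scoped InnerProductSpace

private lemma inner_comb3 (u v : EuclideanSpace ℝ (Fin 2)) (p1 q1 p2 q2 : ℝ) :
    ⟪p1 • u + q1 • v, p2 • u + q2 • v⟫_ℝ =
      p1 * p2 * ⟪u, u⟫_ℝ + (p1 * q2 + p2 * q1) * ⟪u, v⟫_ℝ + q1 * q2 * ⟪v, v⟫_ℝ := by
  simp only [inner_add_left, inner_add_right, real_inner_smul_left, real_inner_smul_right,
    real_inner_comm v u]
  ring

private lemma inner_zero_scaled {x y u' v' : EuclideanSpace ℝ (Fin 2)} {k m : ℝ}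
    (hk : k ≠ 0) (hm : m ≠ 0) (hx : k • x = u') (hy : m • y = v')
    (h : ⟪u', v'⟫_ℝ = 0) : ⟪x, y⟫_ℝ = 0 := by
  rw [← hx, ← hy, real_inner_smul_left, real_inner_smul_right, mul_eq_zero, mul_eq_zero] at h
  tauto

private lemma eq_orthocenter3 {X Y Z P : EuclideanSpace ℝ (Fin 2)}
    (h : AffineIndependent ℝ ![X, Y, Z])
    (h1 : ⟪Y - Z, P - X⟫_ℝ = 0) (h2 : ⟪Z - X, P - Y⟫_ℝ = 0) :
    P = orthocenter3 X Y Z h := by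
  let t : Affine.Triangle ℝ (EuclideanSpace ℝ (Fin 2)) := ⟨![X, Y, Z], h⟩
  have hspan : affineSpan ℝ (Set.range t.points) = ⊤ := by
    refine h.affineSpan_eq_top_iff_card_eq_finrank_add_one.2 ?_
    simp [finrank_euclideanSpace_fin]
  have mem : ∀ (i : Fin 3) (W Q R : EuclideanSpace ℝ (Fin 2)),
      t.points '' ↑(Finset.univ.erase i) = {Q, R} → t.points i = W →
      ⟪Q - R, P - W⟫_ℝ = 0 → P ∈ t.altitude i := by
    intro i W Q R himg hw hinner
    rw [Affine.Simplex.altitude_def]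
    refine (AffineSubspace.mem_inf_iff _ _ _).2 ⟨?_, by rw [hspan]; exact AffineSubspace.mem_top _ _ _⟩
    rw [AffineSubspace.mem_mk',
      show ({i}ᶜ : Set (Fin 3)) = ↑(Finset.univ.erase i) by ext; simp, himg, hw, direction_affineSpan, vectorSpan_pair,
      Submodule.mem_orthogonal_singleton_iff_inner_right]
    simpa using hinner
  have m0 : P ∈ t.altitude 0 := by
    refine mem 0 X Y Z ?_ rfl h1
    have he : (Finset.univ.erase (0 : Fin 3)) = {1, 2} := by decide
    rw [he]
    simp [t, Set.image_insert_eq]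
  have m1 : P ∈ t.altitude 1 := by
    refine mem 1 Y Z X ?_ rfl h2
    have he : (Finset.univ.erase (1 : Fin 3)) = {2, 0} := by decide
    rw [he]
    simp [t, Set.image_insert_eq]
  exact Affine.Triangle.eq_orthocenter_of_forall_mem_altitude
    (t := t) (i₁ := 0) (i₂ := 1) (by decide) m0 m1

private lemma strict_tri {X Y Z : EuclideanSpace ℝ (Fin 2)}
    (h : ¬ Collinear ℝ ({X, Y, Z} : Set (EuclideanSpace ℝ (Fin 2)))) :
    dist X Z < dist X Y + dist Y Z := by
  rcases lt_or_eq_of_le (dist_triangle X Y Z) with h' | h'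
  · exact h'
  · exact absurd (dist_add_dist_eq_iff.1 h'.symm).collinear h

set_option maxHeartbeats 1000000 in
/-- The Nagel point is the common orthocenter of `A H_B H_C`, `B H_C H_A`, `C H_A H_B`. -/
theorem nagel_common_orthocenter (A B C I Na HA HB HC : EuclideanSpace ℝ (Fin 2))
    (hABC : AffineIndependent ℝ ![A, B, C])
    (a b c s : ℝ)
    (ha : a = dist B C) (hb : b = dist C A) (hc : c = dist A B)
    (hs : s = (a + b + c) / 2)
    (hI : I = (2 * s)⁻¹ • (a • A + b • B + c • C))
    (hNa : Na = s⁻¹ • ((s - a) • A + (s - b) • B + (s - c) • C))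
    (hBIC : AffineIndependent ℝ ![B, I, C])
    (hCIA : AffineIndependent ℝ ![C, I, A])
    (hAIB : AffineIndependent ℝ ![A, I, B])
    (hHA : HA = orthocenter3 B I C hBIC)
    (hHB : HB = orthocenter3 C I A hCIA)
    (hHC : HC = orthocenter3 A I B hAIB)
    (h1 : AffineIndependent ℝ ![A, HB, HC])
    (h2 : AffineIndependent ℝ ![B, HC, HA])
    (h3 : AffineIndependent ℝ ![C, HA, HB]) :
    Na = orthocenter3 A HB HC h1 ∧ Na = orthocenter3 B HC HA h2 ∧
      Na = orthocenter3 C HA HB h3 := by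
  subst hs
  have hncol : ¬ Collinear ℝ ({A, B, C} : Set (EuclideanSpace ℝ (Fin 2))) :=
    affineIndependent_iff_not_collinear_set.1 hABC
  have hlt1 : a < c + b := by
    have h' : ¬ Collinear ℝ ({B, A, C} : Set (EuclideanSpace ℝ (Fin 2))) := by
      rwa [Set.insert_comm]
    have := strict_tri h'
    rw [← ha, dist_comm B A, ← hc, dist_comm A C, ← hb] at this
    linarith
  have hlt2 : b < a + c := by
    have h' : ¬ Collinear ℝ ({C, B, A} : Set (EuclideanSpace ℝ (Fin 2))) := by
      rwa [Set.insert_comm, Set.pair_comm, Set.insert_comm]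
    have := strict_tri h'
    rw [← hb, dist_comm C B, ← ha, dist_comm B A, ← hc] at this
    linarith
  have hlt3 : c < b + a := by
    have h' : ¬ Collinear ℝ ({A, C, B} : Set (EuclideanSpace ℝ (Fin 2))) := by
      rwa [Set.pair_comm]
    have := strict_tri h'
    rw [← hc, dist_comm A C, ← hb, dist_comm C B, ← ha] at this
    linarith
  have hap : 0 < a := by nlinarith [dist_nonneg.trans_eq hb.symm, dist_nonneg.trans_eq hc.symm]
  have hbp : 0 < b := by nlinarith [dist_nonneg.trans_eq ha.symm, dist_nonneg.trans_eq hc.symm]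
  have hcp : 0 < c := by nlinarith [dist_nonneg.trans_eq ha.symm, dist_nonneg.trans_eq hb.symm]
  have hp : a + b + c ≠ 0 := by positivity
  have hdA : b + c - a ≠ 0 := by intro h; linarith
  have hdB : a + c - b ≠ 0 := by intro h; linarith
  have hdC : a + b - c ≠ 0 := by intro h; linarith
  have hI' : I = (a + b + c)⁻¹ • (a • A + b • B + c • C) := by
    rw [hI]; congr 1; norm_num
  have hNa' : Na = (a + b + c)⁻¹ • ((b + c - a) • A + (a + c - b) • B + (a + b - c) • C) := by
    rw [hNa]; match_scalars <;> field_simp <;> ring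
  have huu : ⟪B - A, B - A⟫_ℝ = c ^ 2 := by
    rw [real_inner_self_eq_norm_sq, hc, dist_eq_norm, norm_sub_rev]
  have hvv : ⟪C - A, C - A⟫_ℝ = b ^ 2 := by
    rw [real_inner_self_eq_norm_sq, hb, dist_eq_norm]
  have huv : ⟪B - A, C - A⟫_ℝ = (b ^ 2 + c ^ 2 - a ^ 2) / 2 := by
    have h1 : a ^ 2 = ‖(B - A) - (C - A)‖ ^ 2 := by
      rw [ha, dist_eq_norm]; congr 1; abel
    rw [@norm_sub_sq_real] at h1
    rw [← real_inner_self_eq_norm_sq] at h1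
    rw [← real_inner_self_eq_norm_sq] at h1
    rw [huu, hvv] at h1
    linarith
  have hFA : HA = (b + c - a)⁻¹ • (a • A + (c - a) • B + (b - a) • C) := by
    rw [hHA]
    refine (eq_orthocenter3 hBIC ?_ ?_).symm
    · refine inner_zero_scaled (k := a + b + c) (m := b + c - a) hp hdA
        (u' := b • (B - A) + (-(a + b)) • (C - A))
        (v' := (-b) • (B - A) + (b - a) • (C - A)) ?_ ?_ ?_
      · rw [hI']; match_scalars <;> field_simp <;> ring
      · match_scalars <;> field_simp <;> ring
      · rw [inner_comb3, huu, hvv, huv]; ring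
    · refine inner_zero_scaled (k := (1 : ℝ)) (m := (b + c - a) * (a + b + c))
        one_ne_zero (mul_ne_zero hdA hp)
        (u' := (-1 : ℝ) • (B - A) + (1 : ℝ) • (C - A))
        (v' := (c ^ 2 - a ^ 2 - b ^ 2) • (B - A) + (b ^ 2 - a ^ 2 - c ^ 2) • (C - A)) ?_ ?_ ?_
      · match_scalars <;> ring
      · rw [hI']; match_scalars <;> field_simp <;> ring
      · rw [inner_comb3, huu, hvv, huv]; ring
  have hFB : HB = (a + c - b)⁻¹ • ((c - b) • A + b • B + (a - b) • C) := by
    rw [hHB]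
    refine (eq_orthocenter3 hCIA ?_ ?_).symm
    · refine inner_zero_scaled (k := a + b + c) (m := a + c - b) hp hdB
        (u' := b • (B - A) + c • (C - A))
        (v' := b • (B - A) + (-c) • (C - A)) ?_ ?_ ?_
      · rw [hI']; match_scalars <;> field_simp <;> ring
      · match_scalars <;> field_simp <;> ring
      · rw [inner_comb3, huu, hvv, huv]; ring
    · refine inner_zero_scaled (k := (1 : ℝ)) (m := (a + c - b) * (a + b + c))
        one_ne_zero (mul_ne_zero hdB hp)
        (u' := (0 : ℝ) • (B - A) + (-1 : ℝ) • (C - A))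
        (v' := (2 * b ^ 2) • (B - A) + (a ^ 2 - b ^ 2 - c ^ 2) • (C - A)) ?_ ?_ ?_
      · match_scalars <;> ring
      · rw [hI']; match_scalars <;> field_simp <;> ring
      · rw [inner_comb3, huu, hvv, huv]; ring
  have hFC : HC = (a + b - c)⁻¹ • ((b - c) • A + (a - c) • B + c • C) := by
    rw [hHC]
    refine (eq_orthocenter3 hAIB ?_ ?_).symm
    · refine inner_zero_scaled (k := a + b + c) (m := a + b - c) hp hdC
        (u' := (-(a + c)) • (B - A) + c • (C - A))
        (v' := (a - c) • (B - A) + c • (C - A)) ?_ ?_ ?_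
      · rw [hI']; match_scalars <;> field_simp <;> ring
      · match_scalars <;> field_simp <;> ring
      · rw [inner_comb3, huu, hvv, huv]; ring
    · refine inner_zero_scaled (k := (1 : ℝ)) (m := (a + b - c) * (a + b + c))
        one_ne_zero (mul_ne_zero hdC hp)
        (u' := (1 : ℝ) • (B - A) + (0 : ℝ) • (C - A))
        (v' := (a ^ 2 - b ^ 2 - c ^ 2) • (B - A) + (2 * c ^ 2) • (C - A)) ?_ ?_ ?_
      · match_scalars <;> ring
      · rw [hI']; match_scalars <;> field_simp <;> ring
      · rw [inner_comb3, huu, hvv, huv]; ring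
  refine ⟨?_, ?_, ?_⟩
  · refine eq_orthocenter3 h1 ?_ ?_
    · refine inner_zero_scaled (k := (a + c - b) * (a + b - c)) (m := a + b + c)
        (mul_ne_zero hdB hdC) hp
        (u' := (b * (a + b - c) - (a - c) * (a + c - b)) • (B - A) +
          ((a - b) * (a + b - c) - c * (a + c - b)) • (C - A))
        (v' := (a + c - b) • (B - A) + (a + b - c) • (C - A)) ?_ ?_ ?_
      · rw [hFB, hFC]; match_scalars <;> field_simp <;> ring
      · rw [hNa']; match_scalars <;> field_simp <;> ring
      · rw [inner_comb3, huu, hvv, huv]; ring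
    · refine inner_zero_scaled (k := a + b - c) (m := (a + b + c) * (a + c - b))
        hdC (mul_ne_zero hp hdB)
        (u' := (a - c) • (B - A) + c • (C - A))
        (v' := ((a + c - b) ^ 2 - (a + b + c) * b) • (B - A) +
          ((a + b - c) * (a + c - b) - (a + b + c) * (a - b)) • (C - A)) ?_ ?_ ?_
      · rw [hFC]; match_scalars <;> field_simp <;> ring
      · rw [hNa', hFB]; match_scalars <;> field_simp <;> ring
      · rw [inner_comb3, huu, hvv, huv]; ring
  · refine eq_orthocenter3 h2 ?_ ?_
    · refine inner_zero_scaled (k := (a + b - c) * (b + c - a)) (m := a + b + c)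
        (mul_ne_zero hdC hdA) hp
        (u' := ((a - c) * (b + c - a) - (c - a) * (a + b - c)) • (B - A) +
          (c * (b + c - a) - (b - a) * (a + b - c)) • (C - A))
        (v' := ((a + c - b) - (a + b + c)) • (B - A) + (a + b - c) • (C - A)) ?_ ?_ ?_
      · rw [hFC, hFA]; match_scalars <;> field_simp <;> ring
      · rw [hNa']; match_scalars <;> field_simp <;> ring
      · rw [inner_comb3, huu, hvv, huv]; ring
    · refine inner_zero_scaled (k := b + c - a) (m := (a + b + c) * (a + b - c))
        hdA (mul_ne_zero hp hdC)
        (u' := ((c - a) - (b + c - a)) • (B - A) + (b - a) • (C - A))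
        (v' := ((a + c - b) * (a + b - c) - (a + b + c) * (a - c)) • (B - A) +
          ((a + b - c) ^ 2 - (a + b + c) * c) • (C - A)) ?_ ?_ ?_
      · rw [hFA]; match_scalars <;> field_simp <;> ring
      · rw [hNa', hFC]; match_scalars <;> field_simp <;> ring
      · rw [inner_comb3, huu, hvv, huv]; ring
  · refine eq_orthocenter3 h3 ?_ ?_
    · refine inner_zero_scaled (k := (b + c - a) * (a + c - b)) (m := a + b + c)
        (mul_ne_zero hdA hdB) hp
        (u' := ((c - a) * (a + c - b) - b * (b + c - a)) • (B - A) +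
          ((b - a) * (a + c - b) - (a - b) * (b + c - a)) • (C - A))
        (v' := (a + c - b) • (B - A) + ((a + b - c) - (a + b + c)) • (C - A)) ?_ ?_ ?_
      · rw [hFA, hFB]; match_scalars <;> field_simp <;> ring
      · rw [hNa']; match_scalars <;> field_simp <;> ring
      · rw [inner_comb3, huu, hvv, huv]; ring
    · refine inner_zero_scaled (k := a + c - b) (m := (a + b + c) * (b + c - a))
        hdB (mul_ne_zero hp hdA)
        (u' := b • (B - A) + ((a - b) - (a + c - b)) • (C - A))
        (v' := ((a + c - b) * (b + c - a) - (a + b + c) * (c - a)) • (B - A) +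
          ((a + b - c) * (b + c - a) - (a + b + c) * (b - a)) • (C - A)) ?_ ?_ ?_
      · rw [hFB]; match_scalars <;> field_simp <;> ring
      · rw [hNa', hFA]; match_scalars <;> field_simp <;> ring
      · rw [inner_comb3, huu, hvv, huv]; ring
end

section
/- Let A, B, C be an affinely independent triple in the Euclidean plane with side lengths a = dist B C, b = dist C A, c = dist A B, semiperimeter s = (a+b+c)/2, and incenter I = (a·A + b·B + c·C)/(2s). Let N_a = ((s−a)·A + (s−b)·B + (s−c)·C)/s be the Nagel point. Let H_B and H_C be the orthocenters of triangles CIA and AIB respectively. Then the vector N_a − A is orthogonal to the vector H_C − H_B. -/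
open EuclideanGeometry
open scoped InnerProductSpace

lemma orth_perp (P Q R : EuclideanSpace ℝ (Fin 2)) (h : AffineIndependent ℝ ![P, Q, R]) :
    ⟪Q - R, orthocenter3 P Q R h - P⟫_ℝ = 0 ∧ ⟪P - R, orthocenter3 P Q R h - Q⟫_ℝ = 0 := by
  set t : Affine.Triangle ℝ (EuclideanSpace ℝ (Fin 2)) := ⟨![P, Q, R], h⟩ with ht
  constructor
  · have h0 : t.orthocenter -ᵥ t.points 0 ∈ (t.altitude 0).direction :=
      AffineSubspace.vsub_mem_direction t.orthocenter_mem_altitude (t.mem_altitude 0)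
    have m1 : t.points 1 -ᵥ t.points 2 ∈
        vectorSpan ℝ (t.points '' {0}ᶜ) := by
      apply vsub_mem_vectorSpan
      · exact Set.mem_image_of_mem _ (by simp)
      · exact Set.mem_image_of_mem _ (by simp)
    have := (t.vectorSpan_isOrtho_altitude_direction 0).inner_eq m1 h0
    simpa [t, orthocenter3, Matrix.cons_val_zero, Matrix.cons_val_one, vsub_eq_sub] using this
  · have h0 : t.orthocenter -ᵥ t.points 1 ∈ (t.altitude 1).direction :=
      AffineSubspace.vsub_mem_direction t.orthocenter_mem_altitude (t.mem_altitude 1)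
    have m1 : t.points 0 -ᵥ t.points 2 ∈
        vectorSpan ℝ (t.points '' {1}ᶜ) := by
      apply vsub_mem_vectorSpan
      · exact Set.mem_image_of_mem _ (by simp)
      · exact Set.mem_image_of_mem _ (by simp)
    have := (t.vectorSpan_isOrtho_altitude_direction 1).inner_eq m1 h0
    simpa [t, orthocenter3, Matrix.cons_val_zero, Matrix.cons_val_one, vsub_eq_sub] using this

lemma det_ne_zero (A B C : EuclideanSpace ℝ (Fin 2)) (h : AffineIndependent ℝ ![A, B, C]) :
    (B 0 - A 0) * (C 1 - A 1) - (B 1 - A 1) * (C 0 - A 0) ≠ 0 := by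
  intro hdet
  have key : ∀ w0 w1 w2 : ℝ, w0 + w1 + w2 = 0 → w0 • A + w1 • B + w2 • C = 0 →
      ∀ i : Fin 3, ![w0, w1, w2] i = 0 := by
    intro w0 w1 w2 hsum hvec i
    exact affineIndependent_iff.mp h Finset.univ ![w0, w1, w2]
      (by simpa [Fin.sum_univ_three] using hsum)
      (by simpa [Fin.sum_univ_three] using hvec) i (Finset.mem_univ _)
  by_cases hu0 : B 0 - A 0 = 0
  · by_cases hu1 : B 1 - A 1 = 0
    · have hw : (1:ℝ) • A + (-1 : ℝ) • B + (0:ℝ) • C = 0 := by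
        ext j
        fin_cases j
        · simp only [Fin.mk_zero, PiLp.add_apply, PiLp.smul_apply, PiLp.zero_apply,
            smul_eq_mul, Fin.isValue, Pi.zero_apply]
          linarith
        · simp only [Fin.mk_one, PiLp.add_apply, PiLp.smul_apply, PiLp.zero_apply,
            smul_eq_mul, Fin.isValue, Pi.zero_apply]
          linarith
      have := key 1 (-1) 0 (by ring) hw 0
      norm_num at this
    · have hw : (B 1 - C 1) • A + (C 1 - A 1) • B + (A 1 - B 1) • C = 0 := by
        ext j
        fin_cases j
        · simp only [Fin.mk_zero, PiLp.add_apply, PiLp.smul_apply, smul_eq_mul, Fin.isValue,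
            PiLp.zero_apply, Pi.zero_apply]
          linear_combination hdet
        · simp only [Fin.mk_one, PiLp.add_apply, PiLp.smul_apply, smul_eq_mul, Fin.isValue,
            PiLp.zero_apply, Pi.zero_apply]
          ring
      have := key _ _ _ (by ring) hw 2
      simp at this
      exact hu1 (by linarith)
  · have hw : (B 0 - C 0) • A + (C 0 - A 0) • B + (A 0 - B 0) • C = 0 := by
      ext j
      fin_cases j
      · simp only [Fin.mk_zero, PiLp.add_apply, PiLp.smul_apply, smul_eq_mul, Fin.isValue,
          PiLp.zero_apply, Pi.zero_apply]
        ring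
      · simp only [Fin.mk_one, PiLp.add_apply, PiLp.smul_apply, smul_eq_mul, Fin.isValue,
          PiLp.zero_apply, Pi.zero_apply]
        linear_combination -hdet
    have := key _ _ _ (by ring) hw 2
    simp at this
    exact hu0 (by linarith)

/-- `A N_a` is perpendicular to `H_B H_C`. -/
theorem nagel_line_perp (A B C I Na HB HC : EuclideanSpace ℝ (Fin 2))
    (hABC : AffineIndependent ℝ ![A, B, C])
    (a b c s : ℝ)
    (ha : a = dist B C) (hb : b = dist C A) (hc : c = dist A B)
    (hs : s = (a + b + c) / 2)
    (hI : I = (2 * s)⁻¹ • (a • A + b • B + c • C))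
    (hNa : Na = s⁻¹ • ((s - a) • A + (s - b) • B + (s - c) • C))
    (hCIA : AffineIndependent ℝ ![C, I, A])
    (hAIB : AffineIndependent ℝ ![A, I, B])
    (hHB : HB = orthocenter3 C I A hCIA)
    (hHC : HC = orthocenter3 A I B hAIB) :
    ⟪Na - A, HC - HB⟫_ℝ = 0 := by
  have hABne : A ≠ B := fun h => by
    have : (0 : Fin 3) = 1 := hABC.injective (show ![A,B,C] 0 = ![A,B,C] 1 by simp [h])
    exact absurd this (by decide)
  have hACne : A ≠ C := fun h => by
    have : (0 : Fin 3) = 2 := hABC.injective (show ![A,B,C] 0 = ![A,B,C] 2 by simp [h])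
    exact absurd this (by decide)
  have hbpos : 0 < b := hb ▸ dist_pos.2 (fun h => hACne h.symm)
  have hcpos : 0 < c := hc ▸ dist_pos.2 hABne
  have hann : 0 ≤ a := ha ▸ dist_nonneg
  have hppos : 0 < a + b + c := by linarith
  have hpne : a + b + c ≠ 0 := ne_of_gt hppos
  have hbne : b ≠ 0 := ne_of_gt hbpos
  have hcne : c ≠ 0 := ne_of_gt hcpos
  have hKne : (B 0 - A 0)*(C 1 - A 1) - (B 1 - A 1)*(C 0 - A 0) ≠ 0 := det_ne_zero A B C hABC
  -- coordinates of I and Na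
  have hI0 : (a+b+c) * I 0 = a*A 0 + b*B 0 + c*C 0 := by
    have h := congrArg (fun v => v 0) hI
    simp only [PiLp.smul_apply, PiLp.add_apply, smul_eq_mul] at h
    rw [h, hs]; field_simp; try ring
  have hI1 : (a+b+c) * I 1 = a*A 1 + b*B 1 + c*C 1 := by
    have h := congrArg (fun v => v 1) hI
    simp only [PiLp.smul_apply, PiLp.add_apply, smul_eq_mul] at h
    rw [h, hs]; field_simp; try ring
  have hN0 : (a+b+c) * Na 0 = (b+c-a)*A 0 + (a+c-b)*B 0 + (a+b-c)*C 0 := by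
    have h := congrArg (fun v => v 0) hNa
    simp only [PiLp.smul_apply, PiLp.add_apply, smul_eq_mul] at h
    rw [h, hs]; field_simp; try ring
  have hN1 : (a+b+c) * Na 1 = (b+c-a)*A 1 + (a+c-b)*B 1 + (a+b-c)*C 1 := by
    have h := congrArg (fun v => v 1) hNa
    simp only [PiLp.smul_apply, PiLp.add_apply, smul_eq_mul] at h
    rw [h, hs]; field_simp; try ring
  -- squared side lengths
  have hra : a^2 = (B 0 - C 0)^2 + (B 1 - C 1)^2 := by
    rw [ha, EuclideanSpace.dist_eq, Real.sq_sqrt (by positivity), Fin.sum_univ_two]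
    simp [Real.dist_eq, sq_abs]; try ring
  have hrb : b^2 = (C 0 - A 0)^2 + (C 1 - A 1)^2 := by
    rw [hb, EuclideanSpace.dist_eq, Real.sq_sqrt (by positivity), Fin.sum_univ_two]
    simp [Real.dist_eq, sq_abs]; try ring
  have hrc : c^2 = (B 0 - A 0)^2 + (B 1 - A 1)^2 := by
    rw [hc, EuclideanSpace.dist_eq, Real.sq_sqrt (by positivity), Fin.sum_univ_two]
    simp [Real.dist_eq, sq_abs]; try ring
  -- orthocenter conditions
  have hp1 := (orth_perp C I A hCIA).1
  have hp2 := (orth_perp C I A hCIA).2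
  have hp3 := (orth_perp A I B hAIB).1
  have hp4 := (orth_perp A I B hAIB).2
  rw [← hHB] at hp1 hp2
  rw [← hHC] at hp3 hp4
  have he1 : (I 0 - A 0)*(HB 0 - C 0) + (I 1 - A 1)*(HB 1 - C 1) = 0 := by
    simp only [PiLp.inner_apply, RCLike.inner_apply, conj_trivial, Fin.sum_univ_two,
      PiLp.sub_apply] at hp1
    linear_combination hp1
  have he2 : (C 0 - A 0)*(HB 0 - I 0) + (C 1 - A 1)*(HB 1 - I 1) = 0 := by
    simp only [PiLp.inner_apply, RCLike.inner_apply, conj_trivial, Fin.sum_univ_two,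
      PiLp.sub_apply] at hp2
    linear_combination hp2
  have he3 : (I 0 - B 0)*(HC 0 - A 0) + (I 1 - B 1)*(HC 1 - A 1) = 0 := by
    simp only [PiLp.inner_apply, RCLike.inner_apply, conj_trivial, Fin.sum_univ_two,
      PiLp.sub_apply] at hp3
    linear_combination hp3
  have he4 : (A 0 - B 0)*(HC 0 - I 0) + (A 1 - B 1)*(HC 1 - I 1) = 0 := by
    simp only [PiLp.inner_apply, RCLike.inner_apply, conj_trivial, Fin.sum_univ_two,
      PiLp.sub_apply] at hp4
    linear_combination hp4
  -- explicit formulas for the orthocenters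
  have hB0 : 2*((B 0 - A 0)*(C 1 - A 1) - (B 1 - A 1)*(C 0 - A 0))*((a+b+c)*HB 0 - (a*A 0 + b*B 0 + c*C 0)) = (a+b+c)*(a+b-c)*(b+c-a)*(C 1 - A 1) := by
    have key : b * (2*((B 0 - A 0)*(C 1 - A 1) - (B 1 - A 1)*(C 0 - A 0))*((a+b+c)*HB 0 - (a*A 0 + b*B 0 + c*C 0)) - (a+b+c)*(a+b-c)*(b+c-a)*(C 1 - A 1)) = 0 := by
      linear_combination (2*C 1*c^2 + 4*C 1*b*c + 2*C 1*b^2 + 4*C 1*a*c + 4*C 1*a*b + 2*C 1*a^2 + -2*A 1*c^2 + -4*A 1*b*c + -2*A 1*b^2 + -4*A 1*a*c + -4*A 1*a*b + -2*A 1*a^2) * he1 + (-2*C 1*c^2 + -2*C 1*b*c + -2*C 1*a*c + -2*B 1*b*c + -2*B 1*b^2 + -2*B 1*a*b + 2*A 1*c^2 + 4*A 1*b*c + 2*A 1*b^2 + 2*A 1*a*c + 2*A 1*a*b) * he2 + (-2*C 1*HB 0*c + -2*C 1*HB 0*b + -2*C 1*HB 0*a + 2*C 0*C 1*b + 2*C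 0*C 1*a + -2*B 1*C 0*b + 2*A 1*HB 0*c + 2*A 1*HB 0*b + 2*A 1*HB 0*a + -2*A 1*C 0*a + 2*A 0*C 1*c + 2*A 0*B 1*b + -2*A 0*A 1*c + -2*A 0*A 1*b) * hI0 + (-2*C 1*HB 1*c + -2*C 1*HB 1*b + -2*C 1*HB 1*a + 2*C 1^2*b + 2*C 1^2*a + -2*B 1*C 1*b + 2*A 1*HB 1*c + 2*A 1*HB 1*b + 2*A 1*HB 1*a + 2*A 1*C 1*c + -2*A 1*C 1*a + 2*A 1*B 1*b + -2*A 1^2*c + -2*A 1^2*b) * hI1 + (-1*C 1*b*c + 1*C 1*b^2 + 1*C 1*a*b + 1*A 1*b*c + -1*A 1*b^2 + -1*A 1*a*b) * hra + (1*C 1*c^2 + -1*C 1*b*c + -1*C 1*b^2 + -2*C 1*a*c + -1*C 1*a*b + -1*B 1^2*C 1 + -1*B 0^2*C 1 + -1*A 1*c^2 + 1*A 1*b*c + 1*A 1*b^2 + 2*A 1*a*c + 1*A 1*a*b + 2*A 1*B 1*C 1 + 1*A 1*B 1^2 + 1*A 1*B 0^2 + -1*A 1^2*C 1 + -2*A 1^2*B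 1 + 1*A 1^3 + 2*A 0*B 0*C 1 + -2*A 0*A 1*B 0 + -1*A 0^2*C 1 + 1*A 0^2*A 1) * hrb + (1*C 1*b*c + -1*C 1*a*b + 1*C 1^3 + 1*C 0^2*C 1 + -1*A 1*b*c + 1*A 1*a*b + -3*A 1*C 1^2 + -1*A 1*C 0^2 + 3*A 1^2*C 1 + -1*A 1^3 + -2*A 0*C 0*C 1 + 2*A 0*A 1*C 0 + 1*A 0^2*C 1 + -1*A 0^2*A 1) * hrc
    have := (mul_eq_zero.mp key).resolve_left hbne
    linarith
  have hB1 : 2*((B 0 - A 0)*(C 1 - A 1) - (B 1 - A 1)*(C 0 - A 0))*((a+b+c)*HB 1 - (a*A 1 + b*B 1 + c*C 1)) = -((a+b+c)*(a+b-c)*(b+c-a)*(C 0 - A 0)) := by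
    have key : b * (2*((B 0 - A 0)*(C 1 - A 1) - (B 1 - A 1)*(C 0 - A 0))*((a+b+c)*HB 1 - (a*A 1 + b*B 1 + c*C 1)) - (-((a+b+c)*(a+b-c)*(b+c-a)*(C 0 - A 0)))) = 0 := by
      linear_combination (2*C 0*c^2 + 2*C 0*b*c + 2*C 0*a*c + 2*B 0*b*c + 2*B 0*b^2 + 2*B 0*a*b + -2*A 0*c^2 + -4*A 0*b*c + -2*A 0*b^2 + -2*A 0*a*c + -2*A 0*a*b) * he2 + (-2*C 0*c^2 + -4*C 0*b*c + -2*C 0*b^2 + -4*C 0*a*c + -4*C 0*a*b + -2*C 0*a^2 + 2*A 0*c^2 + 4*A 0*b*c + 2*A 0*b^2 + 4*A 0*a*c + 4*A 0*a*b + 2*A 0*a^2) * he1 + (2*C 0*HB 0*c + 2*C 0*HB 0*b + 2*C 0*HB 0*a + -2*C 0^2*b + -2*C 0^2*a + 2*B 0*C 0*b + -2*A 0*HB 0*c + -2*A 0*HB 0*b + -2*A 0*HB 0*a + -2*A 0*C 0*c + 2*A 0*C 0*a + -2*A 0*B 0*b + 2*A 0^2*c + 2*A 0^2*b) * hI0 +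 (2*C 0*HB 1*c + 2*C 0*HB 1*b + 2*C 0*HB 1*a + -2*C 0*C 1*b + -2*C 0*C 1*a + 2*B 0*C 1*b + -2*A 1*C 0*c + -2*A 1*B 0*b + -2*A 0*HB 1*c + -2*A 0*HB 1*b + -2*A 0*HB 1*a + 2*A 0*C 1*a + 2*A 0*A 1*c + 2*A 0*A 1*b) * hI1 + (1*C 0*b*c + -1*C 0*b^2 + -1*C 0*a*b + -1*A 0*b*c + 1*A 0*b^2 + 1*A 0*a*b) * hra + (-1*C 0*c^2 + 1*C 0*b*c + 1*C 0*b^2 + 2*C 0*a*c + 1*C 0*a*b + 1*B 1^2*C 0 + 1*B 0^2*C 0 + -2*A 1*B 1*C 0 + 1*A 1^2*C 0 + 1*A 0*c^2 + -1*A 0*b*c + -1*A 0*b^2 + -2*A 0*a*c + -1*A 0*a*b + -1*A 0*B 1^2 + -2*A 0*B 0*C 0 + -1*A 0*B 0^2 + 2*A 0*A 1*B 1 + -1*A 0*A 1^2 + 1*A 0^2*C 0 + 2*A 0^2*B 0 + -1*A 0^3) * hrb + (-1*C 0*b*c + 1*C 0*a*b + -1*C 0*C 1^2 + -1*C 0^3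 + 2*A 1*C 0*C 1 + -1*A 1^2*C 0 + 1*A 0*b*c + -1*A 0*a*b + 1*A 0*C 1^2 + 3*A 0*C 0^2 + -2*A 0*A 1*C 1 + 1*A 0*A 1^2 + -3*A 0^2*C 0 + 1*A 0^3) * hrc
    have := (mul_eq_zero.mp key).resolve_left hbne
    linarith
  have hC0 : 2*((B 0 - A 0)*(C 1 - A 1) - (B 1 - A 1)*(C 0 - A 0))*((a+b+c)*HC 0 - (a*A 0 + b*B 0 + c*C 0)) = -((a+b+c)*(a+c-b)*(b+c-a)*(B 1 - A 1)) := by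
    have key : c * (2*((B 0 - A 0)*(C 1 - A 1) - (B 1 - A 1)*(C 0 - A 0))*((a+b+c)*HC 0 - (a*A 0 + b*B 0 + c*C 0)) - (-((a+b+c)*(a+c-b)*(b+c-a)*(B 1 - A 1)))) = 0 := by
      linear_combination (-2*B 1*c^2 + -4*B 1*b*c + -2*B 1*b^2 + -4*B 1*a*c + -4*B 1*a*b + -2*B 1*a^2 + 2*A 1*c^2 + 4*A 1*b*c + 2*A 1*b^2 + 4*A 1*a*c + 4*A 1*a*b + 2*A 1*a^2) * he3 + (-2*C 1*c^2 + -2*C 1*b*c + -2*C 1*a*c + 2*B 1*c^2 + 2*B 1*b*c + 4*B 1*a*c + 2*B 1*a*b + 2*B 1*a^2 + -2*A 1*a*c + -2*A 1*a*b + -2*A 1*a^2) * he4 + (2*B 1*HC 0*c + 2*B 1*HC 0*b + 2*B 1*HC 0*a + 2*B 0*C 1*c + -2*B 0*B 1*c + -2*B 0*B 1*a + -2*A 1*HC 0*c + -2*A 1*HC 0*b + -2*A 1*HC 0*a + 2*A 1*B 0*a + -2*A 0*C 1*c + -2*A 0*B 1*b + 2*A 0*A 1*c + 2*A 0*A 1*b)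 * hI0 + (2*B 1*HC 1*c + 2*B 1*HC 1*b + 2*B 1*HC 1*a + 2*B 1*C 1*c + -2*B 1^2*c + -2*B 1^2*a + -2*A 1*HC 1*c + -2*A 1*HC 1*b + -2*A 1*HC 1*a + -2*A 1*C 1*c + -2*A 1*B 1*b + 2*A 1*B 1*a + 2*A 1^2*c + 2*A 1^2*b) * hI1 + (-1*B 1*c^2 + 1*B 1*b*c + -1*B 1*a*c + 1*A 1*c^2 + -1*A 1*b*c + 1*A 1*a*c) * hra + (-1*B 1*c^2 + -1*B 1*b*c + 1*B 1*a*c + 1*A 1*c^2 + 1*A 1*b*c + -1*A 1*a*c) * hrb + (1*B 1*c^2 + 1*B 1*b*c + 1*B 1*a*c + 2*B 1*a*b + -1*A 1*c^2 + -1*A 1*b*c + -1*A 1*a*c + -2*A 1*a*b) * hrc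
    have := (mul_eq_zero.mp key).resolve_left hcne
    linarith
  have hC1 : 2*((B 0 - A 0)*(C 1 - A 1) - (B 1 - A 1)*(C 0 - A 0))*((a+b+c)*HC 1 - (a*A 1 + b*B 1 + c*C 1)) = (a+b+c)*(a+c-b)*(b+c-a)*(B 0 - A 0) := by
    have key : c * (2*((B 0 - A 0)*(C 1 - A 1) - (B 1 - A 1)*(C 0 - A 0))*((a+b+c)*HC 1 - (a*A 1 + b*B 1 + c*C 1)) - (a+b+c)*(a+c-b)*(b+c-a)*(B 0 - A 0)) = 0 := by
      linear_combination (2*C 0*c^2 + 2*C 0*b*c + 2*C 0*a*c + -2*B 0*c^2 + -2*B 0*b*c + -4*B 0*a*c + -2*B 0*a*b + -2*B 0*a^2 + 2*A 0*a*c + 2*A 0*a*b + 2*A 0*a^2) * he4 + (2*B 0*c^2 + 4*B 0*b*c + 2*B 0*b^2 + 4*B 0*a*c + 4*B 0*a*b + 2*B 0*a^2 + -2*A 0*c^2 + -4*A 0*b*c + -2*A 0*b^2 + -4*A 0*a*c + -4*A 0*a*b + -2*A 0*a^2) * he3 + (-2*B 0*HC 0*c + -2*B 0*HC 0*b + -2*B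 0*HC 0*a + -2*B 0*C 0*c + 2*B 0^2*c + 2*B 0^2*a + 2*A 0*HC 0*c + 2*A 0*HC 0*b + 2*A 0*HC 0*a + 2*A 0*C 0*c + 2*A 0*B 0*b + -2*A 0*B 0*a + -2*A 0^2*c + -2*A 0^2*b) * hI0 + (-2*B 1*C 0*c + -2*B 0*HC 1*c + -2*B 0*HC 1*b + -2*B 0*HC 1*a + 2*B 0*B 1*c + 2*B 0*B 1*a + 2*A 1*C 0*c + 2*A 1*B 0*b + 2*A 0*HC 1*c + 2*A 0*HC 1*b + 2*A 0*HC 1*a + -2*A 0*B 1*a + -2*A 0*A 1*c + -2*A 0*A 1*b) * hI1 + (1*B 0*c^2 + -1*B 0*b*c + 1*B 0*a*c + -1*A 0*c^2 + 1*A 0*b*c + -1*A 0*a*c) * hra + (1*B 0*c^2 + 1*B 0*b*c + -1*B 0*a*c + -1*A 0*c^2 + -1*A 0*b*c + 1*A 0*a*c) * hrb + (-1*B 0*c^2 + -1*B 0*b*c + -1*B 0*a*c + -2*B 0*a*b + 1*A 0*c^2 + 1*A 0*b*c + 1*A 0*a*c + 2*A 0*a*b) * hrc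
    have := (mul_eq_zero.mp key).resolve_left hcne
    linarith
  -- final computation
  have hMne : 2*((B 0 - A 0)*(C 1 - A 1) - (B 1 - A 1)*(C 0 - A 0))*(a+b+c)^2 ≠ 0 := by
    intro h
    rcases mul_eq_zero.mp h with h' | h'
    · rcases mul_eq_zero.mp h' with h'' | h''
      · norm_num at h''
      · exact hKne h''
    · exact pow_ne_zero 2 hpne h'
  have final : (Na 0 - A 0)*(HC 0 - HB 0) + (Na 1 - A 1)*(HC 1 - HB 1) = 0 := by
    have key : (2*((B 0 - A 0)*(C 1 - A 1) - (B 1 - A 1)*(C 0 - A 0))*(a+b+c)^2) * ((Na 0 - A 0)*(HC 0 - HB 0) + (Na 1 - A 1)*(HC 1 - HB 1)) = 0 := by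
      linear_combination (-2*B 1*C 0*HC 0*c + -2*B 1*C 0*HC 0*b + -2*B 1*C 0*HC 0*a + 2*B 1*C 0*HB 0*c + 2*B 1*C 0*HB 0*b + 2*B 1*C 0*HB 0*a + 2*B 0*C 1*HC 0*c + 2*B 0*C 1*HC 0*b + 2*B 0*C 1*HC 0*a + -2*B 0*C 1*HB 0*c + -2*B 0*C 1*HB 0*b + -2*B 0*C 1*HB 0*a + 2*A 1*C 0*HC 0*c + 2*A 1*C 0*HC 0*b + 2*A 1*C 0*HC 0*a + -2*A 1*C 0*HB 0*c + -2*A 1*C 0*HB 0*b + -2*A 1*C 0*HB 0*a + -2*A 1*B 0*HC 0*c + -2*A 1*B 0*HC 0*b + -2*A 1*B 0*HC 0*a + 2*A 1*B 0*HB 0*c + 2*A 1*B 0*HB 0*b + 2*A 1*B 0*HB 0*a + -2*A 0*C 1*HC 0*c + -2*A 0*C 1*HC 0*b + -2*A 0*C 1*HC 0*a + 2*A 0*C 1*HB 0*c + 2*A 0*C 1*HB 0*b + 2*A 0*C 1*HB 0*a + 2*A 0*B 1*HC 0*c + 2*A 0*B 1*HC 0*b + 2*A 0*B 1*HC 0*a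 + -2*A 0*B 1*HB 0*c + -2*A 0*B 1*HB 0*b + -2*A 0*B 1*HB 0*a) * hN0 + (-2*B 1*C 0*HC 1*c + -2*B 1*C 0*HC 1*b + -2*B 1*C 0*HC 1*a + 2*B 1*C 0*HB 1*c + 2*B 1*C 0*HB 1*b + 2*B 1*C 0*HB 1*a + 2*B 0*C 1*HC 1*c + 2*B 0*C 1*HC 1*b + 2*B 0*C 1*HC 1*a + -2*B 0*C 1*HB 1*c + -2*B 0*C 1*HB 1*b + -2*B 0*C 1*HB 1*a + 2*A 1*C 0*HC 1*c + 2*A 1*C 0*HC 1*b + 2*A 1*C 0*HC 1*a + -2*A 1*C 0*HB 1*c + -2*A 1*C 0*HB 1*b + -2*A 1*C 0*HB 1*a + -2*A 1*B 0*HC 1*c + -2*A 1*B 0*HC 1*b + -2*A 1*B 0*HC 1*a + 2*A 1*B 0*HB 1*c + 2*A 1*B 0*HB 1*b + 2*A 1*B 0*HB 1*a + -2*A 0*C 1*HC 1*c + -2*A 0*C 1*HC 1*b + -2*A 0*C 1*HC 1*a + 2*A 0*C 1*HB 1*c + 2*A 0*C 1*HB 1*b + 2*A 0*C 1*HB 1*a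 + 2*A 0*B 1*HC 1*c + 2*A 0*B 1*HC 1*b + 2*A 0*B 1*HC 1*a + -2*A 0*B 1*HB 1*c + -2*A 0*B 1*HB 1*b + -2*A 0*B 1*HB 1*a) * hN1 + (1*C 0*c + -1*C 0*b + -1*C 0*a + -1*B 0*c + 1*B 0*b + -1*B 0*a + 2*A 0*a) * hB0 + (-1*C 0*c + 1*C 0*b + 1*C 0*a + 1*B 0*c + -1*B 0*b + 1*B 0*a + -2*A 0*a) * hC0 + (1*C 1*c + -1*C 1*b + -1*C 1*a + -1*B 1*c + 1*B 1*b + -1*B 1*a + 2*A 1*a) * hB1 + (-1*C 1*c + 1*C 1*b + 1*C 1*a + 1*B 1*c + -1*B 1*b + 1*B 1*a + -2*A 1*a) * hC1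
    exact (mul_eq_zero.mp key).resolve_left hMne
  simp only [PiLp.inner_apply, RCLike.inner_apply, conj_trivial, Fin.sum_univ_two,
    PiLp.sub_apply]
  linear_combination final
end

section
/- Let A, B, C be an affinely independent triple in the Euclidean plane with incenter I = (a·A + b·B + c·C)/(2s) (where a = dist B C, b = dist C A, c = dist A B, s = (a+b+c)/2) and orthocenter H. Let H_A, H_B, H_C be the orthocenters of triangles BIC, CIA, AIB, let O_a, O_b, O_c be the circumcenters of triangles H_A B C, H_B C A, H_C A B respectively (each triple assumed affinely independent), and assume O_a, O_b, O_c are affinely independent. Then H lies on the circumcircle of the Fuhrmann triangle O_a O_b O_c, i.e., the distance from H to the circumcenter of triangle O_a O_b O_c equals its circumradius. -/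
open EuclideanGeometry
open scoped InnerProductSpace

namespace Fuhrmann

abbrev E2 := EuclideanSpace ℝ (Fin 2)

lemma dist_sqrt (x y : E2) : dist x y = Real.sqrt ((x 0 - y 0)^2 + (x 1 - y 1)^2) := by
  rw [EuclideanSpace.dist_eq, Fin.sum_univ_two]
  simp [Real.dist_eq, sq_abs]

lemma dist_congr {x y z w : E2}
    (h : (x 0 - y 0)^2 + (x 1 - y 1)^2 = (z 0 - w 0)^2 + (z 1 - w 1)^2) :
    dist x y = dist z w := by rw [dist_sqrt, dist_sqrt, h]

lemma dist_sq (x y : E2) : dist x y ^ 2 = (x 0 - y 0)^2 + (x 1 - y 1)^2 := by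
  rw [dist_sqrt, Real.sq_sqrt] <;> positivity

lemma span3_top {X Y Z : E2} (h : AffineIndependent ℝ ![X, Y, Z]) :
    affineSpan ℝ (Set.range ![X, Y, Z]) = ⊤ := by
  rw [h.affineSpan_eq_top_iff_card_eq_finrank_add_one]
  simp [finrank_euclideanSpace_fin]

lemma circ3_eq {X Y Z : E2} (h : AffineIndependent ℝ ![X, Y, Z]) {p : E2} {r : ℝ}
    (h0 : dist X p = r) (h1 : dist Y p = r) (h2 : dist Z p = r) :
    p = circumcenter3 X Y Z h := by
  apply Affine.Simplex.eq_circumcenter_of_dist_eq (s := ⟨![X, Y, Z], h⟩) (r := r)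
  · rw [show Set.range (Affine.Simplex.points ⟨![X,Y,Z],h⟩) = Set.range ![X,Y,Z] from rfl,
      span3_top h]; trivial
  · intro i; fin_cases i <;> simpa

lemma circ3_dist0 {X Y Z : E2} (h : AffineIndependent ℝ ![X, Y, Z]) :
    dist X (circumcenter3 X Y Z h) = circumradius3 X Y Z h :=
  Affine.Simplex.dist_circumcenter_eq_circumradius ⟨![X,Y,Z],h⟩ 0

lemma circ3_dist1 {X Y Z : E2} (h : AffineIndependent ℝ ![X, Y, Z]) :
    dist Y (circumcenter3 X Y Z h) = circumradius3 X Y Z h :=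
  Affine.Simplex.dist_circumcenter_eq_circumradius ⟨![X,Y,Z],h⟩ 1

lemma circ3_dist2 {X Y Z : E2} (h : AffineIndependent ℝ ![X, Y, Z]) :
    dist Z (circumcenter3 X Y Z h) = circumradius3 X Y Z h :=
  Affine.Simplex.dist_circumcenter_eq_circumradius ⟨![X,Y,Z],h⟩ 2

lemma centroid3 (X Y Z : E2) :
    (Finset.univ : Finset (Fin 3)).centroid ℝ ![X, Y, Z] = (3:ℝ)⁻¹ • (X + Y + Z) := by
  rw [Finset.centroid_def, Finset.affineCombination_eq_linear_combination _ _ _ (by simp)]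
  simp [Fin.sum_univ_three, Finset.centroidWeights]
  try module

lemma ortho3_eq (X Y Z : E2) (h : AffineIndependent ℝ ![X, Y, Z]) :
    orthocenter3 X Y Z h = X + Y + Z - (2:ℝ) • circumcenter3 X Y Z h := by
  show (Affine.Triangle.orthocenter ⟨![X,Y,Z],h⟩) = _
  rw [Affine.Triangle.orthocenter_eq_smul_vsub_vadd_circumcenter]
  rw [show Affine.Simplex.points ⟨![X,Y,Z],h⟩ = ![X,Y,Z] from rfl]
  rw [centroid3]
  show (3:ℝ) • ((3:ℝ)⁻¹ • (X + Y + Z) - circumcenter3 X Y Z h) + circumcenter3 X Y Z h = _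
  module

/-- Circumcenter of (orthocenter X Y Z, X, Z) is X + Z - circumcenter X Y Z. -/
lemma vertex_eq (X Y Z : E2) (h1 : AffineIndependent ℝ ![X, Y, Z])
    (h2 : AffineIndependent ℝ ![orthocenter3 X Y Z h1, X, Z]) :
    circumcenter3 (orthocenter3 X Y Z h1) X Z h2
      = X + Z - circumcenter3 X Y Z h1 := by
  set Q := circumcenter3 X Y Z h1 with hQ
  refine (circ3_eq h2 (r := dist Y Q) ?_ ?_ ?_).symm
  · rw [dist_eq_norm, dist_eq_norm]
    congr 1
    rw [ortho3_eq]
    module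
  · have h1' : dist X (X + Z - Q) = dist Z Q := by
      rw [dist_eq_norm, dist_comm Z Q, dist_eq_norm]; congr 1; module
    rw [h1', hQ, circ3_dist2 h1, ← circ3_dist1 h1, ← hQ]
  · have h2' : dist Z (X + Z - Q) = dist X Q := by
      rw [dist_eq_norm, dist_comm X Q, dist_eq_norm]; congr 1; module
    rw [h2', hQ, circ3_dist0 h1, ← circ3_dist1 h1, ← hQ]


lemma arc1R (A0 A1 B0 B1 C0 C1 M0 M1 a b c : ℝ)
    (ra : a^2 = (B0-C0)^2+(B1-C1)^2) (rb : b^2 = (C0-A0)^2+(C1-A1)^2)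
    (rc : c^2 = (A0-B0)^2+(A1-B1)^2)
    (hM0 : ((a+b+c)*(b+c-a))*M0 = -(a^2)*A0 + (b*(b+c))*B0 + (c*(b+c))*C0)
    (hM1 : ((a+b+c)*(b+c-a))*M1 = -(a^2)*A1 + (b*(b+c))*B1 + (c*(b+c))*C1)
    (hT : 0 < a+b+c) (hU : 0 < b+c-a) :
    (B0-M0)^2+(B1-M1)^2 = (C0-M0)^2+(C1-M1)^2 := by
  have big : ((B0-C0)*(B0+C0-2*M0) + (B1-C1)*(B1+C1-2*M1)) * ((a+b+c)*(b+c-a)) = 0 := by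
    linear_combination ((2)*C0 + (-2)*B0) * hM0 + ((2)*C1 + (-2)*B1) * hM1 + ((1)*C1^2 + (1)*C0^2 + (-1)*B1^2 + (-1)*B0^2 + (-2)*A1*C1 + (2)*A1*B1 + (-2)*A0*C0 + (2)*A0*B0) * ra + ((-1)*C1^2 + (-1)*C0^2 + (2)*B1*C1 + (-1)*B1^2 + (2)*B0*C0 + (-1)*B0^2) * rb + ((1)*C1^2 + (1)*C0^2 + (-2)*B1*C1 + (1)*B1^2 + (-2)*B0*C0 + (1)*B0^2) * rc
  have bz := (mul_eq_zero.mp big).resolve_right (ne_of_gt (mul_pos hT hU))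
  linear_combination bz

lemma arc2R (A0 A1 B0 B1 C0 C1 I0 I1 M0 M1 a b c : ℝ)
    (ra : a^2 = (B0-C0)^2+(B1-C1)^2) (rb : b^2 = (C0-A0)^2+(C1-A1)^2)
    (rc : c^2 = (A0-B0)^2+(A1-B1)^2)
    (hi0 : (a+b+c)*I0 = a*A0+b*B0+c*C0) (hi1 : (a+b+c)*I1 = a*A1+b*B1+c*C1)
    (hM0 : ((a+b+c)*(b+c-a))*M0 = -(a^2)*A0 + (b*(b+c))*B0 + (c*(b+c))*C0)
    (hM1 : ((a+b+c)*(b+c-a))*M1 = -(a^2)*A1 + (b*(b+c))*B1 + (c*(b+c))*C1)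
    (hT : 0 < a+b+c) (hU : 0 < b+c-a) :
    (I0-M0)^2+(I1-M1)^2 = (B0-M0)^2+(B1-M1)^2 := by
  have big : ((I0-B0)*(I0+B0-2*M0) + (I1-B1)*(I1+B1-2*M1)) * ((a+b+c)^3*(b+c-a)) = 0 := by
    linear_combination ((-2)*c^2*I0 + (-4)*b*c*I0 + (-2)*b^2*I0 + (-4)*a*c*I0 + (-4)*a*b*I0 + (-2)*a^2*I0 + (2)*B0*c^2 + (4)*B0*b*c + (2)*B0*b^2 + (4)*B0*a*c + (4)*B0*a*b + (2)*B0*a^2) * hM0 + ((1)*c^3*I0 + (3)*b*c^2*I0 + (3)*b^2*c*I0 + (1)*b^3*I0 + (1)*a*c^2*I0 + (2)*a*b*c*I0 + (1)*a*b^2*I0 + (-1)*a^2*c*I0 + (-1)*a^2*b*I0 + (-1)*a^3*I0 + (-1)*C0*c^3 + (-2)*C0*b*c^2 + (-1)*C0*b^2*c + (-2)*C0*a*c^2 + (-2)*C0*a*b*c + (-1)*C0*a^2*c + (-1)*B0*b*c^2 + (-2)*B0*b^2*c + (-1)*B0*b^3 + (-2)*B0*a*b*c + (-2)*B0*a*b^2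 + (-1)*B0*a^2*b + (1)*A0*a*c^2 + (2)*A0*a*b*c + (1)*A0*a*b^2 + (2)*A0*a^2*c + (2)*A0*a^2*b + (1)*A0*a^3) * hi0 + ((-2)*c^2*I1 + (-4)*b*c*I1 + (-2)*b^2*I1 + (-4)*a*c*I1 + (-4)*a*b*I1 + (-2)*a^2*I1 + (2)*B1*c^2 + (4)*B1*b*c + (2)*B1*b^2 + (4)*B1*a*c + (4)*B1*a*b + (2)*B1*a^2) * hM1 + ((1)*c^3*I1 + (3)*b*c^2*I1 + (3)*b^2*c*I1 + (1)*b^3*I1 + (1)*a*c^2*I1 + (2)*a*b*c*I1 + (1)*a*b^2*I1 + (-1)*a^2*c*I1 + (-1)*a^2*b*I1 + (-1)*a^3*I1 + (-1)*C1*c^3 + (-2)*C1*b*c^2 + (-1)*C1*b^2*c + (-2)*C1*a*c^2 + (-2)*C1*a*b*c + (-1)*C1*a^2*c + (-1)*B1*b*c^2 + (-2)*B1*b^2*c + (-1)*B1*b^3 + (-2)*B1*a*b*c + (-2)*B1*a*b^2 + (-1)*B1*a^2*b + (1)*A1*a*c^2 + (2)*A1*a*b*c + (1)*A1*a*b^2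 + (2)*A1*a^2*c + (2)*A1*a^2*b + (1)*A1*a^3) * hi1 + ((-1)*C1^2*c^2 + (-1)*C0^2*c^2 + (2)*B1*C1*c^2 + (2)*B1^2*b*c + (1)*B1^2*b^2 + (2)*B1^2*a*c + (2)*B1^2*a*b + (1)*B1^2*a^2 + (1)*B1^2*C1^2 + (1)*B1^2*C0^2 + (-2)*B1^3*C1 + (1)*B1^4 + (2)*B0*C0*c^2 + (-2)*B0*B1^2*C0 + (2)*B0^2*b*c + (1)*B0^2*b^2 + (2)*B0^2*a*c + (2)*B0^2*a*b + (1)*B0^2*a^2 + (1)*B0^2*C1^2 + (1)*B0^2*C0^2 + (-2)*B0^2*B1*C1 + (2)*B0^2*B1^2 + (-2)*B0^3*C0 + (1)*B0^4 + (-2)*A1*B1*c^2 + (-4)*A1*B1*b*c + (-2)*A1*B1*b^2 + (-4)*A1*B1*a*c + (-4)*A1*B1*a*b + (-2)*A1*B1*a^2 + (-2)*A1*B1*C1^2 + (-2)*A1*B1*C0^2 + (4)*A1*B1^2*C1 + (-2)*A1*B1^3 + (4)*A1*B0*B1*C0 + (-2)*A1*B0^2*B1 + (1)*A1^2*c^2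 + (2)*A1^2*b*c + (1)*A1^2*b^2 + (2)*A1^2*a*c + (2)*A1^2*a*b + (1)*A1^2*a^2 + (1)*A1^2*C1^2 + (1)*A1^2*C0^2 + (-2)*A1^2*B1*C1 + (1)*A1^2*B1^2 + (-2)*A1^2*B0*C0 + (1)*A1^2*B0^2 + (-2)*A0*B0*c^2 + (-4)*A0*B0*b*c + (-2)*A0*B0*b^2 + (-4)*A0*B0*a*c + (-4)*A0*B0*a*b + (-2)*A0*B0*a^2 + (-2)*A0*B0*C1^2 + (-2)*A0*B0*C0^2 + (4)*A0*B0*B1*C1 + (-2)*A0*B0*B1^2 + (4)*A0*B0^2*C0 + (-2)*A0*B0^3 + (1)*A0^2*c^2 + (2)*A0^2*b*c + (1)*A0^2*b^2 + (2)*A0^2*a*c + (2)*A0^2*a*b + (1)*A0^2*a^2 + (1)*A0^2*C1^2 + (1)*A0^2*C0^2 + (-2)*A0^2*B1*C1 + (1)*A0^2*B1^2 + (-2)*A0^2*B0*C0 + (1)*A0^2*B0^2) * ra + ((-1)*C1^2*c^2 + (-1)*C0^2*c^2 + (2)*B1*C1*c^2 + (-1)*B1^2*c^2 + (1)*B1^2*C1^2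 + (1)*B1^2*C0^2 + (-2)*B1^3*C1 + (1)*B1^4 + (2)*B0*C0*c^2 + (-2)*B0*B1^2*C0 + (-1)*B0^2*c^2 + (1)*B0^2*C1^2 + (1)*B0^2*C0^2 + (-2)*B0^2*B1*C1 + (2)*B0^2*B1^2 + (-2)*B0^3*C0 + (1)*B0^4 + (-2)*A1*B1*C1^2 + (-2)*A1*B1*C0^2 + (4)*A1*B1^2*C1 + (-2)*A1*B1^3 + (4)*A1*B0*B1*C0 + (-2)*A1*B0^2*B1 + (1)*A1^2*C1^2 + (1)*A1^2*C0^2 + (-2)*A1^2*B1*C1 + (1)*A1^2*B1^2 + (-2)*A1^2*B0*C0 + (1)*A1^2*B0^2 + (-2)*A0*B0*C1^2 + (-2)*A0*B0*C0^2 + (4)*A0*B0*B1*C1 + (-2)*A0*B0*B1^2 + (4)*A0*B0^2*C0 + (-2)*A0*B0^3 + (1)*A0^2*C1^2 + (1)*A0^2*C0^2 + (-2)*A0^2*B1*C1 + (1)*A0^2*B1^2 + (-2)*A0^2*B0*C0 + (1)*A0^2*B0^2) * rb + ((-1)*C1^2*c^2 + (-2)*C1^2*b*c + (-2)*C1^2*a*c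 + (-2)*C1^2*a*b + (-2)*C1^4 + (-1)*C0^2*c^2 + (-2)*C0^2*b*c + (-2)*C0^2*a*c + (-2)*C0^2*a*b + (-4)*C0^2*C1^2 + (-2)*C0^4 + (2)*B1*C1*c^2 + (4)*B1*C1*b*c + (4)*B1*C1*a*c + (4)*B1*C1*a*b + (6)*B1*C1^3 + (6)*B1*C0^2*C1 + (-1)*B1^2*c^2 + (-2)*B1^2*b*c + (-2)*B1^2*a*c + (-2)*B1^2*a*b + (-7)*B1^2*C1^2 + (-3)*B1^2*C0^2 + (4)*B1^3*C1 + (-1)*B1^4 + (2)*B0*C0*c^2 + (4)*B0*C0*b*c + (4)*B0*C0*a*c + (4)*B0*C0*a*b + (6)*B0*C0*C1^2 + (6)*B0*C0^3 + (-8)*B0*B1*C0*C1 + (4)*B0*B1^2*C0 + (-1)*B0^2*c^2 + (-2)*B0^2*b*c + (-2)*B0^2*a*c + (-2)*B0^2*a*b + (-3)*B0^2*C1^2 + (-7)*B0^2*C0^2 + (4)*B0^2*B1*C1 + (-2)*B0^2*B1^2 + (4)*B0^3*C0 + (-1)*B0^4 + (2)*A1*C1^3 + (2)*A1*C0^2*C1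 + (-4)*A1*B1*C1^2 + (2)*A1*B1^2*C1 + (-4)*A1*B0*C0*C1 + (2)*A1*B0^2*C1 + (-1)*A1^2*C1^2 + (-1)*A1^2*C0^2 + (2)*A1^2*B1*C1 + (-1)*A1^2*B1^2 + (2)*A1^2*B0*C0 + (-1)*A1^2*B0^2 + (2)*A0*C0*C1^2 + (2)*A0*C0^3 + (-4)*A0*B1*C0*C1 + (2)*A0*B1^2*C0 + (-4)*A0*B0*C0^2 + (2)*A0*B0^2*C0 + (-1)*A0^2*C1^2 + (-1)*A0^2*C0^2 + (2)*A0^2*B1*C1 + (-1)*A0^2*B1^2 + (2)*A0^2*B0*C0 + (-1)*A0^2*B0^2) * rc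
  have bz := (mul_eq_zero.mp big).resolve_right
    (ne_of_gt (mul_pos (pow_pos hT 3) hU))
  linear_combination bz

lemma keyR (A0 A1 B0 B1 C0 C1 M0 M1 N0 N1 F0 F1 H0 H1 a b c : ℝ)
    (ra : a^2 = (B0-C0)^2+(B1-C1)^2) (rb : b^2 = (C0-A0)^2+(C1-A1)^2)
    (rc : c^2 = (A0-B0)^2+(A1-B1)^2)
    (hAB : A0^2+A1^2 = B0^2+B1^2) (hBC : B0^2+B1^2 = C0^2+C1^2)
    (hM0 : ((a+b+c)*(b+c-a))*M0 = -(a^2)*A0 + (b*(b+c))*B0 + (c*(b+c))*C0)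
    (hM1 : ((a+b+c)*(b+c-a))*M1 = -(a^2)*A1 + (b*(b+c))*B1 + (c*(b+c))*C1)
    (hN0 : (a+b+c)*N0 = (b+c-a)*A0 + (a-b+c)*B0 + (a+b-c)*C0)
    (hN1 : (a+b+c)*N1 = (b+c-a)*A1 + (a-b+c)*B1 + (a+b-c)*C1)
    (hH0 : H0 = A0+B0+C0) (hH1 : H1 = A1+B1+C1)
    (hF0 : 2*F0 = H0+N0) (hF1 : 2*F1 = H1+N1)
    (hT : 0 < a+b+c) (hU : 0 < b+c-a) :
    ((B0+C0-M0)-F0)^2 + ((B1+C1-M1)-F1)^2 = (H0-F0)^2+(H1-F1)^2 := by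
  have big : ((A0+M0)*((B0+C0-M0)-N0) + (A1+M1)*((B1+C1-M1)-N1))
      * ((a+b+c)^3*(b+c-a)^2) = 0 := by
    linear_combination ((-1)*c^3*N0 + (-1)*c^3*M0 + (-3)*b*c^2*N0 + (-3)*b*c^2*M0 + (-3)*b^2*c*N0 + (-3)*b^2*c*M0 + (-1)*b^3*N0 + (-1)*b^3*M0 + (-1)*a*c^2*N0 + (-1)*a*c^2*M0 + (-2)*a*b*c*N0 + (-2)*a*b*c*M0 + (-1)*a*b^2*N0 + (-1)*a*b^2*M0 + (1)*a^2*c*N0 + (1)*a^2*c*M0 + (1)*a^2*b*N0 + (1)*a^2*b*M0 + (1)*a^3*N0 + (1)*a^3*M0 + (1)*C0*b*c^2 + (2)*C0*b^2*c + (1)*C0*b^3 + (1)*C0*a*b*c + (1)*C0*a*b^2 + (-1)*C0*a^2*c + (-1)*C0*a^2*b + (-1)*C0*a^3 + (1)*B0*c^3 + (2)*B0*b*c^2 + (1)*B0*b^2*c + (1)*B0*a*c^2 + (1)*B0*a*b*c + (-1)*B0*a^2*c + (-1)*B0*a^2*b + (-1)*B0*a^3 + (-1)*A0*c^3 + (-3)*A0*b*c^2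 + (-3)*A0*b^2*c + (-1)*A0*b^3 + (-1)*A0*a*c^2 + (-2)*A0*a*b*c + (-1)*A0*a*b^2 + (2)*A0*a^2*c + (2)*A0*a^2*b + (2)*A0*a^3) * hM0 + ((-1)*C0*c^4 + (-3)*C0*b*c^3 + (-3)*C0*b^2*c^2 + (-1)*C0*b^3*c + (1)*C0*a^2*c^2 + (1)*C0*a^2*b*c + (-1)*B0*b*c^3 + (-3)*B0*b^2*c^2 + (-3)*B0*b^3*c + (-1)*B0*b^4 + (1)*B0*a^2*b*c + (1)*B0*a^2*b^2 + (-1)*A0*c^4 + (-4)*A0*b*c^3 + (-6)*A0*b^2*c^2 + (-4)*A0*b^3*c + (-1)*A0*b^4 + (3)*A0*a^2*c^2 + (6)*A0*a^2*b*c + (3)*A0*a^2*b^2 + (-2)*A0*a^4) * hN0 + ((-1)*c^3*N1 + (-1)*c^3*M1 + (-3)*b*c^2*N1 + (-3)*b*c^2*M1 + (-3)*b^2*c*N1 + (-3)*b^2*c*M1 + (-1)*b^3*N1 + (-1)*b^3*M1 + (-1)*a*c^2*N1 + (-1)*a*c^2*M1 + (-2)*a*b*c*N1 + (-2)*a*b*c*M1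 + (-1)*a*b^2*N1 + (-1)*a*b^2*M1 + (1)*a^2*c*N1 + (1)*a^2*c*M1 + (1)*a^2*b*N1 + (1)*a^2*b*M1 + (1)*a^3*N1 + (1)*a^3*M1 + (1)*C1*b*c^2 + (2)*C1*b^2*c + (1)*C1*b^3 + (1)*C1*a*b*c + (1)*C1*a*b^2 + (-1)*C1*a^2*c + (-1)*C1*a^2*b + (-1)*C1*a^3 + (1)*B1*c^3 + (2)*B1*b*c^2 + (1)*B1*b^2*c + (1)*B1*a*c^2 + (1)*B1*a*b*c + (-1)*B1*a^2*c + (-1)*B1*a^2*b + (-1)*B1*a^3 + (-1)*A1*c^3 + (-3)*A1*b*c^2 + (-3)*A1*b^2*c + (-1)*A1*b^3 + (-1)*A1*a*c^2 + (-2)*A1*a*b*c + (-1)*A1*a*b^2 + (2)*A1*a^2*c + (2)*A1*a^2*b + (2)*A1*a^3) * hM1 + ((-1)*C1*c^4 + (-3)*C1*b*c^3 + (-3)*C1*b^2*c^2 + (-1)*C1*b^3*c + (1)*C1*a^2*c^2 + (1)*C1*a^2*b*c + (-1)*B1*b*c^3 + (-3)*B1*b^2*c^2 + (-3)*B1*b^3*c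 + (-1)*B1*b^4 + (1)*B1*a^2*b*c + (1)*B1*a^2*b^2 + (-1)*A1*c^4 + (-4)*A1*b*c^3 + (-6)*A1*b^2*c^2 + (-4)*A1*b^3*c + (-1)*A1*b^4 + (3)*A1*a^2*c^2 + (6)*A1*a^2*b*c + (3)*A1*a^2*b^2 + (-2)*A1*a^4) * hN1 + ((-2)*C1^2*c^3 + (-2)*C1^2*b*c^2 + (-2)*C0^2*c^3 + (-2)*C0^2*b*c^2 + (-4)*B1*C1*b*c^2 + (-4)*B1*C1*b^2*c + (-2)*B1^2*b^2*c + (-2)*B1^2*b^3 + (-4)*B0*C0*b*c^2 + (-4)*B0*C0*b^2*c + (-2)*B0^2*b^2*c + (-2)*B0^2*b^3 + (-2)*A1*C1*c^3 + (-4)*A1*C1*b*c^2 + (-2)*A1*C1*b^2*c + (2)*A1*C1*a*c^2 + (2)*A1*C1*a*b*c + (4)*A1*C1*a^2*c + (4)*A1*C1^3*c + (4)*A1*C0^2*C1*c + (-2)*A1*B1*b*c^2 + (-4)*A1*B1*b^2*c + (-2)*A1*B1*b^3 + (2)*A1*B1*a*b*c + (2)*A1*B1*a*b^2 + (4)*A1*B1*a^2*b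 + (-8)*A1*B1*C1^2*c + (4)*A1*B1*C1^2*b + (4)*A1*B1*C0^2*b + (4)*A1*B1^2*C1*c + (-8)*A1*B1^2*C1*b + (4)*A1*B1^3*b + (-8)*A1*B0*C0*C1*c + (-8)*A1*B0*B1*C0*b + (4)*A1*B0^2*C1*c + (4)*A1*B0^2*B1*b + (4)*A1^2*c^3 + (12)*A1^2*b*c^2 + (12)*A1^2*b^2*c + (4)*A1^2*b^3 + (-2)*A1^2*a*c^2 + (-4)*A1^2*a*b*c + (-2)*A1^2*a*b^2 + (-4)*A1^2*a^2*c + (-4)*A1^2*a^2*b + (-4)*A1^2*C1^2*c + (-4)*A1^2*C1^2*b + (-4)*A1^2*C0^2*c + (-4)*A1^2*C0^2*b + (8)*A1^2*B1*C1*c + (8)*A1^2*B1*C1*b + (-4)*A1^2*B1^2*c + (-4)*A1^2*B1^2*b + (8)*A1^2*B0*C0*c + (8)*A1^2*B0*C0*b + (-4)*A1^2*B0^2*c + (-4)*A1^2*B0^2*b + (-2)*A0*C0*c^3 + (-4)*A0*C0*b*c^2 + (-2)*A0*C0*b^2*c + (2)*A0*C0*a*c^2 + (2)*A0*C0*a*b*c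 + (4)*A0*C0*a^2*c + (4)*A0*C0*C1^2*c + (4)*A0*C0^3*c + (-8)*A0*B1*C0*C1*c + (4)*A0*B1^2*C0*c + (-2)*A0*B0*b*c^2 + (-4)*A0*B0*b^2*c + (-2)*A0*B0*b^3 + (2)*A0*B0*a*b*c + (2)*A0*B0*a*b^2 + (4)*A0*B0*a^2*b + (4)*A0*B0*C1^2*b + (-8)*A0*B0*C0^2*c + (4)*A0*B0*C0^2*b + (-8)*A0*B0*B1*C1*b + (4)*A0*B0*B1^2*b + (4)*A0*B0^2*C0*c + (-8)*A0*B0^2*C0*b + (4)*A0*B0^3*b + (4)*A0^2*c^3 + (12)*A0^2*b*c^2 + (12)*A0^2*b^2*c + (4)*A0^2*b^3 + (-2)*A0^2*a*c^2 + (-4)*A0^2*a*b*c + (-2)*A0^2*a*b^2 + (-4)*A0^2*a^2*c + (-4)*A0^2*a^2*b + (-4)*A0^2*C1^2*c + (-4)*A0^2*C1^2*b + (-4)*A0^2*C0^2*c + (-4)*A0^2*C0^2*b + (8)*A0^2*B1*C1*c + (8)*A0^2*B1*C1*b + (-4)*A0^2*B1^2*c + (-4)*A0^2*B1^2*b + (8)*A0^2*B0*C0*c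 + (8)*A0^2*B0*C0*b + (-4)*A0^2*B0^2*c + (-4)*A0^2*B0^2*b) * ra + ((3)*C1^2*c^3 + (1)*C1^2*b*c^2 + (-1)*C1^2*a*c^2 + (3)*C0^2*c^3 + (1)*C0^2*b*c^2 + (-1)*C0^2*a*c^2 + (6)*B1*C1*c^3 + (6)*B1*C1*b*c^2 + (2)*B1*C1*b^2*c + (-4)*B1*C1*a*c^2 + (-2)*B1*C1*a*b*c + (-2)*B1*C1^3*c + (-2)*B1*C0^2*C1*c + (1)*B1^2*c^3 + (3)*B1^2*b*c^2 + (3)*B1^2*b^2*c + (1)*B1^2*b^3 + (-1)*B1^2*a*c^2 + (-2)*B1^2*a*b*c + (-1)*B1^2*a*b^2 + (9)*B1^2*C1^2*c + (-1)*B1^2*C1^2*b + (-1)*B1^2*C1^2*a + (1)*B1^2*C0^2*c + (-1)*B1^2*C0^2*b + (-1)*B1^2*C0^2*a + (4)*B1^3*C1*b + (-2)*B1^4*c + (-2)*B1^4*b + (6)*B0*C0*c^3 + (6)*B0*C0*b*c^2 + (2)*B0*C0*b^2*c + (-4)*B0*C0*a*c^2 + (-2)*B0*C0*a*b*c + (-2)*B0*C0*C1^2*c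 + (-2)*B0*C0^3*c + (16)*B0*B1*C0*C1*c + (4)*B0*B1^2*C0*b + (1)*B0^2*c^3 + (3)*B0^2*b*c^2 + (3)*B0^2*b^2*c + (1)*B0^2*b^3 + (-1)*B0^2*a*c^2 + (-2)*B0^2*a*b*c + (-1)*B0^2*a*b^2 + (1)*B0^2*C1^2*c + (-1)*B0^2*C1^2*b + (-1)*B0^2*C1^2*a + (9)*B0^2*C0^2*c + (-1)*B0^2*C0^2*b + (-1)*B0^2*C0^2*a + (4)*B0^2*B1*C1*b + (-4)*B0^2*B1^2*c + (-4)*B0^2*B1^2*b + (4)*B0^3*C0*b + (-2)*B0^4*c + (-2)*B0^4*b + (-2)*A1*C1^3*c + (-2)*A1*C0^2*C1*c + (-4)*A1*B1*C1^2*c + (-2)*A1*B1*C1^2*b + (2)*A1*B1*C1^2*a + (-4)*A1*B1*C0^2*c + (-2)*A1*B1*C0^2*b + (2)*A1*B1*C0^2*a + (2)*A1*B1^2*C1*b + (-2)*A1*B1^2*C1*a + (-4)*A1*B1^3*c + (-2)*A1*B1^3*b + (2)*A1*B1^3*a + (8)*A1*B0*B1*C0*c + (4)*A1*B0*B1*C0*b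 + (-4)*A1*B0*B1*C0*a + (-8)*A1*B0^2*C1*c + (-2)*A1*B0^2*C1*b + (2)*A1*B0^2*C1*a + (-4)*A1*B0^2*B1*c + (-2)*A1*B0^2*B1*b + (2)*A1*B0^2*B1*a + (-10)*A1^2*c^3 + (-10)*A1^2*b*c^2 + (-5)*A1^2*b^2*c + (-1)*A1^2*b^3 + (6)*A1^2*a*c^2 + (4)*A1^2*a*b*c + (1)*A1^2*a*b^2 + (7)*A1^2*C1^2*c + (3)*A1^2*C1^2*b + (-1)*A1^2*C1^2*a + (7)*A1^2*C0^2*c + (3)*A1^2*C0^2*b + (-1)*A1^2*C0^2*a + (-22)*A1^2*B1*C1*c + (-8)*A1^2*B1*C1*b + (4)*A1^2*B1*C1*a + (15)*A1^2*B1^2*c + (5)*A1^2*B1^2*b + (-3)*A1^2*B1^2*a + (-22)*A1^2*B0*C0*c + (-8)*A1^2*B0*C0*b + (4)*A1^2*B0*C0*a + (15)*A1^2*B0^2*c + (5)*A1^2*B0^2*b + (-3)*A1^2*B0^2*a + (10)*A1^3*C1*c + (2)*A1^3*C1*b + (-2)*A1^3*C1*a + (-5)*A1^4*c + (-1)*A1^4*b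 + (1)*A1^4*a + (-2)*A0*C0*C1^2*c + (-2)*A0*C0^3*c + (-8)*A0*B1^2*C0*c + (-2)*A0*B1^2*C0*b + (2)*A0*B1^2*C0*a + (-4)*A0*B0*C1^2*c + (-2)*A0*B0*C1^2*b + (2)*A0*B0*C1^2*a + (-4)*A0*B0*C0^2*c + (-2)*A0*B0*C0^2*b + (2)*A0*B0*C0^2*a + (8)*A0*B0*B1*C1*c + (4)*A0*B0*B1*C1*b + (-4)*A0*B0*B1*C1*a + (-4)*A0*B0*B1^2*c + (-2)*A0*B0*B1^2*b + (2)*A0*B0*B1^2*a + (2)*A0*B0^2*C0*b + (-2)*A0*B0^2*C0*a + (-4)*A0*B0^3*c + (-2)*A0*B0^3*b + (2)*A0*B0^3*a + (10)*A0*A1^2*C0*c + (2)*A0*A1^2*C0*b + (-2)*A0*A1^2*C0*a + (-10)*A0^2*c^3 + (-10)*A0^2*b*c^2 + (-5)*A0^2*b^2*c + (-1)*A0^2*b^3 + (6)*A0^2*a*c^2 + (4)*A0^2*a*b*c + (1)*A0^2*a*b^2 + (7)*A0^2*C1^2*c + (3)*A0^2*C1^2*b + (-1)*A0^2*C1^2*a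 + (7)*A0^2*C0^2*c + (3)*A0^2*C0^2*b + (-1)*A0^2*C0^2*a + (-22)*A0^2*B1*C1*c + (-8)*A0^2*B1*C1*b + (4)*A0^2*B1*C1*a + (15)*A0^2*B1^2*c + (5)*A0^2*B1^2*b + (-3)*A0^2*B1^2*a + (-22)*A0^2*B0*C0*c + (-8)*A0^2*B0*C0*b + (4)*A0^2*B0*C0*a + (15)*A0^2*B0^2*c + (5)*A0^2*B0^2*b + (-3)*A0^2*B0^2*a + (10)*A0^2*A1*C1*c + (2)*A0^2*A1*C1*b + (-2)*A0^2*A1*C1*a + (-10)*A0^2*A1^2*c + (-2)*A0^2*A1^2*b + (2)*A0^2*A1^2*a + (10)*A0^3*C0*c + (2)*A0^3*C0*b + (-2)*A0^3*C0*a + (-5)*A0^4*c + (-1)*A0^4*b + (1)*A0^4*a) * rb + ((1)*C1^2*c^3 + (3)*C1^2*b*c^2 + (-1)*C1^2*a*c^2 + (-2)*C1^2*a*b*c + (1)*C1^4*c + (-1)*C1^4*b + (-1)*C1^4*a + (1)*C0^2*c^3 + (3)*C0^2*b*c^2 + (-1)*C0^2*a*c^2 + (-2)*C0^2*a*b*c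 + (2)*C0^2*C1^2*c + (-2)*C0^2*C1^2*b + (-2)*C0^2*C1^2*a + (1)*C0^4*c + (-1)*C0^4*b + (-1)*C0^4*a + (2)*B1*C1*b*c^2 + (-2)*B1*C1*a*b*c + (10)*B1*C1^3*c + (6)*B1*C1^3*b + (-4)*B1*C1^3*a + (10)*B1*C0^2*C1*c + (6)*B1*C0^2*C1*b + (-4)*B1*C0^2*C1*a + (12)*B1^2*C1^2*b + (-2)*B1^2*C1^2*a + (4)*B1^2*C0^2*b + (-2)*B1^2*C0^2*a + (-2)*B1^3*C1*b + (2)*B0*C0*b*c^2 + (-2)*B0*C0*a*b*c + (10)*B0*C0*C1^2*c + (6)*B0*C0*C1^2*b + (-4)*B0*C0*C1^2*a + (10)*B0*C0^3*c + (6)*B0*C0^3*b + (-4)*B0*C0^3*a + (16)*B0*B1*C0*C1*b + (-2)*B0*B1^2*C0*b + (4)*B0^2*C1^2*b + (-2)*B0^2*C1^2*a + (12)*B0^2*C0^2*b + (-2)*B0^2*C0^2*a + (-2)*B0^2*B1*C1*b + (-2)*B0^3*C0*b + (-8)*A1*C1^3*c + (-6)*A1*C1^3*b + (4)*A1*C1^3*a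 + (-8)*A1*C0^2*C1*c + (-6)*A1*C0^2*C1*b + (4)*A1*C0^2*C1*a + (-10)*A1*B1*C1^2*c + (-12)*A1*B1*C1^2*b + (6)*A1*B1*C1^2*a + (-2)*A1*B1*C0^2*c + (-8)*A1*B1*C0^2*b + (2)*A1*B1*C0^2*a + (-4)*A1*B1^2*C1*c + (-10)*A1*B1^2*C1*b + (4)*A1*B1^2*C1*a + (-2)*A1*B1^3*b + (-8)*A1*B0*C0*C1*c + (-4)*A1*B0*C0*C1*b + (4)*A1*B0*C0*C1*a + (-4)*A1*B0^2*C1*c + (-10)*A1*B0^2*C1*b + (4)*A1*B0^2*C1*a + (-2)*A1*B0^2*B1*b + (-1)*A1^2*c^3 + (-5)*A1^2*b*c^2 + (1)*A1^2*a*c^2 + (4)*A1^2*a*b*c + (-2)*A1^2*C1^2*c + (6)*A1^2*C1^2*b + (2)*A1^2*C1^2*a + (-2)*A1^2*C0^2*c + (6)*A1^2*C0^2*b + (2)*A1^2*C0^2*a + (-2)*A1^2*B1*C1*c + (-16)*A1^2*B1*C1*b + (4)*A1^2*B1^2*c + (10)*A1^2*B1^2*b + (-2)*A1^2*B1^2*a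 + (-2)*A1^2*B0*C0*c + (-16)*A1^2*B0*C0*b + (4)*A1^2*B0^2*c + (10)*A1^2*B0^2*b + (-2)*A1^2*B0^2*a + (20)*A1^3*C1*c + (20)*A1^3*C1*b + (-12)*A1^3*C1*a + (2)*A1^3*B1*c + (10)*A1^3*B1*b + (-2)*A1^3*B1*a + (-11)*A1^4*c + (-15)*A1^4*b + (7)*A1^4*a + (-8)*A0*C0*C1^2*c + (-6)*A0*C0*C1^2*b + (4)*A0*C0*C1^2*a + (-8)*A0*C0^3*c + (-6)*A0*C0^3*b + (4)*A0*C0^3*a + (-8)*A0*B1*C0*C1*c + (-4)*A0*B1*C0*C1*b + (4)*A0*B1*C0*C1*a + (-4)*A0*B1^2*C0*c + (-10)*A0*B1^2*C0*b + (4)*A0*B1^2*C0*a + (-2)*A0*B0*C1^2*c + (-8)*A0*B0*C1^2*b + (2)*A0*B0*C1^2*a + (-10)*A0*B0*C0^2*c + (-12)*A0*B0*C0^2*b + (6)*A0*B0*C0^2*a + (-2)*A0*B0*B1^2*b + (-4)*A0*B0^2*C0*c + (-10)*A0*B0^2*C0*b + (4)*A0*B0^2*C0*a + (-2)*A0*B0^3*b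 + (20)*A0*A1^2*C0*c + (20)*A0*A1^2*C0*b + (-12)*A0*A1^2*C0*a + (2)*A0*A1^2*B0*c + (10)*A0*A1^2*B0*b + (-2)*A0*A1^2*B0*a + (-1)*A0^2*c^3 + (-5)*A0^2*b*c^2 + (1)*A0^2*a*c^2 + (4)*A0^2*a*b*c + (-2)*A0^2*C1^2*c + (6)*A0^2*C1^2*b + (2)*A0^2*C1^2*a + (-2)*A0^2*C0^2*c + (6)*A0^2*C0^2*b + (2)*A0^2*C0^2*a + (-2)*A0^2*B1*C1*c + (-16)*A0^2*B1*C1*b + (4)*A0^2*B1^2*c + (10)*A0^2*B1^2*b + (-2)*A0^2*B1^2*a + (-2)*A0^2*B0*C0*c + (-16)*A0^2*B0*C0*b + (4)*A0^2*B0^2*c + (10)*A0^2*B0^2*b + (-2)*A0^2*B0^2*a + (20)*A0^2*A1*C1*c + (20)*A0^2*A1*C1*b + (-12)*A0^2*A1*C1*a + (2)*A0^2*A1*B1*c + (10)*A0^2*A1*B1*b + (-2)*A0^2*A1*B1*a + (-22)*A0^2*A1^2*c + (-30)*A0^2*A1^2*b + (14)*A0^2*A1^2*a + (20)*A0^3*C0*c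 + (20)*A0^3*C0*b + (-12)*A0^3*C0*a + (2)*A0^3*B0*c + (10)*A0^3*B0*b + (-2)*A0^3*B0*a + (-11)*A0^4*c + (-15)*A0^4*b + (7)*A0^4*a) * rc + ((-2)*C1^2*a*b*c + (4)*C1^4*c + (-2)*C1^4*b + (-2)*C1^4*a + (-2)*C0^2*a*b*c + (12)*C0^2*C1^2*c + (-4)*C0^2*C1^2*b + (-4)*C0^2*C1^2*a + (8)*C0^4*c + (-2)*C0^4*b + (-2)*C0^4*a + (4)*B1*C1*a*b*c + (2)*B1*C1^3*c + (14)*B1*C1^3*b + (2)*B1*C0^2*C1*c + (14)*B1*C0^2*C1*b + (6)*B1^2*a*b*c + (-2)*B1^2*C1^2*c + (6)*B1^2*C1^2*b + (-2)*B1^2*C1^2*a + (2)*B1^2*C0^2*c + (14)*B1^2*C0^2*b + (-2)*B1^2*C0^2*a + (-10)*B1^3*C1*c + (-22)*B1^3*C1*b + (4)*B1^3*C1*a + (-10)*B1^4*c + (-12)*B1^4*b + (8)*B1^4*a + (4)*B0*C0*a*b*c + (26)*B0*C0*C1^2*c + (30)*B0*C0*C1^2*b + (-12)*B0*C0*C1^2*a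 + (26)*B0*C0^3*c + (30)*B0*C0^3*b + (-12)*B0*C0^3*a + (-16)*B0*B1*C0*C1*c + (-16)*B0*B1*C0*C1*b + (-34)*B0*B1^2*C0*c + (-38)*B0*B1^2*C0*b + (16)*B0*B1^2*C0*a + (6)*B0^2*a*b*c + (10)*B0^2*C1^2*c + (30)*B0^2*C1^2*b + (-6)*B0^2*C1^2*a + (-2)*B0^2*C0^2*c + (22)*B0^2*C0^2*b + (-6)*B0^2*C0^2*a + (-10)*B0^2*B1*C1*c + (-22)*B0^2*B1*C1*b + (4)*B0^2*B1*C1*a + (-24)*B0^2*B1^2*c + (-40)*B0^2*B1^2*b + (20)*B0^2*B1^2*a + (-34)*B0^3*C0*c + (-38)*B0^3*C0*b + (16)*B0^3*C0*a + (-14)*B0^4*c + (-28)*B0^4*b + (12)*B0^4*a + (-8)*A1*C1*a*b*c + (-14)*A1*C1^3*c + (-10)*A1*C1^3*b + (4)*A1*C1^3*a + (-14)*A1*C0^2*C1*c + (-10)*A1*C0^2*C1*b + (4)*A1*C0^2*C1*a + (-8)*A1*B1*a*b*c + (34)*A1*B1*C1^2*c + (-10)*A1*B1*C1^2*b + (-4)*A1*B1*C1^2*a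 + (-2)*A1*B1*C0^2*c + (-22)*A1*B1*C0^2*b + (30)*A1*B1^2*C1*c + (58)*A1*B1^2*C1*b + (-20)*A1*B1^2*C1*a + (14)*A1*B1^3*c + (26)*A1*B1^3*b + (-12)*A1*B1^3*a + (36)*A1*B0*C0*C1*c + (12)*A1*B0*C0*C1*b + (-4)*A1*B0*C0*C1*a + (12)*A1*B0*B1*C0*c + (36)*A1*B0*B1*C0*b + (-4)*A1*B0*B1*C0*a + (18)*A1*B0^2*C1*c + (22)*A1*B0^2*C1*b + (-16)*A1*B0^2*C1*a + (14)*A1*B0^2*B1*c + (26)*A1*B0^2*B1*b + (-12)*A1*B0^2*B1*a + (8)*A1^2*a*b*c + (-20)*A1^2*C1^2*c + (4)*A1^2*C1^2*b + (6)*A1^2*C1^2*a + (8)*A1^2*C0^2*b + (2)*A1^2*C0^2*a + (-64)*A1^2*B1*C1*c + (-64)*A1^2*B1*C1*b + (28)*A1^2*B1*C1*a + (-12)*A1^2*B1^2*c + (-36)*A1^2*B1^2*b + (14)*A1^2*B1^2*a + (-24)*A1^2*B0*C0*c + (-24)*A1^2*B0*C0*b + (4)*A1^2*B0*C0*a + (-8)*A1^2*B0^2*c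 + (-16)*A1^2*B0^2*b + (10)*A1^2*B0^2*a + (40)*A1^3*C1*c + (24)*A1^3*C1*b + (-16)*A1^3*C1*a + (24)*A1^3*B1*c + (40)*A1^3*B1*b + (-16)*A1^3*B1*a + (-16)*A1^4*c + (-16)*A1^4*b + (8)*A1^4*a + (-8)*A0*C0*a*b*c + (-14)*A0*C0*C1^2*c + (-10)*A0*C0*C1^2*b + (4)*A0*C0*C1^2*a + (-14)*A0*C0^3*c + (-10)*A0*C0^3*b + (4)*A0*C0^3*a + (36)*A0*B1*C0*C1*c + (12)*A0*B1*C0*C1*b + (-4)*A0*B1*C0*C1*a + (18)*A0*B1^2*C0*c + (22)*A0*B1^2*C0*b + (-16)*A0*B1^2*C0*a + (-8)*A0*B0*a*b*c + (-2)*A0*B0*C1^2*c + (-22)*A0*B0*C1^2*b + (34)*A0*B0*C0^2*c + (-10)*A0*B0*C0^2*b + (-4)*A0*B0*C0^2*a + (12)*A0*B0*B1*C1*c + (36)*A0*B0*B1*C1*b + (-4)*A0*B0*B1*C1*a + (14)*A0*B0*B1^2*c + (26)*A0*B0*B1^2*b + (-12)*A0*B0*B1^2*a + (30)*A0*B0^2*C0*c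 + (58)*A0*B0^2*C0*b + (-20)*A0*B0^2*C0*a + (14)*A0*B0^3*c + (26)*A0*B0^3*b + (-12)*A0*B0^3*a + (-40)*A0*A1*C0*C1*c + (-8)*A0*A1*C0*C1*b + (8)*A0*A1*C0*C1*a + (-40)*A0*A1*B1*C0*c + (-40)*A0*A1*B1*C0*b + (24)*A0*A1*B1*C0*a + (-40)*A0*A1*B0*C1*c + (-40)*A0*A1*B0*C1*b + (24)*A0*A1*B0*C1*a + (-8)*A0*A1*B0*B1*c + (-40)*A0*A1*B0*B1*b + (8)*A0*A1*B0*B1*a + (40)*A0*A1^2*C0*c + (24)*A0*A1^2*C0*b + (-16)*A0*A1^2*C0*a + (24)*A0*A1^2*B0*c + (40)*A0*A1^2*B0*b + (-16)*A0*A1^2*B0*a + (8)*A0^2*a*b*c + (8)*A0^2*C1^2*b + (2)*A0^2*C1^2*a + (-20)*A0^2*C0^2*c + (4)*A0^2*C0^2*b + (6)*A0^2*C0^2*a + (-24)*A0^2*B1*C1*c + (-24)*A0^2*B1*C1*b + (4)*A0^2*B1*C1*a + (-8)*A0^2*B1^2*c + (-16)*A0^2*B1^2*b + (10)*A0^2*B1^2*a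 + (-64)*A0^2*B0*C0*c + (-64)*A0^2*B0*C0*b + (28)*A0^2*B0*C0*a + (-12)*A0^2*B0^2*c + (-36)*A0^2*B0^2*b + (14)*A0^2*B0^2*a + (40)*A0^2*A1*C1*c + (24)*A0^2*A1*C1*b + (-16)*A0^2*A1*C1*a + (24)*A0^2*A1*B1*c + (40)*A0^2*A1*B1*b + (-16)*A0^2*A1*B1*a + (-32)*A0^2*A1^2*c + (-32)*A0^2*A1^2*b + (16)*A0^2*A1^2*a + (40)*A0^3*C0*c + (24)*A0^3*C0*b + (-16)*A0^3*C0*a + (24)*A0^3*B0*c + (40)*A0^3*B0*b + (-16)*A0^3*B0*a + (-16)*A0^4*c + (-16)*A0^4*b + (8)*A0^4*a) * hAB + ((2)*B1*C1*a*b*c + (2)*B1*C1^3*c + (2)*B1*C0^2*C1*c + (6)*B1^2*a*b*c + (-14)*B1^2*C1^2*c + (4)*B1^2*C1^2*b + (4)*B1^2*C1^2*a + (-10)*B1^2*C0^2*c + (4)*B1^2*C0^2*b + (4)*B1^2*C0^2*a + (-10)*B1^3*C1*c + (-24)*B1^3*C1*b + (4)*B1^3*C1*a + (-10)*B1^4*c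 + (-12)*B1^4*b + (8)*B1^4*a + (2)*B0*C0*a*b*c + (2)*B0*C0*C1^2*c + (2)*B0*C0^3*c + (-16)*B0*B1*C0*C1*c + (-34)*B0*B1^2*C0*c + (-40)*B0*B1^2*C0*b + (16)*B0*B1^2*C0*a + (6)*B0^2*a*b*c + (-6)*B0^2*C1^2*c + (4)*B0^2*C1^2*b + (4)*B0^2*C1^2*a + (-18)*B0^2*C0^2*c + (4)*B0^2*C0^2*b + (4)*B0^2*C0^2*a + (-10)*B0^2*B1*C1*c + (-24)*B0^2*B1*C1*b + (4)*B0^2*B1*C1*a + (-24)*B0^2*B1^2*c + (-40)*B0^2*B1^2*b + (20)*B0^2*B1^2*a + (-34)*B0^3*C0*c + (-40)*B0^3*C0*b + (16)*B0^3*C0*a + (-14)*B0^4*c + (-28)*B0^4*b + (12)*B0^4*a + (-2)*A1*C1*a*b*c + (-2)*A1*C1^3*c + (-2)*A1*C0^2*C1*c + (-6)*A1*B1*a*b*c + (18)*A1*B1*C1^2*c + (-4)*A1*B1*C1^2*b + (-4)*A1*B1*C1^2*a + (6)*A1*B1*C0^2*c + (-4)*A1*B1*C0^2*b + (-4)*A1*B1*C0^2*a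 + (34)*A1*B1^2*C1*c + (40)*A1*B1^2*C1*b + (-16)*A1*B1^2*C1*a + (14)*A1*B1^3*c + (28)*A1*B1^3*b + (-12)*A1*B1^3*a + (12)*A1*B0*C0*C1*c + (12)*A1*B0*B1*C0*c + (24)*A1*B0*B1*C0*b + (-4)*A1*B0*B1*C0*a + (22)*A1*B0^2*C1*c + (16)*A1*B0^2*C1*b + (-12)*A1*B0^2*C1*a + (14)*A1*B0^2*B1*c + (28)*A1*B0^2*B1*b + (-12)*A1*B0^2*B1*a + (-4)*A1^2*C1^2*c + (4)*A1^2*C0^2*c + (-24)*A1^2*B1*C1*c + (-16)*A1^2*B1*C1*b + (12)*A1^2*B1*C1*a + (-4)*A1^2*B1^2*c + (-16)*A1^2*B1^2*b + (4)*A1^2*B1^2*a + (24)*A1^2*B0*C0*c + (16)*A1^2*B0*C0*b + (-12)*A1^2*B0*C0*a + (4)*A1^2*B0^2*c + (16)*A1^2*B0^2*b + (-4)*A1^2*B0^2*a + (-2)*A0*C0*a*b*c + (-2)*A0*C0*C1^2*c + (-2)*A0*C0^3*c + (12)*A0*B1*C0*C1*c + (22)*A0*B1^2*C0*c + (16)*A0*B1^2*C0*b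 + (-12)*A0*B1^2*C0*a + (-6)*A0*B0*a*b*c + (6)*A0*B0*C1^2*c + (-4)*A0*B0*C1^2*b + (-4)*A0*B0*C1^2*a + (18)*A0*B0*C0^2*c + (-4)*A0*B0*C0^2*b + (-4)*A0*B0*C0^2*a + (12)*A0*B0*B1*C1*c + (24)*A0*B0*B1*C1*b + (-4)*A0*B0*B1*C1*a + (14)*A0*B0*B1^2*c + (28)*A0*B0*B1^2*b + (-12)*A0*B0*B1^2*a + (34)*A0*B0^2*C0*c + (40)*A0*B0^2*C0*b + (-16)*A0*B0^2*C0*a + (14)*A0*B0^3*c + (28)*A0*B0^3*b + (-12)*A0*B0^3*a + (-8)*A0*A1*C0*C1*c + (-24)*A0*A1*B1*C0*c + (-16)*A0*A1*B1*C0*b + (12)*A0*A1*B1*C0*a + (-24)*A0*A1*B0*C1*c + (-16)*A0*A1*B0*C1*b + (12)*A0*A1*B0*C1*a + (-8)*A0*A1*B0*B1*c + (-32)*A0*A1*B0*B1*b + (8)*A0*A1*B0*B1*a) * hBC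
  have bz := (mul_eq_zero.mp big).resolve_right
    (ne_of_gt (mul_pos (pow_pos hT 3) (pow_pos hU 2)))
  linear_combination (-1 : ℝ) * bz + ((1)*H0 + (1)*M0 + (-1)*C0 + (-1)*B0) * hF0 + ((1)*H1 + (1)*M1 + (-1)*C1 + (-1)*B1) * hF1 + ((1)*N0 + (1)*M0 + (-1)*C0 + (-1)*B0) * hH0 + ((1)*N1 + (1)*M1 + (-1)*C1 + (-1)*B1) * hH1


lemma strict_tri {A B C : E2} (h : AffineIndependent ℝ ![A, B, C]) :
    dist B C < dist B A + dist A C := by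
  rcases lt_or_eq_of_le (dist_triangle B A C) with h' | h'
  · exact h'
  · exfalso
    have hw : Wbtw ℝ B A C := dist_add_dist_eq_iff.mp h'.symm
    rw [affineIndependent_iff_not_collinear] at h
    apply h
    have hcol : Collinear ℝ ({B, A, C} : Set E2) := hw.collinear
    apply hcol.subset
    intro x hx
    simp only [Matrix.range_cons, Matrix.range_empty, Set.union_empty, Set.union_singleton,
      Set.mem_insert_iff, Set.mem_singleton_iff, Set.mem_union] at hx ⊢
    tauto

lemma ne12 {A B C : E2} (h : AffineIndependent ℝ ![A, B, C]) : B ≠ C := by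
  simpa using h.injective.ne (show (1 : Fin 3) ≠ 2 by decide)

lemma ne01 {A B C : E2} (h : AffineIndependent ℝ ![A, B, C]) : A ≠ B := by
  simpa using h.injective.ne (show (0 : Fin 3) ≠ 1 by decide)

lemma ne02 {A B C : E2} (h : AffineIndependent ℝ ![A, B, C]) : A ≠ C := by
  simpa using h.injective.ne (show (0 : Fin 3) ≠ 2 by decide)


lemma perm3 {A B C : E2} (h : AffineIndependent ℝ ![A, B, C]) :
    AffineIndependent ℝ ![B, C, A] := by
  rw [affineIndependent_iff_not_collinear] at h ⊢
  intro hcol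
  apply h
  apply hcol.subset
  intro x hx
  simp only [Matrix.range_cons, Matrix.range_empty, Set.union_empty, Set.union_singleton,
    Set.mem_insert_iff, Set.mem_singleton_iff, Set.mem_union] at hx ⊢
  tauto

end Fuhrmann

open Fuhrmann

/-- The orthocenter `H` of `ABC` lies on the Fuhrmann circle. -/
theorem orthocenter_on_fuhrmann_circle
    (A B C I H HA HB HC Oa Ob Oc : EuclideanSpace ℝ (Fin 2))
    (hABC : AffineIndependent ℝ ![A, B, C])
    (a b c s : ℝ)
    (ha : a = dist B C) (hb : b = dist C A) (hc : c = dist A B)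
    (hs : s = (a + b + c) / 2)
    (hI : I = (2 * s)⁻¹ • (a • A + b • B + c • C))
    (hH : H = orthocenter3 A B C hABC)
    (hBIC : AffineIndependent ℝ ![B, I, C])
    (hCIA : AffineIndependent ℝ ![C, I, A])
    (hAIB : AffineIndependent ℝ ![A, I, B])
    (hHA : HA = orthocenter3 B I C hBIC)
    (hHB : HB = orthocenter3 C I A hCIA)
    (hHC : HC = orthocenter3 A I B hAIB)
    (ha' : AffineIndependent ℝ ![HA, B, C])
    (hb' : AffineIndependent ℝ ![HB, C, A])
    (hc' : AffineIndependent ℝ ![HC, A, B])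
    (hOa : Oa = circumcenter3 HA B C ha')
    (hOb : Ob = circumcenter3 HB C A hb')
    (hOc : Oc = circumcenter3 HC A B hc')
    (hF : AffineIndependent ℝ ![Oa, Ob, Oc]) :
    dist H (circumcenter3 Oa Ob Oc hF) = circumradius3 Oa Ob Oc hF := by
  subst hHA hHB hHC
  -- side lengths positive
  have ha0 : 0 < a := ha ▸ dist_pos.mpr (ne12 hABC)
  have hb0 : 0 < b := hb ▸ dist_pos.mpr (Ne.symm (ne02 hABC))
  have hc0 : 0 < c := hc ▸ dist_pos.mpr (ne01 hABC)
  have hT : 0 < a + b + c := by linarith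
  -- strict triangle inequalities
  have hUa : 0 < b + c - a := by
    have h1 := strict_tri hABC
    rw [← ha, dist_comm B A, ← hc, dist_comm A C, ← hb] at h1
    linarith
  have hUb : 0 < c + a - b := by
    have h1 := strict_tri (perm3 hABC)
    rw [← hb, dist_comm C B, ← ha, dist_comm B A, ← hc] at h1
    linarith
  have hUc : 0 < a + b - c := by
    have h1 := strict_tri (perm3 (perm3 hABC))
    rw [← hc, dist_comm A C, ← hb, dist_comm C B, ← ha] at h1
    linarith
  -- coordinates of the side-length relations
  have ra' : a^2 = (B 0 - C 0)^2 + (B 1 - C 1)^2 := by rw [ha, dist_sq]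
  have rb' : b^2 = (C 0 - A 0)^2 + (C 1 - A 1)^2 := by rw [hb, dist_sq]
  have rc' : c^2 = (A 0 - B 0)^2 + (A 1 - B 1)^2 := by rw [hc, dist_sq]
  -- incenter coordinates
  have h2s : 2 * s = a + b + c := by rw [hs]; ring
  have h2sne : 2 * s ≠ 0 := by rw [h2s]; exact ne_of_gt hT
  have hi0 : (a+b+c) * I 0 = a * A 0 + b * B 0 + c * C 0 := by
    rw [← h2s, hI]
    simp only [PiLp.smul_apply, PiLp.add_apply, smul_eq_mul]
    rw [← mul_assoc, mul_inv_cancel₀ h2sne, one_mul]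
  have hi1 : (a+b+c) * I 1 = a * A 1 + b * B 1 + c * C 1 := by
    rw [← h2s, hI]
    simp only [PiLp.smul_apply, PiLp.add_apply, smul_eq_mul]
    rw [← mul_assoc, mul_inv_cancel₀ h2sne, one_mul]
  -- the circumcenter of ABC
  obtain ⟨O, hOdef⟩ : ∃ O, O = circumcenter3 A B C hABC := ⟨_, rfl⟩
  have hdAB : dist A O = dist B O := by
    rw [hOdef, circ3_dist0 hABC, ← circ3_dist1 hABC]
  have hdBC : dist B O = dist C O := by
    rw [hOdef, circ3_dist1 hABC, ← circ3_dist2 hABC]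
  have sAB : (A 0 - O 0)^2 + (A 1 - O 1)^2 = (B 0 - O 0)^2 + (B 1 - O 1)^2 := by
    have h2 := congrArg (· ^ 2) hdAB
    simp only [dist_sq] at h2
    simpa using h2
  have sBC : (B 0 - O 0)^2 + (B 1 - O 1)^2 = (C 0 - O 0)^2 + (C 1 - O 1)^2 := by
    have h2 := congrArg (· ^ 2) hdBC
    simp only [dist_sq] at h2
    simpa using h2
  have sCA : (C 0 - O 0)^2 + (C 1 - O 1)^2 = (A 0 - O 0)^2 + (A 1 - O 1)^2 := by
    linear_combination (-1 : ℝ) * sAB - sBC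
  -- orthocenter coordinates
  have hHeq : H = A + B + C - (2:ℝ) • O := by rw [hH, ortho3_eq A B C hABC, hOdef]
  have hH0 : H 0 = A 0 + B 0 + C 0 - 2 * O 0 := by
    rw [hHeq]; simp [PiLp.sub_apply, PiLp.add_apply, PiLp.smul_apply]
  have hH1 : H 1 = A 1 + B 1 + C 1 - 2 * O 1 := by
    rw [hHeq]; simp [PiLp.sub_apply, PiLp.add_apply, PiLp.smul_apply]
  -- arc midpoints
  have hTUa : ((a+b+c)*(b+c-a)) ≠ 0 := ne_of_gt (mul_pos hT hUa)
  have hTUb : ((a+b+c)*(c+a-b)) ≠ 0 := ne_of_gt (mul_pos hT hUb)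
  have hTUc : ((a+b+c)*(a+b-c)) ≠ 0 := ne_of_gt (mul_pos hT hUc)
  obtain ⟨MA, hMAdef⟩ : ∃ MA : Fuhrmann.E2, MA = (((a+b+c)*(b+c-a))⁻¹ : ℝ) •
      ((-(a^2)) • A + (b*(b+c)) • B + (c*(b+c)) • C) := ⟨_, rfl⟩
  obtain ⟨MB, hMBdef⟩ : ∃ MB : Fuhrmann.E2, MB = (((a+b+c)*(c+a-b))⁻¹ : ℝ) •
      ((-(b^2)) • B + (c*(c+a)) • C + (a*(c+a)) • A) := ⟨_, rfl⟩
  obtain ⟨MC, hMCdef⟩ : ∃ MC : Fuhrmann.E2, MC = (((a+b+c)*(a+b-c))⁻¹ : ℝ) •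
      ((-(c^2)) • C + (a*(a+b)) • A + (b*(a+b)) • B) := ⟨_, rfl⟩
  have hMA0 : ((a+b+c)*(b+c-a)) * MA 0 = -(a^2) * A 0 + (b*(b+c)) * B 0 + (c*(b+c)) * C 0 := by
    rw [hMAdef]
    simp only [PiLp.smul_apply, PiLp.add_apply, smul_eq_mul]
    rw [← mul_assoc, mul_inv_cancel₀ hTUa, one_mul]
  have hMA1 : ((a+b+c)*(b+c-a)) * MA 1 = -(a^2) * A 1 + (b*(b+c)) * B 1 + (c*(b+c)) * C 1 := by
    rw [hMAdef]
    simp only [PiLp.smul_apply, PiLp.add_apply, smul_eq_mul]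
    rw [← mul_assoc, mul_inv_cancel₀ hTUa, one_mul]
  have hMB0 : ((a+b+c)*(c+a-b)) * MB 0 = -(b^2) * B 0 + (c*(c+a)) * C 0 + (a*(c+a)) * A 0 := by
    rw [hMBdef]
    simp only [PiLp.smul_apply, PiLp.add_apply, smul_eq_mul]
    rw [← mul_assoc, mul_inv_cancel₀ hTUb, one_mul]
  have hMB1 : ((a+b+c)*(c+a-b)) * MB 1 = -(b^2) * B 1 + (c*(c+a)) * C 1 + (a*(c+a)) * A 1 := by
    rw [hMBdef]
    simp only [PiLp.smul_apply, PiLp.add_apply, smul_eq_mul]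
    rw [← mul_assoc, mul_inv_cancel₀ hTUb, one_mul]
  have hMC0 : ((a+b+c)*(a+b-c)) * MC 0 = -(c^2) * C 0 + (a*(a+b)) * A 0 + (b*(a+b)) * B 0 := by
    rw [hMCdef]
    simp only [PiLp.smul_apply, PiLp.add_apply, smul_eq_mul]
    rw [← mul_assoc, mul_inv_cancel₀ hTUc, one_mul]
  have hMC1 : ((a+b+c)*(a+b-c)) * MC 1 = -(c^2) * C 1 + (a*(a+b)) * A 1 + (b*(a+b)) * B 1 := by
    rw [hMCdef]
    simp only [PiLp.smul_apply, PiLp.add_apply, smul_eq_mul]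
    rw [← mul_assoc, mul_inv_cancel₀ hTUc, one_mul]
  -- MA is the circumcenter of BIC, etc.
  have hQA : MA = circumcenter3 B I C hBIC := by
    refine circ3_eq hBIC (r := dist B MA) rfl ?_ ?_
    · exact dist_congr (arc2R (A 0) (A 1) (B 0) (B 1) (C 0) (C 1) (I 0) (I 1)
        (MA 0) (MA 1) a b c ra' rb' rc' hi0 hi1 hMA0 hMA1 hT hUa)
    · exact (dist_congr (arc1R (A 0) (A 1) (B 0) (B 1) (C 0) (C 1)
        (MA 0) (MA 1) a b c ra' rb' rc' hMA0 hMA1 hT hUa)).symm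
  have hQB : MB = circumcenter3 C I A hCIA := by
    refine circ3_eq hCIA (r := dist C MB) rfl ?_ ?_
    · exact dist_congr (arc2R (B 0) (B 1) (C 0) (C 1) (A 0) (A 1) (I 0) (I 1)
        (MB 0) (MB 1) b c a rb' rc' ra' (by linear_combination hi0) (by linear_combination hi1)
        (by linear_combination hMB0) (by linear_combination hMB1)
        (by linarith) hUb)
    · exact (dist_congr (arc1R (B 0) (B 1) (C 0) (C 1) (A 0) (A 1)
        (MB 0) (MB 1) b c a rb' rc' ra'
        (by linear_combination hMB0) (by linear_combination hMB1)
        (by linarith) hUb)).symm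
  have hQC : MC = circumcenter3 A I B hAIB := by
    refine circ3_eq hAIB (r := dist A MC) rfl ?_ ?_
    · exact dist_congr (arc2R (C 0) (C 1) (A 0) (A 1) (B 0) (B 1) (I 0) (I 1)
        (MC 0) (MC 1) c a b rc' ra' rb' (by linear_combination hi0) (by linear_combination hi1)
        (by linear_combination hMC0) (by linear_combination hMC1)
        (by linarith) hUc)
    · exact (dist_congr (arc1R (C 0) (C 1) (A 0) (A 1) (B 0) (B 1)
        (MC 0) (MC 1) c a b rc' ra' rb'
        (by linear_combination hMC0) (by linear_combination hMC1)
        (by linarith) hUc)).symm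
  -- Fuhrmann triangle vertices
  have hOaEq : Oa = B + C - MA := by rw [hOa, vertex_eq B I C hBIC ha', ← hQA]
  have hObEq : Ob = C + A - MB := by rw [hOb, vertex_eq C I A hCIA hb', ← hQB]
  have hOcEq : Oc = A + B - MC := by rw [hOc, vertex_eq A I B hAIB hc', ← hQC]
  have hOa0 : Oa 0 = B 0 + C 0 - MA 0 := by rw [hOaEq]; simp [PiLp.sub_apply, PiLp.add_apply]
  have hOa1 : Oa 1 = B 1 + C 1 - MA 1 := by rw [hOaEq]; simp [PiLp.sub_apply, PiLp.add_apply]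
  have hOb0 : Ob 0 = C 0 + A 0 - MB 0 := by rw [hObEq]; simp [PiLp.sub_apply, PiLp.add_apply]
  have hOb1 : Ob 1 = C 1 + A 1 - MB 1 := by rw [hObEq]; simp [PiLp.sub_apply, PiLp.add_apply]
  have hOc0 : Oc 0 = A 0 + B 0 - MC 0 := by rw [hOcEq]; simp [PiLp.sub_apply, PiLp.add_apply]
  have hOc1 : Oc 1 = A 1 + B 1 - MC 1 := by rw [hOcEq]; simp [PiLp.sub_apply, PiLp.add_apply]
  -- the Nagel-type point and Fuhrmann center
  obtain ⟨N, hNdef⟩ : ∃ N : Fuhrmann.E2, N = ((a+b+c)⁻¹ : ℝ) •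
      ((b+c-a) • A + (a-b+c) • B + (a+b-c) • C) := ⟨_, rfl⟩
  obtain ⟨Fc, hFcdef⟩ : ∃ Fc : Fuhrmann.E2, Fc = ((2:ℝ)⁻¹) • (H + N) := ⟨_, rfl⟩
  have hTne : (a+b+c) ≠ 0 := ne_of_gt hT
  have hN0 : (a+b+c) * N 0 = (b+c-a) * A 0 + (a-b+c) * B 0 + (a+b-c) * C 0 := by
    rw [hNdef]
    simp only [PiLp.smul_apply, PiLp.add_apply, smul_eq_mul]
    rw [← mul_assoc, mul_inv_cancel₀ hTne, one_mul]
  have hN1 : (a+b+c) * N 1 = (b+c-a) * A 1 + (a-b+c) * B 1 + (a+b-c) * C 1 := by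
    rw [hNdef]
    simp only [PiLp.smul_apply, PiLp.add_apply, smul_eq_mul]
    rw [← mul_assoc, mul_inv_cancel₀ hTne, one_mul]
  have hF0 : 2 * Fc 0 = H 0 + N 0 := by
    rw [hFcdef]; simp only [PiLp.smul_apply, PiLp.add_apply, smul_eq_mul]; ring
  have hF1 : 2 * Fc 1 = H 1 + N 1 := by
    rw [hFcdef]; simp only [PiLp.smul_apply, PiLp.add_apply, smul_eq_mul]; ring
  -- the three key distance identities
  have keyA := keyR (A 0 - O 0) (A 1 - O 1) (B 0 - O 0) (B 1 - O 1) (C 0 - O 0) (C 1 - O 1)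
      (MA 0 - O 0) (MA 1 - O 1) (N 0 - O 0) (N 1 - O 1) (Fc 0 - O 0) (Fc 1 - O 1)
      (H 0 - O 0) (H 1 - O 1) a b c
      (by linear_combination ra') (by linear_combination rb') (by linear_combination rc')
      (by linear_combination sAB) (by linear_combination sBC)
      (by linear_combination hMA0) (by linear_combination hMA1)
      (by linear_combination hN0) (by linear_combination hN1)
      (by linear_combination hH0) (by linear_combination hH1)
      (by linear_combination hF0) (by linear_combination hF1) hT hUa
  have keyB := keyR (B 0 - O 0) (B 1 - O 1) (C 0 - O 0) (C 1 - O 1) (A 0 - O 0) (A 1 - O 1)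
      (MB 0 - O 0) (MB 1 - O 1) (N 0 - O 0) (N 1 - O 1) (Fc 0 - O 0) (Fc 1 - O 1)
      (H 0 - O 0) (H 1 - O 1) b c a
      (by linear_combination rb') (by linear_combination rc') (by linear_combination ra')
      (by linear_combination sBC) (by linear_combination sCA)
      (by linear_combination hMB0) (by linear_combination hMB1)
      (by linear_combination hN0) (by linear_combination hN1)
      (by linear_combination hH0) (by linear_combination hH1)
      (by linear_combination hF0) (by linear_combination hF1) (by linarith) hUb
  have keyC := keyR (C 0 - O 0) (C 1 - O 1) (A 0 - O 0) (A 1 - O 1) (B 0 - O 0) (B 1 - O 1)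
      (MC 0 - O 0) (MC 1 - O 1) (N 0 - O 0) (N 1 - O 1) (Fc 0 - O 0) (Fc 1 - O 1)
      (H 0 - O 0) (H 1 - O 1) c a b
      (by linear_combination rc') (by linear_combination ra') (by linear_combination rb')
      (by linear_combination sCA) (by linear_combination sAB)
      (by linear_combination hMC0) (by linear_combination hMC1)
      (by linear_combination hN0) (by linear_combination hN1)
      (by linear_combination hH0) (by linear_combination hH1)
      (by linear_combination hF0) (by linear_combination hF1) (by linarith) hUc
  have dOaF : dist Oa Fc = dist H Fc := by
    apply dist_congr
    linear_combination keyA + (Oa 0 + (B 0 + C 0 - MA 0) - 2 * Fc 0) * hOa0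
      + (Oa 1 + (B 1 + C 1 - MA 1) - 2 * Fc 1) * hOa1
  have dObF : dist Ob Fc = dist H Fc := by
    apply dist_congr
    linear_combination keyB + (Ob 0 + (C 0 + A 0 - MB 0) - 2 * Fc 0) * hOb0
      + (Ob 1 + (C 1 + A 1 - MB 1) - 2 * Fc 1) * hOb1
  have dOcF : dist Oc Fc = dist H Fc := by
    apply dist_congr
    linear_combination keyC + (Oc 0 + (A 0 + B 0 - MC 0) - 2 * Fc 0) * hOc0
      + (Oc 1 + (A 1 + B 1 - MC 1) - 2 * Fc 1) * hOc1
  -- conclusion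
  have hFcEq : Fc = circumcenter3 Oa Ob Oc hF := circ3_eq hF dOaF dObF dOcF
  have hrad : circumradius3 Oa Ob Oc hF = dist Oa Fc := by
    rw [hFcEq]; exact (circ3_dist0 hF).symm
  rw [← hFcEq, hrad]
  exact dOaF.symm
end

section
/- Let A, B, C be an affinely independent triple in the Euclidean plane with incenter I = (a·A + b·B + c·C)/(2s) (where a = dist B C, b = dist C A, c = dist A B, s = (a+b+c)/2), circumcenter O, and orthocenter H; let N = midpoint of O and H be the nine-point center. Let H_A, H_B, H_C be the orthocenters of triangles BIC, CIA, AIB, let O_a, O_b, O_c be the circumcenters of triangles H_A B C, H_B C A, H_C A B respectively (each triple assumed affinely independent), and assume O_a, O_b, O_c are affinely independent. Then the circumcenter of triangle O_a O_b O_c equals the point reflection of I in N, i.e., equals O + H − I. -/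
open EuclideanGeometry
open scoped InnerProductSpace
open scoped RealInnerProductSpace

lemma fz_circumcenter3_eq {X Y Z P : EuclideanSpace ℝ (Fin 2)} (h : AffineIndependent ℝ ![X, Y, Z])
    (h1 : dist X P = dist Y P) (h2 : dist X P = dist Z P) :
    circumcenter3 X Y Z h = P := by
  unfold circumcenter3
  symm
  apply Affine.Simplex.eq_circumcenter_of_dist_eq (r := dist X P)
  · have hsp : affineSpan ℝ (Set.range ![X, Y, Z]) = ⊤ := by
      rw [h.affineSpan_eq_top_iff_card_eq_finrank_add_one]
      simp
    rw [show (⟨![X, Y, Z], h⟩ : Affine.Simplex ℝ (EuclideanSpace ℝ (Fin 2)) 2).points = ![X, Y, Z]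
      from rfl, hsp]
    exact AffineSubspace.mem_top _ _ _
  · intro i
    fin_cases i
    · rfl
    · exact h1.symm
    · exact h2.symm

lemma fz_orthocenter3 {X Y Z : EuclideanSpace ℝ (Fin 2)} (h : AffineIndependent ℝ ![X, Y, Z]) :
    orthocenter3 X Y Z h = X + Y + Z - (2 : ℝ) • circumcenter3 X Y Z h := by
  unfold orthocenter3 circumcenter3
  rw [Affine.Triangle.orthocenter_eq_mongePoint,
    Affine.Simplex.mongePoint_eq_smul_vsub_vadd_circumcenter]
  have hcent : (Finset.univ : Finset (Fin 3)).centroid ℝ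
      (⟨![X, Y, Z], h⟩ : Affine.Triangle ℝ (EuclideanSpace ℝ (Fin 2))).points
      = (3 : ℝ)⁻¹ • (X + Y + Z) := by
    rw [Finset.centroid_def,
      Finset.affineCombination_eq_linear_combination _ _ _
        (by simp [Finset.centroidWeights_apply])]
    simp [Fin.sum_univ_three, Finset.centroidWeights_apply, smul_add]
  rw [hcent, vsub_eq_sub, vadd_eq_add]
  norm_num
  module

lemma fz_dist_sq (Bp u w : EuclideanSpace ℝ (Fin 2)) {a2 b2 c2 : ℝ}
    (hu : ⟪u, u⟫_ℝ = c2) (hw : ⟪w, w⟫_ℝ = a2) (huw : ⟪u, w⟫_ℝ = (c2 + a2 - b2) / 2)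
    (α β α' β' : ℝ) :
    dist (Bp + α • u + β • w) (Bp + α' • u + β' • w) ^ 2
      = (α - α')^2 * c2 + (α - α') * (β - β') * (c2 + a2 - b2) + (β - β')^2 * a2 := by
  rw [dist_eq_norm]
  have hdiff : (Bp + α • u + β • w) - (Bp + α' • u + β' • w)
      = (α - α') • u + (β - β') • w := by module
  rw [hdiff, ← real_inner_self_eq_norm_sq]
  simp only [inner_add_left, inner_add_right, real_inner_smul_left, real_inner_smul_right,
    real_inner_comm u w]
  rw [hu, hw, huw]
  ring

lemma fz_dist_eq_of_sq_eq {P1 P2 Q1 Q2 : EuclideanSpace ℝ (Fin 2)}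
    (h : dist P1 P2 ^ 2 = dist Q1 Q2 ^ 2) : dist P1 P2 = dist Q1 Q2 :=
  (sq_eq_sq₀ dist_nonneg dist_nonneg).mp h

lemma fz_circumcenter3_comb {Bp u w : EuclideanSpace ℝ (Fin 2)} {a2 b2 c2 : ℝ}
    (hu : ⟪u, u⟫_ℝ = c2) (hw : ⟪w, w⟫_ℝ = a2) (huw : ⟪u, w⟫_ℝ = (c2 + a2 - b2) / 2)
    {X Y Z P : EuclideanSpace ℝ (Fin 2)} (h : AffineIndependent ℝ ![X, Y, Z])
    (x1 y1 x2 y2 x3 y3 xp yp : ℝ)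
    (hX : X = Bp + x1 • u + y1 • w) (hY : Y = Bp + x2 • u + y2 • w)
    (hZ : Z = Bp + x3 • u + y3 • w) (hP : P = Bp + xp • u + yp • w)
    (e1 : (x1-xp)^2*c2 + (x1-xp)*(y1-yp)*(c2+a2-b2) + (y1-yp)^2*a2
        = (x2-xp)^2*c2 + (x2-xp)*(y2-yp)*(c2+a2-b2) + (y2-yp)^2*a2)
    (e2 : (x1-xp)^2*c2 + (x1-xp)*(y1-yp)*(c2+a2-b2) + (y1-yp)^2*a2
        = (x3-xp)^2*c2 + (x3-xp)*(y3-yp)*(c2+a2-b2) + (y3-yp)^2*a2) :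
    circumcenter3 X Y Z h = P := by
  apply fz_circumcenter3_eq
  · apply fz_dist_eq_of_sq_eq
    rw [hX, hY, hP, fz_dist_sq Bp u w hu hw huw, fz_dist_sq Bp u w hu hw huw]
    exact e1
  · apply fz_dist_eq_of_sq_eq
    rw [hX, hZ, hP, fz_dist_sq Bp u w hu hw huw, fz_dist_sq Bp u w hu hw huw]
    exact e2

lemma fz_circumcenter3_comb' {Bp u w : EuclideanSpace ℝ (Fin 2)} {a2 b2 c2 : ℝ}
    (hu : ⟪u, u⟫_ℝ = c2) (hw : ⟪w, w⟫_ℝ = a2) (huw : ⟪u, w⟫_ℝ = (c2 + a2 - b2) / 2)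
    {X Y Z P : EuclideanSpace ℝ (Fin 2)} (h : AffineIndependent ℝ ![X, Y, Z])
    (d x1 y1 x2 y2 x3 y3 xp yp : ℝ)
    (hX : X = Bp + (x1/d) • u + (y1/d) • w) (hY : Y = Bp + (x2/d) • u + (y2/d) • w)
    (hZ : Z = Bp + (x3/d) • u + (y3/d) • w) (hP : P = Bp + (xp/d) • u + (yp/d) • w)
    (e1 : (x1-xp)^2*c2 + (x1-xp)*(y1-yp)*(c2+a2-b2) + (y1-yp)^2*a2
        = (x2-xp)^2*c2 + (x2-xp)*(y2-yp)*(c2+a2-b2) + (y2-yp)^2*a2)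
    (e2 : (x1-xp)^2*c2 + (x1-xp)*(y1-yp)*(c2+a2-b2) + (y1-yp)^2*a2
        = (x3-xp)^2*c2 + (x3-xp)*(y3-yp)*(c2+a2-b2) + (y3-yp)^2*a2) :
    circumcenter3 X Y Z h = P := by
  apply fz_circumcenter3_comb hu hw huw h (x1/d) (y1/d) (x2/d) (y2/d) (x3/d) (y3/d) (xp/d) (yp/d)
    hX hY hZ hP
  · have h1 : (x1/d-xp/d)^2*c2 + (x1/d-xp/d)*(y1/d-yp/d)*(c2+a2-b2) + (y1/d-yp/d)^2*a2
        = ((x1-xp)^2*c2 + (x1-xp)*(y1-yp)*(c2+a2-b2) + (y1-yp)^2*a2)/d^2 := by ring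
    have h2 : (x2/d-xp/d)^2*c2 + (x2/d-xp/d)*(y2/d-yp/d)*(c2+a2-b2) + (y2/d-yp/d)^2*a2
        = ((x2-xp)^2*c2 + (x2-xp)*(y2-yp)*(c2+a2-b2) + (y2-yp)^2*a2)/d^2 := by ring
    rw [h1, h2, e1]
  · have h1 : (x1/d-xp/d)^2*c2 + (x1/d-xp/d)*(y1/d-yp/d)*(c2+a2-b2) + (y1/d-yp/d)^2*a2
        = ((x1-xp)^2*c2 + (x1-xp)*(y1-yp)*(c2+a2-b2) + (y1-yp)^2*a2)/d^2 := by ring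
    have h3 : (x3/d-xp/d)^2*c2 + (x3/d-xp/d)*(y3/d-yp/d)*(c2+a2-b2) + (y3/d-yp/d)^2*a2
        = ((x3-xp)^2*c2 + (x3-xp)*(y3-yp)*(c2+a2-b2) + (y3-yp)^2*a2)/d^2 := by ring
    rw [h1, h3, e2]

set_option maxHeartbeats 2000000 in
/-- The center of the Fuhrmann circle is the reflection of `I` in the nine-point
center `N`, i.e. it equals `O + H - I`. -/
theorem fuhrmann_center (A B C I O H N HA HB HC Oa Ob Oc : EuclideanSpace ℝ (Fin 2))
    (hABC : AffineIndependent ℝ ![A, B, C])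
    (a b c s : ℝ)
    (ha : a = dist B C) (hb : b = dist C A) (hc : c = dist A B)
    (hs : s = (a + b + c) / 2)
    (hI : I = (2 * s)⁻¹ • (a • A + b • B + c • C))
    (hO : O = circumcenter3 A B C hABC)
    (hH : H = orthocenter3 A B C hABC)
    (hN : N = midpoint ℝ O H)
    (hBIC : AffineIndependent ℝ ![B, I, C])
    (hCIA : AffineIndependent ℝ ![C, I, A])
    (hAIB : AffineIndependent ℝ ![A, I, B])
    (hHA : HA = orthocenter3 B I C hBIC)
    (hHB : HB = orthocenter3 C I A hCIA)
    (hHC : HC = orthocenter3 A I B hAIB)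
    (ha' : AffineIndependent ℝ ![HA, B, C])
    (hb' : AffineIndependent ℝ ![HB, C, A])
    (hc' : AffineIndependent ℝ ![HC, A, B])
    (hOa : Oa = circumcenter3 HA B C ha')
    (hOb : Ob = circumcenter3 HB C A hb')
    (hOc : Oc = circumcenter3 HC A B hc')
    (hF : AffineIndependent ℝ ![Oa, Ob, Oc]) :
    circumcenter3 Oa Ob Oc hF = O + H - I := by
  have hBC : B ≠ C := by
    intro e
    have h01 : (1 : Fin 3) = 2 := hABC.injective (by simpa using e)
    simp at h01
  have hCA : C ≠ A := by
    intro e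
    have h01 : (2 : Fin 3) = 0 := hABC.injective (by simpa using e)
    simp at h01
  have hAB : A ≠ B := by
    intro e
    have h01 : (0 : Fin 3) = 1 := hABC.injective (by simpa using e)
    simp at h01
  have ha0 : 0 < a := ha ▸ dist_pos.2 hBC
  have hb0 : 0 < b := hb ▸ dist_pos.2 hCA
  have hc0 : 0 < c := hc ▸ dist_pos.2 hAB
  have hcol : ¬ Collinear ℝ ({A, B, C} : Set (EuclideanSpace ℝ (Fin 2))) :=
    affineIndependent_iff_not_collinear_set.mp hABC
  have tri : ∀ X Y Z : EuclideanSpace ℝ (Fin 2),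
      ({Y, X, Z} : Set (EuclideanSpace ℝ (Fin 2))) = {A, B, C} →
      dist Y Z < dist Y X + dist X Z := by
    intro X Y Z hset
    rcases (dist_triangle Y X Z).lt_or_eq with h | h
    · exact h
    · exact absurd (hset ▸ (dist_add_dist_eq_iff.mp h.symm).collinear) hcol
  have htA : a < b + c := by
    have h := tri A B C (Set.insert_comm B A {C})
    rw [dist_comm B A, dist_comm A C, ← ha, ← hb, ← hc] at h
    linarith
  have htB : b < c + a := by
    have h := tri B C A (by ext x; simp; tauto)
    rw [dist_comm C B, dist_comm B A, ← ha, ← hb, ← hc] at h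
    linarith
  have htC : c < a + b := by
    have h := tri C A B (by ext x; simp; tauto)
    rw [dist_comm A C, dist_comm C B, ← ha, ← hb, ← hc] at h
    linarith
  have hpne : a + b + c ≠ 0 := by positivity
  have hSpos : 0 < 2*a^2*b^2+2*b^2*c^2+2*c^2*a^2-a^4-b^4-c^4 := by
    have hfac : 2*a^2*b^2+2*b^2*c^2+2*c^2*a^2-a^4-b^4-c^4
        = (a+b+c)*((b+c-a)*((c+a-b)*(a+b-c))) := by ring
    rw [hfac]
    have h1 : 0 < a + b + c := by positivity
    have h2 : 0 < b + c - a := by linarith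
    have h3 : 0 < c + a - b := by linarith
    have h4 : 0 < a + b - c := by linarith
    exact mul_pos h1 (mul_pos h2 (mul_pos h3 h4))
  have hSne : 2*a^2*b^2+2*b^2*c^2+2*c^2*a^2-a^4-b^4-c^4 ≠ 0 := ne_of_gt hSpos
  have hSne2 : 2 * (b ^ 2 * (a ^ 2 + c ^ 2) + a ^ 2 * c ^ 2) - a ^ 4 - b ^ 4 - c ^ 4 ≠ 0 := by
    intro h; apply hSne; linarith
  have hSne3 : 2 * (b ^ 2 * (a ^ 2 + c ^ 2) + c ^ 2 * a ^ 2) - a ^ 4 - b ^ 4 - c ^ 4 ≠ 0 := by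
    intro h; apply hSne; linarith
  -- inner product facts
  have hu : ⟪A - B, A - B⟫_ℝ = c^2 := by
    rw [real_inner_self_eq_norm_sq, ← dist_eq_norm, hc]
  have hw : ⟪C - B, C - B⟫_ℝ = a^2 := by
    rw [real_inner_self_eq_norm_sq, ← dist_eq_norm, dist_comm C B, ha]
  have hb2 : ⟪A - C, A - C⟫_ℝ = b^2 := by
    rw [real_inner_self_eq_norm_sq, ← dist_eq_norm, dist_comm A C, hb]
  have huw : ⟪A - B, C - B⟫_ℝ = (c^2 + a^2 - b^2) / 2 := by
    have hAC : A - C = (A - B) - (C - B) := by abel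
    rw [hAC, real_inner_sub_sub_self, hu, hw] at hb2
    linarith
  -- basic representations (all coefficients have common denominator S)
  have hArep : A = B + ((2*a^2*b^2+2*b^2*c^2+2*c^2*a^2-a^4-b^4-c^4)/(2*a^2*b^2+2*b^2*c^2+2*c^2*a^2-a^4-b^4-c^4)) • (A - B) + ((0:ℝ)/(2*a^2*b^2+2*b^2*c^2+2*c^2*a^2-a^4-b^4-c^4)) • (C - B) := by
    match_scalars <;> field_simp [hSne, hSne2] <;> ring
  have hBrep : B = B + ((0:ℝ)/(2*a^2*b^2+2*b^2*c^2+2*c^2*a^2-a^4-b^4-c^4)) • (A - B) + ((0:ℝ)/(2*a^2*b^2+2*b^2*c^2+2*c^2*a^2-a^4-b^4-c^4)) • (C - B) := by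
    match_scalars <;> field_simp [hSne, hSne2] <;> ring
  have hCrep : C = B + ((0:ℝ)/(2*a^2*b^2+2*b^2*c^2+2*c^2*a^2-a^4-b^4-c^4)) • (A - B) + ((2*a^2*b^2+2*b^2*c^2+2*c^2*a^2-a^4-b^4-c^4)/(2*a^2*b^2+2*b^2*c^2+2*c^2*a^2-a^4-b^4-c^4)) • (C - B) := by
    match_scalars <;> field_simp [hSne, hSne2] <;> ring
  have hIrep : I = B + ((a*(b+c-a)*(c+a-b)*(a+b-c))/(2*a^2*b^2+2*b^2*c^2+2*c^2*a^2-a^4-b^4-c^4)) • (A - B) + ((c*(b+c-a)*(c+a-b)*(a+b-c))/(2*a^2*b^2+2*b^2*c^2+2*c^2*a^2-a^4-b^4-c^4)) • (C - B) := by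
    rw [hI, hs]
    match_scalars <;> field_simp [hSne, hSne2, hpne] <;> ring
  -- circumcenters of B I C, C I A, A I B (arc midpoints)
  have hMArep : circumcenter3 B I C hBIC
      = B + ((-(a^2)*(c+a-b)*(a+b-c))/(2*a^2*b^2+2*b^2*c^2+2*c^2*a^2-a^4-b^4-c^4)) • (A - B) + (((c^2+b*c)*(c+a-b)*(a+b-c))/(2*a^2*b^2+2*b^2*c^2+2*c^2*a^2-a^4-b^4-c^4)) • (C - B) :=
    fz_circumcenter3_comb' hu hw huw hBIC (2*a^2*b^2+2*b^2*c^2+2*c^2*a^2-a^4-b^4-c^4) 0 0 (a*(b+c-a)*(c+a-b)*(a+b-c)) (c*(b+c-a)*(c+a-b)*(a+b-c)) 0 (2*a^2*b^2+2*b^2*c^2+2*c^2*a^2-a^4-b^4-c^4) (-(a^2)*(c+a-b)*(a+b-c)) ((c^2+b*c)*(c+a-b)*(a+b-c))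
      hBrep hIrep hCrep rfl (by ring) (by ring)
  have hMBrep : circumcenter3 C I A hCIA
      = B + (((a^2+a*c)*(b+c-a)*(a+b-c))/(2*a^2*b^2+2*b^2*c^2+2*c^2*a^2-a^4-b^4-c^4)) • (A - B) + (((c^2+a*c)*(b+c-a)*(a+b-c))/(2*a^2*b^2+2*b^2*c^2+2*c^2*a^2-a^4-b^4-c^4)) • (C - B) :=
    fz_circumcenter3_comb' hu hw huw hCIA (2*a^2*b^2+2*b^2*c^2+2*c^2*a^2-a^4-b^4-c^4) 0 (2*a^2*b^2+2*b^2*c^2+2*c^2*a^2-a^4-b^4-c^4) (a*(b+c-a)*(c+a-b)*(a+b-c)) (c*(b+c-a)*(c+a-b)*(a+b-c)) (2*a^2*b^2+2*b^2*c^2+2*c^2*a^2-a^4-b^4-c^4) 0 ((a^2+a*c)*(b+c-a)*(a+b-c)) ((c^2+a*c)*(b+c-a)*(a+b-c))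
      hCrep hIrep hArep rfl (by ring) (by ring)
  have hMCrep : circumcenter3 A I B hAIB
      = B + (((a^2+a*b)*(b+c-a)*(c+a-b))/(2*a^2*b^2+2*b^2*c^2+2*c^2*a^2-a^4-b^4-c^4)) • (A - B) + ((-(c^2)*(b+c-a)*(c+a-b))/(2*a^2*b^2+2*b^2*c^2+2*c^2*a^2-a^4-b^4-c^4)) • (C - B) :=
    fz_circumcenter3_comb' hu hw huw hAIB (2*a^2*b^2+2*b^2*c^2+2*c^2*a^2-a^4-b^4-c^4) (2*a^2*b^2+2*b^2*c^2+2*c^2*a^2-a^4-b^4-c^4) 0 (a*(b+c-a)*(c+a-b)*(a+b-c)) (c*(b+c-a)*(c+a-b)*(a+b-c)) 0 0 ((a^2+a*b)*(b+c-a)*(c+a-b)) (-(c^2)*(b+c-a)*(c+a-b))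
      hArep hIrep hBrep rfl (by ring) (by ring)
  -- orthocenters of B I C, C I A, A I B
  have hHArep : HA = B + (((a*(b+c-a)*(c+a-b)*(a+b-c)) - 2*(-(a^2)*(c+a-b)*(a+b-c)))/(2*a^2*b^2+2*b^2*c^2+2*c^2*a^2-a^4-b^4-c^4)) • (A - B) + (((2*a^2*b^2+2*b^2*c^2+2*c^2*a^2-a^4-b^4-c^4) + (c*(b+c-a)*(c+a-b)*(a+b-c)) - 2*((c^2+b*c)*(c+a-b)*(a+b-c)))/(2*a^2*b^2+2*b^2*c^2+2*c^2*a^2-a^4-b^4-c^4)) • (C - B) := by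
    rw [hHA, fz_orthocenter3, hMArep, hIrep]
    match_scalars <;> field_simp [hSne, hSne2, hSne3] <;> ring
  have hHBrep : HB = B + (((2*a^2*b^2+2*b^2*c^2+2*c^2*a^2-a^4-b^4-c^4) + (a*(b+c-a)*(c+a-b)*(a+b-c)) - 2*((a^2+a*c)*(b+c-a)*(a+b-c)))/(2*a^2*b^2+2*b^2*c^2+2*c^2*a^2-a^4-b^4-c^4)) • (A - B) + (((2*a^2*b^2+2*b^2*c^2+2*c^2*a^2-a^4-b^4-c^4) + (c*(b+c-a)*(c+a-b)*(a+b-c)) - 2*((c^2+a*c)*(b+c-a)*(a+b-c)))/(2*a^2*b^2+2*b^2*c^2+2*c^2*a^2-a^4-b^4-c^4)) • (C - B) := by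
    rw [hHB, fz_orthocenter3, hMBrep, hIrep]
    match_scalars <;> field_simp [hSne, hSne2, hSne3] <;> ring
  have hHCrep : HC = B + (((2*a^2*b^2+2*b^2*c^2+2*c^2*a^2-a^4-b^4-c^4) + (a*(b+c-a)*(c+a-b)*(a+b-c)) - 2*((a^2+a*b)*(b+c-a)*(c+a-b)))/(2*a^2*b^2+2*b^2*c^2+2*c^2*a^2-a^4-b^4-c^4)) • (A - B) + (((c*(b+c-a)*(c+a-b)*(a+b-c)) - 2*(-(c^2)*(b+c-a)*(c+a-b)))/(2*a^2*b^2+2*b^2*c^2+2*c^2*a^2-a^4-b^4-c^4)) • (C - B) := by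
    rw [hHC, fz_orthocenter3, hMCrep, hIrep]
    match_scalars <;> field_simp [hSne, hSne2] <;> ring
  -- the Fuhrmann triangle vertices
  have hOarep : Oa = B + ((-(-(a^2)*(c+a-b)*(a+b-c)))/(2*a^2*b^2+2*b^2*c^2+2*c^2*a^2-a^4-b^4-c^4)) • (A - B) + (((2*a^2*b^2+2*b^2*c^2+2*c^2*a^2-a^4-b^4-c^4) - ((c^2+b*c)*(c+a-b)*(a+b-c)))/(2*a^2*b^2+2*b^2*c^2+2*c^2*a^2-a^4-b^4-c^4)) • (C - B) := by
    rw [hOa]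
    exact fz_circumcenter3_comb' hu hw huw ha' (2*a^2*b^2+2*b^2*c^2+2*c^2*a^2-a^4-b^4-c^4) ((a*(b+c-a)*(c+a-b)*(a+b-c)) - 2*(-(a^2)*(c+a-b)*(a+b-c))) ((2*a^2*b^2+2*b^2*c^2+2*c^2*a^2-a^4-b^4-c^4) + (c*(b+c-a)*(c+a-b)*(a+b-c)) - 2*((c^2+b*c)*(c+a-b)*(a+b-c))) 0 0 0 (2*a^2*b^2+2*b^2*c^2+2*c^2*a^2-a^4-b^4-c^4) (-(-(a^2)*(c+a-b)*(a+b-c))) ((2*a^2*b^2+2*b^2*c^2+2*c^2*a^2-a^4-b^4-c^4) - ((c^2+b*c)*(c+a-b)*(a+b-c)))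
      hHArep hBrep hCrep rfl (by ring) (by ring)
  have hObrep : Ob = B + (((2*a^2*b^2+2*b^2*c^2+2*c^2*a^2-a^4-b^4-c^4) - ((a^2+a*c)*(b+c-a)*(a+b-c)))/(2*a^2*b^2+2*b^2*c^2+2*c^2*a^2-a^4-b^4-c^4)) • (A - B) + (((2*a^2*b^2+2*b^2*c^2+2*c^2*a^2-a^4-b^4-c^4) - ((c^2+a*c)*(b+c-a)*(a+b-c)))/(2*a^2*b^2+2*b^2*c^2+2*c^2*a^2-a^4-b^4-c^4)) • (C - B) := by
    rw [hOb]
    exact fz_circumcenter3_comb' hu hw huw hb' (2*a^2*b^2+2*b^2*c^2+2*c^2*a^2-a^4-b^4-c^4) ((2*a^2*b^2+2*b^2*c^2+2*c^2*a^2-a^4-b^4-c^4) + (a*(b+c-a)*(c+a-b)*(a+b-c)) - 2*((a^2+a*c)*(b+c-a)*(a+b-c))) ((2*a^2*b^2+2*b^2*c^2+2*c^2*a^2-a^4-b^4-c^4) + (c*(b+c-a)*(c+a-b)*(a+b-c)) - 2*((c^2+a*c)*(b+c-a)*(a+b-c))) 0 (2*a^2*b^2+2*b^2*c^2+2*c^2*a^2-a^4-b^4-c^4)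 (2*a^2*b^2+2*b^2*c^2+2*c^2*a^2-a^4-b^4-c^4) 0 ((2*a^2*b^2+2*b^2*c^2+2*c^2*a^2-a^4-b^4-c^4) - ((a^2+a*c)*(b+c-a)*(a+b-c))) ((2*a^2*b^2+2*b^2*c^2+2*c^2*a^2-a^4-b^4-c^4) - ((c^2+a*c)*(b+c-a)*(a+b-c)))
      hHBrep hCrep hArep rfl (by ring) (by ring)
  have hOcrep : Oc = B + (((2*a^2*b^2+2*b^2*c^2+2*c^2*a^2-a^4-b^4-c^4) - ((a^2+a*b)*(b+c-a)*(c+a-b)))/(2*a^2*b^2+2*b^2*c^2+2*c^2*a^2-a^4-b^4-c^4)) • (A - B) + ((-(-(c^2)*(b+c-a)*(c+a-b)))/(2*a^2*b^2+2*b^2*c^2+2*c^2*a^2-a^4-b^4-c^4)) • (C - B) := by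
    rw [hOc]
    exact fz_circumcenter3_comb' hu hw huw hc' (2*a^2*b^2+2*b^2*c^2+2*c^2*a^2-a^4-b^4-c^4) ((2*a^2*b^2+2*b^2*c^2+2*c^2*a^2-a^4-b^4-c^4) + (a*(b+c-a)*(c+a-b)*(a+b-c)) - 2*((a^2+a*b)*(b+c-a)*(c+a-b))) ((c*(b+c-a)*(c+a-b)*(a+b-c)) - 2*(-(c^2)*(b+c-a)*(c+a-b))) (2*a^2*b^2+2*b^2*c^2+2*c^2*a^2-a^4-b^4-c^4) 0 0 0 ((2*a^2*b^2+2*b^2*c^2+2*c^2*a^2-a^4-b^4-c^4) - ((a^2+a*b)*(b+c-a)*(c+a-b))) (-(-(c^2)*(b+c-a)*(c+a-b)))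
      hHCrep hArep hBrep rfl (by ring) (by ring)
  -- circumcenter of ABC
  have hOrep : O = B + ((a^2*(b^2+c^2-a^2))/(2*a^2*b^2+2*b^2*c^2+2*c^2*a^2-a^4-b^4-c^4)) • (A - B) + ((c^2*(a^2+b^2-c^2))/(2*a^2*b^2+2*b^2*c^2+2*c^2*a^2-a^4-b^4-c^4)) • (C - B) := by
    rw [hO]
    exact fz_circumcenter3_comb' hu hw huw hABC (2*a^2*b^2+2*b^2*c^2+2*c^2*a^2-a^4-b^4-c^4) (2*a^2*b^2+2*b^2*c^2+2*c^2*a^2-a^4-b^4-c^4) 0 0 0 0 (2*a^2*b^2+2*b^2*c^2+2*c^2*a^2-a^4-b^4-c^4) (a^2*(b^2+c^2-a^2)) (c^2*(a^2+b^2-c^2))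
      hArep hBrep hCrep rfl (by ring) (by ring)
  -- the reflection of I in the nine-point center
  have hPrep : O + H - I = B + (((2*a^2*b^2+2*b^2*c^2+2*c^2*a^2-a^4-b^4-c^4) - (a^2*(b^2+c^2-a^2)) - (a*(b+c-a)*(c+a-b)*(a+b-c)))/(2*a^2*b^2+2*b^2*c^2+2*c^2*a^2-a^4-b^4-c^4)) • (A - B) + (((2*a^2*b^2+2*b^2*c^2+2*c^2*a^2-a^4-b^4-c^4) - (c^2*(a^2+b^2-c^2)) - (c*(b+c-a)*(c+a-b)*(a+b-c)))/(2*a^2*b^2+2*b^2*c^2+2*c^2*a^2-a^4-b^4-c^4)) • (C - B) := by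
    rw [hH, fz_orthocenter3, ← hO, hOrep, hIrep]
    match_scalars <;> field_simp [hSne, hSne2, hSne3] <;> ring
  exact fz_circumcenter3_comb' hu hw huw hF (2*a^2*b^2+2*b^2*c^2+2*c^2*a^2-a^4-b^4-c^4) (-(-(a^2)*(c+a-b)*(a+b-c))) ((2*a^2*b^2+2*b^2*c^2+2*c^2*a^2-a^4-b^4-c^4) - ((c^2+b*c)*(c+a-b)*(a+b-c))) ((2*a^2*b^2+2*b^2*c^2+2*c^2*a^2-a^4-b^4-c^4) - ((a^2+a*c)*(b+c-a)*(a+b-c))) ((2*a^2*b^2+2*b^2*c^2+2*c^2*a^2-a^4-b^4-c^4) - ((c^2+a*c)*(b+c-a)*(a+b-c))) ((2*a^2*b^2+2*b^2*c^2+2*c^2*a^2-a^4-b^4-c^4) - ((a^2+a*b)*(b+c-a)*(c+a-b))) (-(-(c^2)*(b+c-a)*(c+a-b)))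
    ((2*a^2*b^2+2*b^2*c^2+2*c^2*a^2-a^4-b^4-c^4) - (a^2*(b^2+c^2-a^2)) - (a*(b+c-a)*(c+a-b)*(a+b-c))) ((2*a^2*b^2+2*b^2*c^2+2*c^2*a^2-a^4-b^4-c^4) - (c^2*(a^2+b^2-c^2)) - (c*(b+c-a)*(c+a-b)*(a+b-c))) hOarep hObrep hOcrep hPrep (by ring) (by ring)
end
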